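/- arXiv:1905.05723 — 7 statements merged into one kernel-verified Lean document; each statement's English description precedes it below -/
import Mathlib

section
/- Let λ be a partition contained in the m×k rectangle, with Seidel shift λ↑1 defined by adding 1 to every part if λ₁ < k, and by deleting the first part and appending 0 if λ₁ = k. Then for every partition λ ⊂ m×k, applying the Seidel shift n = m+k times returns λ: λ↑n = λ. -/
/-- Seidel shift of a partition contained in the `m × k` rectangle,
viewed as a weakly decreasing function `ℕ → ℕ` vanishing from index `m` on. -/
def seidelShift (m k : ℕ) (lam : ℕ → ℕ) : ℕ → ℕ :=
  if lam 0 < k then (fun i => if i < m then lam i + 1 else 0)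
  else (fun i => lam (i + 1))

/-- `lam` is a partition contained in the `m × k` rectangle. -/
def IsPartIn (m k : ℕ) (lam : ℕ → ℕ) : Prop :=
  (∀ i j, i ≤ j → lam j ≤ lam i) ∧ lam 0 ≤ k ∧ ∀ i, m ≤ i → lam i = 0

/-- The beta set of a partition: `{λ i + (m-1-i) : i < m}`. -/
def encBeta (m : ℕ) (lam : ℕ → ℕ) : Finset ℕ :=
  (Finset.range m).image (fun i => lam i + (m - 1 - i))

lemma seidelShift_isPartIn (m k : ℕ) (hm : 0 < m) (lam : ℕ → ℕ)
    (hlam : IsPartIn m k lam) : IsPartIn m k (seidelShift m k lam) := by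
  obtain ⟨hdec, htop, hvan⟩ := hlam
  unfold seidelShift
  split_ifs with h0
  · refine ⟨?_, ?_, ?_⟩
    · intro i j hij
      dsimp only
      split_ifs with hj hi hi
      · exact Nat.add_le_add_right (hdec i j hij) 1
      · omega
      · exact Nat.zero_le _
      · exact Nat.zero_le _
    · simp only [hm, if_pos]
      omega
    · intro i hi; simp [Nat.not_lt.mpr hi]
  · refine ⟨?_, ?_, ?_⟩
    · intro i j hij; exact hdec _ _ (by omega)
    · exact le_trans (hdec 0 1 (by omega)) htop
    · intro i hi; exact hvan _ (by omega)

lemma rot_iterate (n p x : ℕ) (hn : 0 < n) (hx : x < n) :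
    (fun y => (y + 1) % n)^[p] x = (x + p) % n := by
  induction p with
  | zero => simp [Nat.mod_eq_of_lt hx]
  | succ p ih =>
      rw [Function.iterate_succ_apply', ih, Nat.mod_add_mod, Nat.add_assoc]

lemma enc_shift (m k : ℕ) (hm : 0 < m) (hk : 0 < k) (lam : ℕ → ℕ)
    (hlam : IsPartIn m k lam) :
    encBeta m (seidelShift m k lam)
      = (encBeta m lam).image (fun y => (y + 1) % (m + k)) := by
  obtain ⟨hdec, htop, hvan⟩ := hlam
  unfold seidelShift encBeta
  rw [Finset.image_image]
  split_ifs with h0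
  · apply Finset.image_congr
    intro i hi
    simp only [Finset.mem_coe, Finset.mem_range] at hi
    simp only [Function.comp_apply, if_pos hi]
    have hβ : lam i + (m - 1 - i) + 1 < m + k := by
      have := hdec 0 i (Nat.zero_le i)
      omega
    rw [Nat.mod_eq_of_lt hβ]
    omega
  · -- lam 0 = k
    have h0' : lam 0 = k := by omega
    ext x
    simp only [Finset.mem_image, Finset.mem_range, Function.comp_apply]
    constructor
    · rintro ⟨i, hi, rfl⟩
      by_cases hi' : i = m - 1
      · refine ⟨0, hm, ?_⟩
        subst hi'
        have hz : lam ((m-1)+1) = 0 := hvan _ (by omega)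
        rw [hz, h0']
        have e : k + (m - 1 - 0) + 1 = m + k := by omega
        rw [e, Nat.mod_self]
        omega
      · refine ⟨i + 1, by omega, ?_⟩
        have hβ : lam (i+1) + (m - 1 - (i+1)) + 1 < m + k := by
          have := hdec 0 (i+1) (Nat.zero_le _); omega
        rw [Nat.mod_eq_of_lt hβ]
        omega
    · rintro ⟨i, hi, rfl⟩
      by_cases hi' : i = 0
      · refine ⟨m - 1, by omega, ?_⟩
        subst hi'
        rw [h0']
        have : lam ((m-1)+1) = 0 := hvan _ (by omega)
        have : k + (m - 1 - 0) + 1 = m + k := by omega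
        rw [this, Nat.mod_self]
        have : lam ((m-1)+1) = 0 := hvan _ (by omega)
        omega
      · refine ⟨i - 1, by omega, ?_⟩
        have hβ : lam i + (m - 1 - i) + 1 < m + k := by
          have := hdec 0 i (Nat.zero_le _)
          have h1 := hdec 1 i (by omega)
          have := hdec 0 1 (by omega)
          omega
        rw [Nat.mod_eq_of_lt hβ]
        have : i - 1 + 1 = i := by omega
        rw [this]
        omega

lemma enc_inj (m k : ℕ) (hm : 0 < m) (lam mu : ℕ → ℕ)
    (hlam : IsPartIn m k lam) (hmu : IsPartIn m k mu)
    (h : encBeta m lam = encBeta m mu) : lam = mu := by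
  obtain ⟨hdec, htop, hvan⟩ := hlam
  obtain ⟨hdec', htop', hvan'⟩ := hmu
  -- reversed beta functions are strictly monotone with image the enc set
  have key : ∀ (nu : ℕ → ℕ), (∀ i j, i ≤ j → nu j ≤ nu i) →
      ∀ (g : Fin m → ℕ), (g = fun i : Fin m => nu (m - 1 - (i : ℕ)) + (i : ℕ)) →
      StrictMono g ∧ (∀ x, g x ∈ encBeta m nu) := by
    intro nu hd g hg
    subst hg
    constructor
    · intro a b hab
      have hab' : (a : ℕ) < (b : ℕ) := hab
      have := hd (m - 1 - (b : ℕ)) (m - 1 - (a : ℕ)) (by omega)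
      simp only
      omega
    · intro x
      simp only [encBeta, Finset.mem_image, Finset.mem_range]
      refine ⟨m - 1 - (x : ℕ), by omega, ?_⟩
      have hx : (x : ℕ) < m := x.2
      have : m - 1 - (m - 1 - (x : ℕ)) = (x : ℕ) := by omega
      rw [this]
  obtain ⟨hmono, hmem⟩ := key lam hdec _ rfl
  obtain ⟨hmono', hmem'⟩ := key mu hdec' _ rfl
  have hcard : (encBeta m lam).card = m := by
    have : (encBeta m lam).card = ((Finset.range m).image
        (fun i => lam i + (m - 1 - i))).card := rfl
    rw [this, Finset.card_image_of_injOn, Finset.card_range]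
    intro a ha b hb hab
    simp only [Finset.mem_coe, Finset.mem_range] at ha hb
    have hab' : lam a + (m - 1 - a) = lam b + (m - 1 - b) := hab
    rcases Nat.lt_trichotomy a b with hl | he | hl
    · have := hdec a b (by omega); omega
    · exact he
    · have := hdec b a (by omega); omega
  have e1 := Finset.orderEmbOfFin_unique hcard hmem hmono
  have hmem'' : ∀ x : Fin m, mu (m - 1 - (x : ℕ)) + (x : ℕ) ∈ encBeta m lam := by
    intro x; rw [h]; exact hmem' x
  have e2 := Finset.orderEmbOfFin_unique hcard hmem'' hmono'
  have e3 : ∀ i : Fin m, lam (m - 1 - (i : ℕ)) + (i : ℕ)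
      = mu (m - 1 - (i : ℕ)) + (i : ℕ) := by
    intro i
    have h1 := congrFun e1 i
    have h2 := congrFun e2 i
    rw [h1, h2]
  funext j
  by_cases hj : j < m
  · have := e3 ⟨m - 1 - j, by omega⟩
    simp only at this
    have hjj : m - 1 - (m - 1 - j) = j := by omega
    rw [hjj] at this
    omega
  · rw [hvan j (by omega), hvan' j (by omega)]

/-- Applying the Seidel shift `n = m + k` times returns the partition. -/
theorem seidel_shift_period (m k : ℕ) (hm : 0 < m) (hk : 0 < k)
    (lam : ℕ → ℕ) (hlam : IsPartIn m k lam) :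
    (seidelShift m k)^[m + k] lam = lam := by
  set n := m + k with hn
  -- iterates are partitions and encodings rotate
  have main : ∀ p, IsPartIn m k ((seidelShift m k)^[p] lam) ∧
      encBeta m ((seidelShift m k)^[p] lam)
        = (encBeta m lam).image ((fun y => (y + 1) % n)^[p]) := by
    intro p
    induction p with
    | zero => exact ⟨hlam, by simp⟩
    | succ p ih =>
        obtain ⟨hpart, henc⟩ := ih
        refine ⟨?_, ?_⟩
        · rw [Function.iterate_succ_apply']
          exact seidelShift_isPartIn m k hm _ hpart
        · rw [Function.iterate_succ_apply', enc_shift m k hm hk _ hpart, henc,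
            Finset.image_image, Function.iterate_succ']
  obtain ⟨hpart, henc⟩ := main n
  apply enc_inj m k hm _ _ hpart hlam
  rw [henc]
  have heq : Set.EqOn ((fun y => (y + 1) % n)^[n]) id (encBeta m lam) := by
    intro x hx
    simp only [Finset.mem_coe, encBeta, Finset.mem_image, Finset.mem_range] at hx
    obtain ⟨i, hi, rfl⟩ := hx
    have hx' : lam i + (m - 1 - i) < n := by
      have := hlam.1 0 i (Nat.zero_le _)
      have := hlam.2.1
      omega
    show (fun y => (y + 1) % n)^[n] (lam i + (m - 1 - i)) = _
    rw [rot_iterate n n _ (by omega) hx']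
    simp [Nat.add_mod_right, Nat.mod_eq_of_lt hx']
  rw [Finset.image_congr heq, Finset.image_id]
end

section
/- For any partition λ contained in the m×k rectangle, the sum over p = 0, 1, ..., n-1 of the weights |λ↑p| of the Seidel shifts of λ equals (1/2)·k·m·n, where n = m+k. -/
open Finset

private lemma part_le_top {m k : ℕ} {lam : ℕ → ℕ} (h : IsPartIn m k lam) (i : ℕ) :
    lam i ≤ k := le_trans (h.1 0 i (Nat.zero_le _)) h.2.1

private lemma shift_preserves {m k : ℕ} (hm : 0 < m) {lam : ℕ → ℕ}
    (h : IsPartIn m k lam) : IsPartIn m k (seidelShift m k lam) := by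
  obtain ⟨hmono, htop, hzero⟩ := h
  unfold seidelShift
  split_ifs with h0
  · refine ⟨?_, ?_, ?_⟩
    · intro i j hij
      by_cases hj : j < m
      · have hi : i < m := lt_of_le_of_lt hij hj
        simp only [if_pos hi, if_pos hj]
        exact Nat.add_le_add_right (hmono i j hij) 1
      · simp only [if_neg hj]
        exact Nat.zero_le _
    · simp only [if_pos hm]
      omega
    · intro i hi
      simp only [if_neg (Nat.not_lt.mpr hi)]
  · exact ⟨fun i j hij => hmono _ _ (Nat.add_le_add_right hij 1),
      le_trans (hmono 0 1 (Nat.zero_le _)) htop,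
      fun i hi => hzero _ (by omega)⟩

private lemma iter_preserves {m k : ℕ} (hm : 0 < m) {lam : ℕ → ℕ}
    (h : IsPartIn m k lam) (p : ℕ) : IsPartIn m k ((seidelShift m k)^[p] lam) := by
  induction p with
  | zero => simpa using h
  | succ q ihq => rw [Function.iterate_succ_apply']; exact shift_preserves hm ihq

private lemma betaSet_shift {m k : ℕ} (hm : 0 < m) {lam : ℕ → ℕ}
    (h : IsPartIn m k lam) :
    (range m).image (fun i => seidelShift m k lam i + (m - 1 - i))
      = ((range m).image (fun i => lam i + (m - 1 - i))).image
          (fun b => (b + 1) % (m + k)) := by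
  rw [Finset.image_image]
  unfold seidelShift
  split_ifs with h0
  · apply Finset.image_congr
    intro i hi
    simp only [Finset.mem_coe, Finset.mem_range] at hi
    have h2 : lam i ≤ lam 0 := h.1 0 i (Nat.zero_le _)
    have h1 : lam i + (m - 1 - i) + 1 < m + k := by omega
    simp only [Function.comp_apply, if_pos hi]
    rw [Nat.mod_eq_of_lt h1]
    omega
  · have h0' : lam 0 = k := le_antisymm h.2.1 (Nat.not_lt.mp h0)
    ext x
    simp only [Finset.mem_image, Finset.mem_range, Function.comp_apply]
    constructor
    · rintro ⟨i, hi, rfl⟩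
      by_cases hi1 : i + 1 < m
      · refine ⟨i + 1, hi1, ?_⟩
        have h2 : lam (i + 1) + (m - 1 - (i + 1)) + 1 < m + k := by
          have := part_le_top h (i + 1)
          omega
        rw [Nat.mod_eq_of_lt h2]
        omega
      · have hz : lam (i + 1) = 0 := h.2.2 _ (by omega)
        refine ⟨0, hm, ?_⟩
        rw [hz]
        have he : lam 0 + (m - 1 - 0) + 1 = m + k := by omega
        rw [he, Nat.mod_self]
        omega
    · rintro ⟨i, hi, rfl⟩
      by_cases hi0 : 0 < i
      · refine ⟨i - 1, by omega, ?_⟩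
        have h2 : lam i + (m - 1 - i) + 1 < m + k := by
          have := part_le_top h i
          omega
        rw [Nat.mod_eq_of_lt h2]
        have he : i - 1 + 1 = i := by omega
        rw [he]
        omega
      · have hi0' : i = 0 := by omega
        subst hi0'
        refine ⟨m - 1, by omega, ?_⟩
        have hz : lam (m - 1 + 1) = 0 := h.2.2 _ (by omega)
        have he : lam 0 + (m - 1 - 0) + 1 = m + k := by omega
        rw [he, Nat.mod_self, hz]
        omega

private lemma betaSet_iter {m k : ℕ} (hm : 0 < m) {lam : ℕ → ℕ}
    (h : IsPartIn m k lam) (p : ℕ) :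
    (range m).image (fun i => (seidelShift m k)^[p] lam i + (m - 1 - i))
      = (range m).image (fun i => (lam i + (m - 1 - i) + p) % (m + k)) := by
  induction p with
  | zero =>
    simp only [Function.iterate_zero, id]
    apply Finset.image_congr
    intro i hi
    simp only [Finset.mem_coe, Finset.mem_range] at hi
    have h2 : lam i ≤ lam 0 := h.1 0 i (Nat.zero_le _)
    have h1 : lam i + (m - 1 - i) < m + k := by
      have := h.2.1; omega
    simp only []
    rw [Nat.add_zero, Nat.mod_eq_of_lt h1]
  | succ p ih =>
    rw [Function.iterate_succ_apply', betaSet_shift hm (iter_preserves hm h p), ih,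
      Finset.image_image]
    apply Finset.image_congr
    intro i hi
    simp only [Function.comp_apply]
    rw [Nat.mod_add_mod]
    congr 1

private lemma key_sum {m k : ℕ} (hm : 0 < m) {lam : ℕ → ℕ}
    (h : IsPartIn m k lam) (p : ℕ) :
    ∑ i ∈ range m, (seidelShift m k)^[p] lam i + ∑ i ∈ range m, (m - 1 - i)
      = ∑ i ∈ range m, (lam i + (m - 1 - i) + p) % (m + k) := by
  have hpart := iter_preserves hm h p
  have inj1 : ∀ x ∈ range m, ∀ y ∈ range m,
      (seidelShift m k)^[p] lam x + (m - 1 - x) = (seidelShift m k)^[p] lam y + (m - 1 - y)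
        → x = y := by
    intro x hx y hy hxy
    simp only [mem_range] at hx hy
    rcases lt_trichotomy x y with hlt | rfl | hlt
    · have := hpart.1 x y (le_of_lt hlt); omega
    · rfl
    · have := hpart.1 y x (le_of_lt hlt); omega
  have inj2 : ∀ x ∈ range m, ∀ y ∈ range m,
      (lam x + (m - 1 - x) + p) % (m + k) = (lam y + (m - 1 - y) + p) % (m + k)
        → x = y := by
    intro x hx y hy hxy
    simp only [mem_range] at hx hy
    have hbx : lam x + (m - 1 - x) < m + k := by have := part_le_top h x; omega
    have hby : lam y + (m - 1 - y) < m + k := by have := part_le_top h y; omega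
    have hmeq : lam x + (m - 1 - x) ≡ lam y + (m - 1 - y) [MOD m + k] :=
      Nat.ModEq.add_right_cancel' p hxy
    have heq : lam x + (m - 1 - x) = lam y + (m - 1 - y) := by
      rwa [Nat.ModEq, Nat.mod_eq_of_lt hbx, Nat.mod_eq_of_lt hby] at hmeq
    rcases lt_trichotomy x y with hlt | rfl | hlt
    · have := h.1 x y (le_of_lt hlt); omega
    · rfl
    · have := h.1 y x (le_of_lt hlt); omega
  calc ∑ i ∈ range m, (seidelShift m k)^[p] lam i + ∑ i ∈ range m, (m - 1 - i)
      = ∑ i ∈ range m, ((seidelShift m k)^[p] lam i + (m - 1 - i)) :=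
        (Finset.sum_add_distrib).symm
    _ = ∑ x ∈ (range m).image (fun i => (seidelShift m k)^[p] lam i + (m - 1 - i)), x :=
        (Finset.sum_image (g := fun i => (seidelShift m k)^[p] lam i + (m - 1 - i)) (f := fun x => x) inj1).symm
    _ = ∑ x ∈ (range m).image (fun i => (lam i + (m - 1 - i) + p) % (m + k)), x := by
        rw [betaSet_iter hm h p]
    _ = ∑ i ∈ range m, (lam i + (m - 1 - i) + p) % (m + k) :=
        Finset.sum_image (g := fun i => (lam i + (m - 1 - i) + p) % (m + k)) (f := fun x => x) inj2

private lemma sum_mod_shift (n b : ℕ) (hn : 0 < n) :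
    ∑ p ∈ range n, (b + p) % n = ∑ r ∈ range n, r := by
  have inj : ∀ x ∈ range n, ∀ y ∈ range n, (b + x) % n = (b + y) % n → x = y := by
    intro x hx y hy hxy
    simp only [mem_range] at hx hy
    have h1 : x ≡ y [MOD n] := Nat.ModEq.add_left_cancel' b hxy
    rwa [Nat.ModEq, Nat.mod_eq_of_lt hx, Nat.mod_eq_of_lt hy] at h1
  have himg : (range n).image (fun p => (b + p) % n) = range n := by
    apply Finset.eq_of_subset_of_card_le
    · intro x hx
      simp only [mem_image, mem_range] at hx ⊢
      obtain ⟨p, _, rfl⟩ := hx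
      exact Nat.mod_lt _ hn
    · rw [Finset.card_image_of_injOn, card_range]
      intro x hx y hy
      exact inj x (by simpa using hx) y (by simpa using hy)
  calc ∑ p ∈ range n, (b + p) % n
      = ∑ x ∈ (range n).image (fun p => (b + p) % n), x :=
        (Finset.sum_image (g := fun p => (b + p) % n) (f := fun x => x) inj).symm
    _ = ∑ r ∈ range n, r := by rw [himg]

/-- The total weight of the Seidel orbit of a partition `λ ⊆ m × k` is
`(1/2) k m n` where `n = m + k`:  `∑_{p=0}^{n-1} |λ↑p| = k m n / 2`. -/
theorem seidel_orbit_weight_sum (m k : ℕ) (hm : 0 < m) (hk : 0 < k)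
    (lam : ℕ → ℕ) (hlam : IsPartIn m k lam) :
    2 * ∑ p ∈ Finset.range (m + k), ∑ i ∈ Finset.range m, (seidelShift m k)^[p] lam i
      = k * m * (m + k) := by
  set n := m + k with hn
  have hnpos : 0 < n := by omega
  set S := ∑ p ∈ Finset.range n, ∑ i ∈ Finset.range m, (seidelShift m k)^[p] lam i with hS
  set C := ∑ i ∈ range m, (m - 1 - i) with hC
  set G := ∑ r ∈ range n, r with hG
  have hmain : S + n * C = m * G := by
    calc S + n * C
        = ∑ p ∈ range n, (∑ i ∈ range m, (seidelShift m k)^[p] lam i + C) := by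
          rw [Finset.sum_add_distrib, Finset.sum_const, card_range, smul_eq_mul]
      _ = ∑ p ∈ range n, ∑ i ∈ range m, (lam i + (m - 1 - i) + p) % n :=
          Finset.sum_congr rfl (fun p _ => key_sum hm hlam p)
      _ = ∑ i ∈ range m, ∑ p ∈ range n, (lam i + (m - 1 - i) + p) % n := Finset.sum_comm
      _ = ∑ i ∈ range m, G :=
          Finset.sum_congr rfl (fun i _ => sum_mod_shift n _ hnpos)
      _ = m * G := by rw [Finset.sum_const, card_range, smul_eq_mul]
  have hC2 : C * 2 = m * (m - 1) := by
    rw [hC, Finset.sum_range_reflect (fun j => j) m]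
    exact Finset.sum_range_id_mul_two m
  have hG2 : G * 2 = n * (n - 1) := Finset.sum_range_id_mul_two n
  have h1 : 2 * S + n * (m * (m - 1)) = m * (n * (n - 1)) := by
    calc 2 * S + n * (m * (m - 1)) = 2 * S + n * (C * 2) := by rw [hC2]
      _ = (S + n * C) * 2 := by ring
      _ = (m * G) * 2 := by rw [hmain]
      _ = m * (G * 2) := by ring
      _ = m * (n * (n - 1)) := by rw [hG2]
  have h2 : n - 1 = (m - 1) + k := by omega
  rw [h2] at h1
  have h3 : m * (n * ((m - 1) + k)) = k * m * n + n * (m * (m - 1)) := by ring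
  rw [h3] at h1
  exact Nat.add_right_cancel h1
end

section
/- If λ and μ are partitions contained in the m×k rectangle with |λ| > |μ|, then there exists an integer p ≥ 0 such that |λ↑p| < |μ↑p|. -/
/-- Summing `f ((i + t) % n)` over `i < n` is the same as summing `f i`. -/
lemma sum_range_mod_shift {M : Type*} [AddCommMonoid M] (n : ℕ) (hn : 0 < n) (t : ℕ)
    (f : ℕ → M) : ∑ i ∈ Finset.range n, f ((i + t) % n) = ∑ i ∈ Finset.range n, f i := by
  have ht : t % n < n := Nat.mod_lt _ hn
  have hd := Nat.mod_add_div t n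
  have hmul : n * (t / n + 1) = n * (t / n) + n := by ring
  have hkey : ∀ x : ℕ, x < n → (x + t + (n - t % n)) % n = x := by
    intro x hx
    have hx' : x + t + (n - t % n) = x + n * (t / n + 1) := by omega
    rw [hx', Nat.add_mul_mod_self_left, Nat.mod_eq_of_lt hx]
  have hkey2 : ∀ y : ℕ, y < n → (y + (n - t % n) + t) % n = y := by
    intro y hy
    have hy' : y + (n - t % n) + t = y + n * (t / n + 1) := by omega
    rw [hy', Nat.add_mul_mod_self_left, Nat.mod_eq_of_lt hy]
  refine Finset.sum_nbij' (fun x => (x + t) % n) (fun y => (y + (n - t % n)) % n)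
    ?_ ?_ ?_ ?_ ?_
  · intro a ha
    exact Finset.mem_range.2 (Nat.mod_lt _ hn)
  · intro a ha
    exact Finset.mem_range.2 (Nat.mod_lt _ hn)
  · intro a ha
    show ((a + t) % n + (n - t % n)) % n = a
    rw [Nat.mod_add_mod]
    exact hkey a (Finset.mem_range.1 ha)
  · intro a ha
    show ((a + (n - t % n)) % n + t) % n = a
    rw [Nat.mod_add_mod]
    exact hkey2 a (Finset.mem_range.1 ha)
  · intro a ha
    rfl

/-- The Seidel shift preserves being a partition in the rectangle. -/
lemma shift_isPartIn (m k : ℕ) (lam : ℕ → ℕ) (h : IsPartIn m k lam) :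
    IsPartIn m k (seidelShift m k lam) := by
  obtain ⟨hdec, hbd, hvan⟩ := h
  unfold seidelShift
  split_ifs with h0
  · refine ⟨?_, ?_, ?_⟩
    · intro i j hij
      by_cases hj : j < m
      · have hi : i < m := lt_of_le_of_lt hij hj
        simp only [if_pos hi, if_pos hj]
        have := hdec i j hij
        omega
      · simp only [if_neg hj]
        split_ifs <;> omega
    · by_cases h0m : 0 < m
      · simp only [if_pos h0m]; omega
      · simp only [if_neg h0m]; omega
    · intro i hi
      simp only [if_neg (by omega : ¬ i < m)]
  · refine ⟨?_, ?_, ?_⟩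
    · intro i j hij
      exact hdec (i + 1) (j + 1) (by omega)
    · exact le_trans (hdec 0 1 (by omega)) hbd
    · intro i hi
      exact hvan (i + 1) (by omega)

/-- One Seidel shift rotates the values `λ i + (m-1-i)` by `+1` modulo `m+k`,
up to a cyclic reindexing. -/
lemma shift_T (m k : ℕ) (hm : 0 < m) (hk : 0 < k) (lam : ℕ → ℕ) (h : IsPartIn m k lam) :
    ∃ b : ℕ, ∀ i < m, seidelShift m k lam i + (m - 1 - i)
      = (lam ((i + b) % m) + (m - 1 - (i + b) % m) + 1) % (m + k) := by
  obtain ⟨hdec, hbd, hvan⟩ := h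
  by_cases h0 : lam 0 < k
  · refine ⟨0, fun i hi => ?_⟩
    have him : (i + 0) % m = i := by rw [Nat.add_zero, Nat.mod_eq_of_lt hi]
    rw [him]
    have hli : lam i ≤ lam 0 := hdec 0 i (Nat.zero_le _)
    have hlt : lam i + (m - 1 - i) + 1 < m + k := by omega
    rw [Nat.mod_eq_of_lt hlt]
    have hs : seidelShift m k lam i = lam i + 1 := by
      simp [seidelShift, h0, hi]
    rw [hs]
    omega
  · have hl0 : lam 0 = k := le_antisymm hbd (not_lt.1 h0)
    refine ⟨1, fun i hi => ?_⟩
    have hs : seidelShift m k lam i = lam (i + 1) := by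
      simp [seidelShift, h0]
    rw [hs]
    by_cases him : i + 1 < m
    · have hmod : (i + 1) % m = i + 1 := Nat.mod_eq_of_lt him
      rw [hmod]
      have hli : lam (i + 1) ≤ lam 0 := hdec 0 (i + 1) (Nat.zero_le _)
      have hlt : lam (i + 1) + (m - 1 - (i + 1)) + 1 < m + k := by omega
      rw [Nat.mod_eq_of_lt hlt]
      omega
    · have hieq : i + 1 = m := by omega
      have hmod : (i + 1) % m = 0 := by rw [hieq, Nat.mod_self]
      rw [hmod]
      have hvm : lam (i + 1) = 0 := hvan (i + 1) (by omega)
      have hr : lam 0 + (m - 1 - 0) + 1 = m + k := by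
        rw [hl0]; omega
      rw [hr, Nat.mod_self, hvm]
      omega

/-- Iterated Seidel shifts: preservation and the rotation formula. -/
lemma iterate_T (m k : ℕ) (hm : 0 < m) (hk : 0 < k) (lam : ℕ → ℕ)
    (h : IsPartIn m k lam) (p : ℕ) :
    IsPartIn m k ((seidelShift m k)^[p] lam) ∧
    ∃ b : ℕ, ∀ i < m, ((seidelShift m k)^[p] lam) i + (m - 1 - i)
      = (lam ((i + b) % m) + (m - 1 - (i + b) % m) + p) % (m + k) := by
  induction p with
  | zero =>
    refine ⟨h, 0, fun i hi => ?_⟩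
    rw [Function.iterate_zero_apply]
    simp only [Nat.add_zero]
    rw [Nat.mod_eq_of_lt hi]
    have hli : lam i ≤ lam 0 := h.1 0 i (Nat.zero_le _)
    have hbd := h.2.1
    rw [Nat.mod_eq_of_lt (by omega : lam i + (m - 1 - i) < m + k)]
  | succ p ih =>
    obtain ⟨hpart, b, hb⟩ := ih
    constructor
    · rw [Function.iterate_succ_apply']
      exact shift_isPartIn m k _ hpart
    · obtain ⟨b', hb'⟩ := shift_T m k hm hk _ hpart
      refine ⟨b' + b, fun i hi => ?_⟩
      rw [Function.iterate_succ_apply', hb' i hi]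
      have hj : (i + b') % m < m := Nat.mod_lt _ hm
      rw [hb _ hj, Nat.mod_add_mod]
      have hidx : ((i + b') % m + b) % m = (i + (b' + b)) % m := by
        rw [Nat.mod_add_mod, Nat.add_assoc]
      rw [hidx, Nat.add_assoc]

/-- Weight of the `p`-th shift, expressed via mod-`n` rotation. -/
lemma weight_eq (m k : ℕ) (hm : 0 < m) (hk : 0 < k) (lam : ℕ → ℕ)
    (h : IsPartIn m k lam) (p : ℕ) :
    ∑ i ∈ Finset.range m, ((seidelShift m k)^[p] lam) i
      + ∑ i ∈ Finset.range m, (m - 1 - i)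
      = ∑ i ∈ Finset.range m, ((lam i + (m - 1 - i) + p) % (m + k)) := by
  obtain ⟨_, b, hb⟩ := iterate_T m k hm hk lam h p
  rw [← Finset.sum_add_distrib]
  have h1 : ∑ i ∈ Finset.range m, (((seidelShift m k)^[p] lam) i + (m - 1 - i))
      = ∑ i ∈ Finset.range m,
          ((lam ((i + b) % m) + (m - 1 - (i + b) % m) + p) % (m + k)) :=
    Finset.sum_congr rfl fun i hi => hb i (Finset.mem_range.1 hi)
  rw [h1]
  exact sum_range_mod_shift m hm b (fun j => (lam j + (m - 1 - j) + p) % (m + k))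

/-- The sum of the weights over a full Seidel orbit is a constant
independent of the partition. -/
lemma orbit_sum (m k : ℕ) (hm : 0 < m) (hk : 0 < k) (lam : ℕ → ℕ)
    (h : IsPartIn m k lam) :
    ∑ p ∈ Finset.range (m + k), ∑ i ∈ Finset.range m, ((seidelShift m k)^[p] lam) i
      + (m + k) * ∑ i ∈ Finset.range m, (m - 1 - i)
      = m * ∑ p ∈ Finset.range (m + k), p := by
  have hn : 0 < m + k := by omega
  have hper : ∀ A : ℕ, ∑ p ∈ Finset.range (m + k), ((A + p) % (m + k))
      = ∑ p ∈ Finset.range (m + k), p := by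
    intro A
    calc ∑ p ∈ Finset.range (m + k), ((A + p) % (m + k))
        = ∑ p ∈ Finset.range (m + k), id ((p + A) % (m + k)) := by
          refine Finset.sum_congr rfl fun p _ => by rw [Nat.add_comm A p]; rfl
      _ = ∑ p ∈ Finset.range (m + k), id p := sum_range_mod_shift (m + k) hn A id
      _ = _ := rfl
  calc ∑ p ∈ Finset.range (m + k), ∑ i ∈ Finset.range m, ((seidelShift m k)^[p] lam) i
        + (m + k) * ∑ i ∈ Finset.range m, (m - 1 - i)
      = ∑ p ∈ Finset.range (m + k),
          (∑ i ∈ Finset.range m, ((seidelShift m k)^[p] lam) i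
            + ∑ i ∈ Finset.range m, (m - 1 - i)) := by
        rw [Finset.sum_add_distrib, Finset.sum_const, Finset.card_range, smul_eq_mul]
    _ = ∑ p ∈ Finset.range (m + k),
          ∑ i ∈ Finset.range m, ((lam i + (m - 1 - i) + p) % (m + k)) := by
        exact Finset.sum_congr rfl fun p _ => weight_eq m k hm hk lam h p
    _ = ∑ i ∈ Finset.range m,
          ∑ p ∈ Finset.range (m + k), ((lam i + (m - 1 - i) + p) % (m + k)) :=
        Finset.sum_comm
    _ = ∑ i ∈ Finset.range m, ∑ p ∈ Finset.range (m + k), p :=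
        Finset.sum_congr rfl fun i _ => hper _
    _ = m * ∑ p ∈ Finset.range (m + k), p := by
        rw [Finset.sum_const, Finset.card_range, smul_eq_mul]

/-- If `|λ| > |μ|` for partitions `λ, μ ⊆ m × k`, then some Seidel shift
reverses the inequality: `|λ↑p| < |μ↑p|`. -/
theorem seidel_shift_reverses_weight (m k : ℕ) (hm : 0 < m) (hk : 0 < k)
    (lam mu : ℕ → ℕ) (hlam : IsPartIn m k lam) (hmu : IsPartIn m k mu)
    (hgt : ∑ i ∈ Finset.range m, mu i < ∑ i ∈ Finset.range m, lam i) :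
    ∃ p : ℕ, ∑ i ∈ Finset.range m, (seidelShift m k)^[p] lam i
      < ∑ i ∈ Finset.range m, (seidelShift m k)^[p] mu i := by
  by_contra hcon
  push_neg at hcon
  have hn : 0 < m + k := by omega
  have h1 : ∑ p ∈ Finset.range (m + k), ∑ i ∈ Finset.range m, ((seidelShift m k)^[p] mu) i
      < ∑ p ∈ Finset.range (m + k), ∑ i ∈ Finset.range m, ((seidelShift m k)^[p] lam) i := by
    refine Finset.sum_lt_sum (fun p _ => hcon p) ⟨0, Finset.mem_range.2 hn, ?_⟩
    simpa using hgt
  have h2 := orbit_sum m k hm hk lam hlam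
  have h3 := orbit_sum m k hm hk mu hmu
  omega
end

section
/- Let h be a sequence in a commutative ring with h₀ = 1 and hᵢ = 0 for i < 0, define Δ_λ(h) = det(h_{λᵢ+j-i}) and the dual sequence e_p = Δ_{(1^p)}(h). Then for any partition λ, Δ_λ(e) = Δ_{λ'}(h), where λ' is the conjugate (transpose) partition. -/
/-- The Jacobi–Trudi determinant `Δ_λ(h) = det(h_{λ_i + j - i})`. -/
noncomputable def jtDet {R : Type*} [CommRing R] (h : ℤ → R) {l : ℕ}
    (lam : Fin l → ℕ) : R :=
  Matrix.det (Matrix.of fun i j : Fin l => h ((lam i : ℤ) + (j : ℤ) - (i : ℤ)))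

/-- The dual sequence `e_p = Δ_{(1^p)}(h)`, extended to integer indices by `0`
for negative indices. -/
noncomputable def dualSeqZ {R : Type*} [CommRing R] (h : ℤ → R) : ℤ → R :=
  fun p => if p < 0 then 0 else jtDet h (fun _ : Fin p.toNat => 1)

open Matrix Finset Equiv

namespace JT

variable {R : Type*} [CommRing R]

lemma neg_one_pow_congr {a b : ℕ} (hab : a % 2 = b % 2) : (-1:R)^a = (-1)^b := by
  rcases Nat.even_or_odd a with ha | ha
  · have hb : Even b := by rw [Nat.even_iff] at *; omega
    rw [ha.neg_one_pow, hb.neg_one_pow]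
  · have hb : Odd b := by rw [Nat.odd_iff] at *; omega
    rw [ha.neg_one_pow, hb.neg_one_pow]

lemma val_succAbove {p : ℕ} (i : Fin (p+1)) (r : Fin p) :
    ((i.succAbove r : Fin (p+1)) : ℕ) = if (r:ℕ) < (i:ℕ) then (r:ℕ) else (r:ℕ)+1 := by
  rcases lt_or_ge ((r:ℕ)) ((i:ℕ)) with hlt | hge
  · rw [Fin.succAbove_of_castSucc_lt _ _ (by simpa [Fin.lt_def] using hlt), if_pos hlt]
    rfl
  · rw [Fin.succAbove_of_le_castSucc _ _ (by simpa [Fin.le_def] using hge),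
      if_neg (not_lt.2 hge)]
    rfl

lemma det_unitri {n : ℕ} (M : Matrix (Fin n) (Fin n) R)
    (hlow : ∀ i j : Fin n, (j:ℕ) < (i:ℕ) → M i j = 0) (hdiag : ∀ i, M i i = 1) :
    M.det = 1 := by
  rw [Matrix.det_of_upperTriangular (M := M) (fun i j hij => hlow i j hij)]
  simp [hdiag]

variable (h : ℤ → R)

/-- the matrix whose determinant is `e_p`. -/
def EM (p : ℕ) : Matrix (Fin p) (Fin p) R := Matrix.of fun r c : Fin p => h (1 + (c:ℤ) - (r:ℤ))

lemma jtDet_ones (p : ℕ) : jtDet h (fun _ : Fin p => 1) = (EM h p).det := by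
  unfold jtDet EM
  congr 1

lemma dual_nat (m : ℕ) : dualSeqZ h (m:ℤ) = (EM h m).det := by
  unfold dualSeqZ
  rw [if_neg (by omega), jtDet_ones]
  congr 1

lemma dual_neg (z : ℤ) (hz : z < 0) : dualSeqZ h z = 0 := if_pos hz


lemma minor_eq (h0 : h 0 = 1) (hneg : ∀ i : ℤ, i < 0 → h i = 0) (p : ℕ) (i : Fin (p+1)) :
    ((EM h (p+1)).submatrix i.succAbove Fin.castSucc).det = (EM h (i:ℕ)).det := by
  set q : ℕ := (i:ℕ) with hqdef
  have hqp : q ≤ p := by omega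
  have hq : q + (p - q) = p := by omega
  let φ : Fin q ⊕ Fin (p - q) ≃ Fin p := finSumFinEquiv.trans (finCongr hq)
  have hφl : ∀ a : Fin q, ((φ (Sum.inl a) : Fin p) : ℕ) = (a:ℕ) := fun a => rfl
  have hφr : ∀ b : Fin (p - q), ((φ (Sum.inr b) : Fin p) : ℕ) = q + (b:ℕ) := fun b => rfl
  rw [← Matrix.det_submatrix_equiv_self φ, Matrix.submatrix_submatrix]
  have hmat : (EM h (p+1)).submatrix (i.succAbove ∘ φ) (Fin.castSucc ∘ φ) =
      Matrix.fromBlocks (EM h q)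
        (Matrix.of fun (r : Fin q) (c : Fin (p - q)) => h (1 + ((q:ℤ) + (c:ℤ)) - (r:ℤ)))
        0 (Matrix.of fun (r c : Fin (p - q)) => h ((c:ℤ) - (r:ℤ))) := by
    ext x y
    have hs : ∀ x : Fin q ⊕ Fin (p-q), ((i.succAbove (φ x) : Fin (p+1)) : ℕ) =
        (if ((φ x) : ℕ) < q then ((φ x):ℕ) else ((φ x):ℕ)+1) := fun x => val_succAbove i (φ x)
    cases x with
    | inl a =>
      have hsa : ((i.succAbove (φ (Sum.inl a)) : Fin (p+1)) : ℕ) = (a:ℕ) := by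
        rw [hs, hφl, if_pos a.isLt]
      cases y with
      | inl b =>
        simp only [Matrix.submatrix_apply, Function.comp_apply, Matrix.fromBlocks_apply₁₁]
        show h _ = h _
        congr 1
        rw [Fin.coe_castSucc, hφl, hsa]
      | inr b =>
        simp only [Matrix.submatrix_apply, Function.comp_apply, Matrix.fromBlocks_apply₁₂]
        show h _ = h _
        congr 1
        rw [Fin.coe_castSucc, hφr, hsa]
        push_cast
        ring
    | inr a =>
      have hsa : ((i.succAbove (φ (Sum.inr a)) : Fin (p+1)) : ℕ) = q + (a:ℕ) + 1 := by
        rw [hs, hφr, if_neg (by omega)]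
      cases y with
      | inl b =>
        simp only [Matrix.submatrix_apply, Function.comp_apply, Matrix.fromBlocks_apply₂₁]
        show h _ = (0 : Matrix (Fin (p-q)) (Fin q) R) a b
        rw [Matrix.zero_apply]
        apply hneg
        rw [Fin.coe_castSucc, hφl, hsa]
        have : (b:ℕ) < q := b.isLt
        omega
      | inr b =>
        simp only [Matrix.submatrix_apply, Function.comp_apply, Matrix.fromBlocks_apply₂₂]
        show h _ = h _
        congr 1
        rw [Fin.coe_castSucc, hφr, hsa]
        push_cast
        ring
  rw [hmat, Matrix.det_fromBlocks_zero₂₁]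
  have : (Matrix.of fun (r c : Fin (p - q)) => h ((c:ℤ) - (r:ℤ))).det = 1 := by
    apply det_unitri
    · intro r c hrc
      exact hneg _ (by omega)
    · intro r
      simp [h0]
  rw [this, mul_one]


lemma rec1 (h0 : h 0 = 1) (hneg : ∀ i : ℤ, i < 0 → h i = 0) (p : ℕ) :
    (EM h (p+1)).det
      = ∑ i : Fin (p+1), (-1:R)^((i:ℕ)+p) * h (1 + (p:ℤ) - ((i:ℕ):ℤ)) * (EM h (i:ℕ)).det := by
  rw [Matrix.det_succ_column (EM h (p+1)) (Fin.last p)]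
  refine Finset.sum_congr rfl fun i _ => ?_
  rw [Fin.succAbove_last, minor_eq h h0 hneg p i]
  rfl

lemma key (h0 : h 0 = 1) (hneg : ∀ i : ℤ, i < 0 → h i = 0) (n : ℕ) (hn : 0 < n) :
    ∑ m ∈ Finset.range (n+1), (-1:R)^m * h ((m:ℕ):ℤ) * (EM h (n - m)).det = 0 := by
  obtain ⟨p, rfl⟩ : ∃ p, n = p + 1 := ⟨n - 1, by omega⟩
  rw [← Finset.sum_range_reflect]
  rw [Finset.sum_range_succ]
  have hlast : p + 2 - 1 - (p+1) = 0 := by omega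
  rw [hlast]
  have hT : (-1:R)^(0:ℕ) * h (((0:ℕ):ℕ):ℤ) * (EM h (p+1-0)).det = (EM h (p+1)).det := by
    rw [show p + 1 - 0 = p + 1 from rfl]
    norm_num [h0]
  have hE := rec1 h h0 hneg p
  rw [Fin.sum_univ_eq_sum_range
    (fun m => (-1:R)^(m+p) * h (1 + (p:ℤ) - ((m:ℕ):ℤ)) * (EM h m).det) (p+1)] at hE
  rw [hT, hE, ← Finset.sum_add_distrib]
  apply Finset.sum_eq_zero
  intro x hx
  rw [Finset.mem_range] at hx
  have e1 : p + 1 - (p + 2 - 1 - x) = x := by omega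
  have e2 : (((p + 2 - 1 - x : ℕ)):ℤ) = 1 + (p:ℤ) - (x:ℤ) := by omega
  have e3 : (-1:R)^(p + 2 - 1 - x) = (-1:R)^(x+p+1) := neg_one_pow_congr (by omega)
  rw [e1, e2, e3, pow_succ]
  ring


lemma dual_zero : dualSeqZ h (0:ℤ) = 1 := by
  rw [show ((0:ℤ)) = (((0:ℕ)):ℤ) from rfl, dual_nat]
  exact Matrix.det_fin_zero

/-- `A` matrix: signed `h` Toeplitz matrix. -/
def AM (N : ℕ) : Matrix (Fin N) (Fin N) R :=
  Matrix.of fun i j : Fin N => (-1:R)^((i:ℕ)+(j:ℕ)) * h ((j:ℤ) - (i:ℤ))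

/-- `B` matrix: `e` Toeplitz matrix. -/
noncomputable def BM (N : ℕ) : Matrix (Fin N) (Fin N) R :=
  Matrix.of fun i j : Fin N => dualSeqZ h ((j:ℤ) - (i:ℤ))

lemma det_AM (h0 : h 0 = 1) (hneg : ∀ i : ℤ, i < 0 → h i = 0) (N : ℕ) :
    (AM h N).det = 1 := by
  apply det_unitri
  · intro i j hij
    show (-1:R)^((i:ℕ)+(j:ℕ)) * h ((j:ℤ) - (i:ℤ)) = 0
    rw [hneg _ (by omega), mul_zero]
  · intro i
    show (-1:R)^((i:ℕ)+(i:ℕ)) * h ((i:ℤ) - (i:ℤ)) = 1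
    rw [sub_self, h0, Even.neg_one_pow ⟨(i:ℕ), rfl⟩, one_mul]

lemma AB_one (h0 : h 0 = 1) (hneg : ∀ i : ℤ, i < 0 → h i = 0) (N : ℕ) :
    AM h N * BM h N = 1 := by
  ext i j
  rw [Matrix.mul_apply, Matrix.one_apply]
  by_cases hij : i = j
  · subst hij
    rw [if_pos rfl, Finset.sum_eq_single i]
    · show (-1:R)^((i:ℕ)+(i:ℕ)) * h ((i:ℤ) - (i:ℤ)) * dualSeqZ h ((i:ℤ) - (i:ℤ)) = 1
      rw [sub_self, h0, dual_zero, Even.neg_one_pow ⟨(i:ℕ), rfl⟩, one_mul, one_mul]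
    · intro k _ hk
      show (-1:R)^((i:ℕ)+(k:ℕ)) * h ((k:ℤ) - (i:ℤ)) * dualSeqZ h ((i:ℤ) - (k:ℤ)) = 0
      rcases lt_or_gt_of_ne (fun hv : (k:ℕ) = (i:ℕ) => hk (Fin.ext hv)) with hki | hki
      · rw [hneg ((k:ℤ) - (i:ℤ)) (by omega), mul_zero, zero_mul]
      · rw [dual_neg h _ (by omega), mul_zero]
    · intro hi
      exact absurd (Finset.mem_univ i) hi
  · rw [if_neg hij]
    rcases lt_or_gt_of_ne (fun hv : (i:ℕ) = (j:ℕ) => hij (Fin.ext hv)) with hlt | hgt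
    swap
    · -- j < i : every term vanishes
      apply Finset.sum_eq_zero
      intro k _
      show (-1:R)^((i:ℕ)+(k:ℕ)) * h ((k:ℤ) - (i:ℤ)) * dualSeqZ h ((j:ℤ) - (k:ℤ)) = 0
      rcases lt_or_ge ((k:ℕ)) ((i:ℕ)) with hki | hki
      · rw [hneg ((k:ℤ) - (i:ℤ)) (by omega), mul_zero, zero_mul]
      · rw [dual_neg h _ (by omega), mul_zero]
    · -- i < j
      set n : ℕ := (j:ℕ) - (i:ℕ) with hn
      have h1 : ∑ k : Fin N, AM h N i k * BM h N k j
          = ∑ m ∈ Finset.range (n+1), (-1:R)^m * h ((m:ℕ):ℤ) * (EM h (n - m)).det := by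
        rw [← Finset.sum_filter_of_ne
          (p := fun k : Fin N => (i:ℕ) ≤ (k:ℕ) ∧ (k:ℕ) ≤ (j:ℕ)) (s := Finset.univ)]
        · refine Finset.sum_bij' (fun (k : Fin N) (_ : k ∈ _) => (k:ℕ) - (i:ℕ))
            (fun (m : ℕ) (hm : m ∈ Finset.range (n+1)) =>
              (⟨(i:ℕ) + m, by rw [Finset.mem_range] at hm; omega⟩ : Fin N)) ?_ ?_ ?_ ?_ ?_
          · intro k hk
            rw [Finset.mem_filter] at hk
            rw [Finset.mem_range]
            show (k:ℕ) - (i:ℕ) < n + 1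
            omega
          · intro m hm
            rw [Finset.mem_range] at hm
            rw [Finset.mem_filter]
            refine ⟨Finset.mem_univ _, ?_⟩
            show (i:ℕ) ≤ (i:ℕ) + m ∧ (i:ℕ) + m ≤ (j:ℕ)
            omega
          · intro k hk
            rw [Finset.mem_filter] at hk
            apply Fin.ext
            show (i:ℕ) + ((k:ℕ) - (i:ℕ)) = (k:ℕ)
            omega
          · intro m hm
            rw [Finset.mem_range] at hm
            show (i:ℕ) + m - (i:ℕ) = m
            omega
          · intro k hk
            rw [Finset.mem_filter] at hk
            beta_reduce
            show (-1:R)^((i:ℕ)+(k:ℕ)) * h ((k:ℤ) - (i:ℤ)) * dualSeqZ h ((j:ℤ) - (k:ℤ)) = _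
            rw [neg_one_pow_congr (a := (i:ℕ)+(k:ℕ)) (b := (k:ℕ) - (i:ℕ)) (by omega)]
            rw [show ((k:ℤ) - (i:ℤ)) = (((k:ℕ) - (i:ℕ) : ℕ) : ℤ) by omega]
            rw [show ((j:ℤ) - (k:ℤ)) = ((n - ((k:ℕ) - (i:ℕ)) : ℕ) : ℤ) by omega]
            rw [dual_nat]
        · intro k _ hF
          by_contra hP
          apply hF
          show (-1:R)^((i:ℕ)+(k:ℕ)) * h ((k:ℤ) - (i:ℤ)) * dualSeqZ h ((j:ℤ) - (k:ℤ)) = 0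
          rcases not_and_or.mp hP with hP | hP
          · rw [hneg ((k:ℤ) - (i:ℤ)) (by omega), mul_zero, zero_mul]
          · rw [dual_neg h _ (by omega), mul_zero]
      rw [h1]
      exact key h h0 hneg n (by omega)


/-! ### conjugate partition and the beta-set bijection -/

def conj (L : ℕ) (lam : Fin L → ℕ) (j : ℕ) : ℕ :=
  (Finset.univ.filter fun i : Fin L => j < lam i).card

lemma conj_le (L : ℕ) (lam : Fin L → ℕ) (j : ℕ) : conj L lam j ≤ L :=
  le_trans (Finset.card_filter_le _ _) (by simp)

lemma conj_anti (L : ℕ) (lam : Fin L → ℕ) {b b' : ℕ} (hbb : b ≤ b') :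
    conj L lam b' ≤ conj L lam b := by
  apply Finset.card_le_card
  intro i hi
  rw [Finset.mem_filter] at *
  exact ⟨hi.1, by omega⟩

lemma card_lt_fin {L : ℕ} (v : ℕ) (hv : v ≤ L) :
    (Finset.univ.filter fun a : Fin L => (a:ℕ) < v).card = v := by
  rcases eq_or_lt_of_le hv with rfl | hvL
  · rw [Finset.filter_true_of_mem (fun a _ => a.isLt), Finset.card_univ, Fintype.card_fin]
  · have heq : (Finset.univ.filter fun a : Fin L => (a:ℕ) < v) = Finset.Iio ⟨v, hvL⟩ := by
      ext a
      simp [Fin.lt_def]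
    rw [heq, Fin.card_Iio]

lemma lt_conj_iff {L : ℕ} {lam : Fin L → ℕ}
    (hanti : ∀ i j : Fin L, i ≤ j → lam j ≤ lam i) (a : Fin L) (j : ℕ) :
    (a:ℕ) < conj L lam j ↔ j < lam a := by
  constructor
  · intro hlt
    by_contra hja
    push_neg at hja
    have hsub : (Finset.univ.filter fun i : Fin L => j < lam i)
        ⊆ Finset.univ.filter fun i : Fin L => (i:ℕ) < (a:ℕ) := by
      intro i hi
      rw [Finset.mem_filter] at *
      refine ⟨Finset.mem_univ _, ?_⟩
      by_contra hge
      push_neg at hge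
      have hle := hanti a i (Fin.le_def.mpr hge)
      omega
    have hcard := Finset.card_le_card hsub
    rw [card_lt_fin (a:ℕ) (le_of_lt a.isLt)] at hcard
    unfold conj at hlt
    omega
  · intro hja
    have hsub : (Finset.univ.filter fun i : Fin L => (i:ℕ) < (a:ℕ)+1)
        ⊆ Finset.univ.filter fun i : Fin L => j < lam i := by
      intro i hi
      rw [Finset.mem_filter] at *
      refine ⟨Finset.mem_univ _, ?_⟩
      have hle := hanti i a (Fin.le_def.mpr (by omega))
      omega
    have hcard := Finset.card_le_card hsub
    rw [card_lt_fin ((a:ℕ)+1) a.isLt] at hcard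
    unfold conj
    omega

variable {L K : ℕ}

def sigmaFun (lam : Fin L → ℕ) (hK : ∀ i, lam i ≤ K) : Fin L ⊕ Fin K → Fin (L+K) :=
  Sum.elim
    (fun a => ⟨lam a + (L - 1 - (a:ℕ)), by have := a.isLt; have := hK a; omega⟩)
    (fun b => ⟨L + (b:ℕ) - conj L lam (b:ℕ), by have := b.isLt; omega⟩)

lemma sigmaFun_inl (lam : Fin L → ℕ) (hK : ∀ i, lam i ≤ K) (a : Fin L) :
    ((sigmaFun lam hK (Sum.inl a)):ℕ) = lam a + (L - 1 - (a:ℕ)) := rfl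

lemma sigmaFun_inr (lam : Fin L → ℕ) (hK : ∀ i, lam i ≤ K) (b : Fin K) :
    ((sigmaFun lam hK (Sum.inr b)):ℕ) = L + (b:ℕ) - conj L lam (b:ℕ) := rfl

lemma sigmaFun_bij (lam : Fin L → ℕ)
    (hanti : ∀ i j : Fin L, i ≤ j → lam j ≤ lam i) (hK : ∀ i, lam i ≤ K) :
    Function.Bijective (sigmaFun lam hK) := by
  rw [Fintype.bijective_iff_injective_and_card]
  refine ⟨?_, by simp⟩
  intro x y hxy
  have hval : ((sigmaFun lam hK x):ℕ) = ((sigmaFun lam hK y):ℕ) := by rw [hxy]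
  rcases x with a | b <;> rcases y with a' | b'
  · rw [sigmaFun_inl, sigmaFun_inl] at hval
    rcases Nat.lt_trichotomy (a:ℕ) (a':ℕ) with hlt | heq | hgt
    · have := hanti a a' (Fin.le_def.mpr (by omega))
      have := a'.isLt
      omega
    · exact congrArg Sum.inl (Fin.ext heq)
    · have := hanti a' a (Fin.le_def.mpr (by omega))
      have := a.isLt
      omega
  · exfalso
    rw [sigmaFun_inl, sigmaFun_inr] at hval
    have hcl := conj_le L lam (b':ℕ)
    have hal := a.isLt
    rcases lt_or_ge ((b':ℕ)) (lam a) with hb | hb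
    · have h1 := (lt_conj_iff hanti a (b':ℕ)).mpr hb
      omega
    · have h3 : ¬ ((a:ℕ) < conj L lam (b':ℕ)) :=
        fun hc => absurd ((lt_conj_iff hanti a (b':ℕ)).mp hc) (by omega)
      omega
  · exfalso
    rw [sigmaFun_inr, sigmaFun_inl] at hval
    have hcl := conj_le L lam (b:ℕ)
    have hal := a'.isLt
    rcases lt_or_ge ((b:ℕ)) (lam a') with hb | hb
    · have h1 := (lt_conj_iff hanti a' (b:ℕ)).mpr hb
      omega
    · have h3 : ¬ ((a':ℕ) < conj L lam (b:ℕ)) :=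
        fun hc => absurd ((lt_conj_iff hanti a' (b:ℕ)).mp hc) (by omega)
      omega
  · rw [sigmaFun_inr, sigmaFun_inr] at hval
    rcases Nat.lt_trichotomy (b:ℕ) (b':ℕ) with hlt | heq | hgt
    · have := conj_anti L lam (le_of_lt hlt)
      have := conj_le L lam (b:ℕ)
      have := conj_le L lam (b':ℕ)
      omega
    · exact congrArg Sum.inr (Fin.ext heq)
    · have := conj_anti L lam (le_of_lt hgt)
      have := conj_le L lam (b:ℕ)
      have := conj_le L lam (b':ℕ)
      omega

noncomputable def mySigma (lam : Fin L → ℕ)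
    (hanti : ∀ i j : Fin L, i ≤ j → lam j ≤ lam i) (hK : ∀ i, lam i ≤ K) :
    (Fin L ⊕ Fin K) ≃ Fin (L+K) :=
  Equiv.ofBijective _ (sigmaFun_bij lam hanti hK)

lemma mySigma_apply (lam : Fin L → ℕ)
    (hanti : ∀ i j : Fin L, i ≤ j → lam j ≤ lam i) (hK : ∀ i, lam i ≤ K)
    (x : Fin L ⊕ Fin K) : mySigma lam hanti hK x = sigmaFun lam hK x := rfl


/-! ### complementary minors of inverse matrices -/

lemma block_det {m n : Type*} [Fintype m] [Fintype n] [DecidableEq m] [DecidableEq n]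
    (A B : Matrix (m ⊕ n) (m ⊕ n) R) (hAB : A * B = 1) :
    A.det * (B.toBlocks₁₁).det = (A.toBlocks₂₂).det := by
  have hA := Matrix.fromBlocks_toBlocks A
  have hB := Matrix.fromBlocks_toBlocks B
  have hprod := hAB
  rw [← hA, ← hB, Matrix.fromBlocks_multiply, ← Matrix.fromBlocks_one] at hprod
  have h11 : A.toBlocks₁₁ * B.toBlocks₁₁ + A.toBlocks₁₂ * B.toBlocks₂₁ = 1 := by
    have := congrArg Matrix.toBlocks₁₁ hprod
    simpa [-Matrix.fromBlocks_one] using this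
  have h21 : A.toBlocks₂₁ * B.toBlocks₁₁ + A.toBlocks₂₂ * B.toBlocks₂₁ = 0 := by
    have := congrArg Matrix.toBlocks₂₁ hprod
    simpa [-Matrix.fromBlocks_one] using this
  have hmul : A * (Matrix.fromBlocks (B.toBlocks₁₁) 0 (B.toBlocks₂₁) 1)
      = Matrix.fromBlocks 1 (A.toBlocks₁₂) 0 (A.toBlocks₂₂) := by
    nth_rewrite 1 [← hA]
    rw [Matrix.fromBlocks_multiply]
    rw [Matrix.mul_zero, Matrix.mul_zero, Matrix.mul_one, Matrix.mul_one,
      zero_add, zero_add, h11, h21]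
  have hdet := congrArg Matrix.det hmul
  rw [Matrix.det_mul, Matrix.det_fromBlocks_zero₁₂, Matrix.det_fromBlocks_zero₂₁,
    Matrix.det_one, Matrix.det_one, mul_one, one_mul] at hdet
  exact hdet

lemma det_submatrix_two {n m : Type*} [DecidableEq n] [Fintype n] [DecidableEq m] [Fintype m]
    (M : Matrix m m R) (e f : n ≃ m) :
    (M.submatrix e f).det = ((Equiv.Perm.sign (f.trans e.symm) : ℤ) : R) * M.det := by
  have h1 : M.submatrix e f = (M.submatrix e e).submatrix id ⇑(f.trans e.symm) := by
    ext i j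
    simp [Matrix.submatrix_apply]
  rw [h1, Matrix.det_permute' (f.trans e.symm), Matrix.det_submatrix_equiv_self]


/-! ### the sign computation -/

noncomputable def rho (L K : ℕ) : (Fin L ⊕ Fin K) ≃ Fin (L+K) :=
  mySigma (fun _ => 0) (fun _ _ _ => le_rfl) (fun _ => Nat.zero_le _)

lemma conj_zero (L : ℕ) (b : ℕ) : conj L (fun _ => 0) b = 0 := by
  unfold conj
  rw [Finset.card_eq_zero, Finset.filter_eq_empty_iff]
  intro i _
  show ¬ (b < 0)
  omega

lemma sign_mySigma (L K : ℕ) : ∀ (n : ℕ) (lam : Fin L → ℕ)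
    (hanti : ∀ i j : Fin L, i ≤ j → lam j ≤ lam i) (hK : ∀ i, lam i ≤ K)
    (_ : ∑ i, lam i = n),
    Equiv.Perm.sign ((rho L K).trans (mySigma lam hanti hK).symm) = (-1)^n := by
  intro n
  induction n with
  | zero =>
    intro lam hanti hK hsum
    have hlam : ∀ i, lam i = 0 := fun i =>
      Finset.sum_eq_zero_iff.mp hsum i (Finset.mem_univ i)
    have heq : mySigma lam hanti hK = rho L K := by
      apply Equiv.ext
      intro x
      rcases x with a | b
      · apply Fin.ext
        show lam a + (L - 1 - (a:ℕ)) = 0 + (L - 1 - (a:ℕ))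
        rw [hlam a]
      · apply Fin.ext
        show L + (b:ℕ) - conj L lam (b:ℕ) = L + (b:ℕ) - conj L (fun _ => 0) (b:ℕ)
        rw [conj_zero]
        have hz : conj L lam (b:ℕ) = 0 := by
          unfold conj
          rw [Finset.card_eq_zero, Finset.filter_eq_empty_iff]
          intro i _
          rw [hlam i]
          omega
        rw [hz]
    rw [heq, Equiv.self_trans_symm, pow_zero]
    exact Equiv.Perm.sign_refl
  | succ n ih =>
    intro lam hanti hK hsum
    rcases Nat.eq_zero_or_pos L with hL | hL
    · exfalso
      subst hL
      simp at hsum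
    have hSne : (Finset.univ.filter fun i : Fin L => lam i ≠ 0).Nonempty := by
      by_contra hS
      rw [Finset.not_nonempty_iff_eq_empty, Finset.filter_eq_empty_iff] at hS
      have hz : ∑ i, lam i = 0 := Finset.sum_eq_zero (fun i hi => by
        have := hS hi
        omega)
      omega
    set i₀ : Fin L := (Finset.univ.filter fun i : Fin L => lam i ≠ 0).max' hSne with hi₀def
    have hi₀mem := (Finset.univ.filter fun i : Fin L => lam i ≠ 0).max'_mem hSne
    rw [Finset.mem_filter] at hi₀mem
    have hi₀pos : 0 < lam i₀ := Nat.pos_of_ne_zero hi₀mem.2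
    have hij0 : (i₀:ℕ) < L := i₀.isLt
    have hafter : ∀ j : Fin L, (i₀:ℕ) < (j:ℕ) → lam j = 0 := by
      intro j hj
      by_contra hjne
      have hmem : j ∈ Finset.univ.filter fun i : Fin L => lam i ≠ 0 :=
        Finset.mem_filter.mpr ⟨Finset.mem_univ _, hjne⟩
      have hle := Finset.le_max' _ j hmem
      rw [← hi₀def, Fin.le_def] at hle
      omega
    have hb₀lt : lam i₀ - 1 < K := by have := hK i₀; omega
    set b₀ : Fin K := ⟨lam i₀ - 1, hb₀lt⟩ with hb₀def
    have hb₀val : (b₀:ℕ) = lam i₀ - 1 := rfl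
    set lam' : Fin L → ℕ := Function.update lam i₀ (lam i₀ - 1) with hlam'def
    have hlam'app : ∀ i, lam' i = if i = i₀ then lam i₀ - 1 else lam i := by
      intro i
      rw [hlam'def, Function.update_apply]
    have hanti' : ∀ i j : Fin L, i ≤ j → lam' j ≤ lam' i := by
      intro i j hij
      have hij' : (i:ℕ) ≤ (j:ℕ) := Fin.le_def.mp hij
      rw [hlam'app, hlam'app]
      split_ifs with h1 h2 h2
      · exact le_rfl
      · have hle := hanti i i₀ (by rw [h1] at hij; exact hij)
        omega
      · have hival : (i:ℕ) = (i₀:ℕ) := congrArg Fin.val h2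
        have hjgt : (i₀:ℕ) < (j:ℕ) := by
          rcases Nat.lt_or_ge (i₀:ℕ) (j:ℕ) with hh | hh
          · exact hh
          · exact absurd (Fin.ext (show (j:ℕ) = (i₀:ℕ) by omega)) h1
        rw [hafter j hjgt]
        omega
      · exact hanti i j hij
    have hK' : ∀ i, lam' i ≤ K := by
      intro i
      rw [hlam'app]
      split_ifs
      · omega
      · exact hK i
    have hsum' : ∑ i, lam' i = n := by
      rw [hlam'def, Finset.sum_update_of_mem (Finset.mem_univ i₀)]
      rw [Finset.sum_eq_sum_sdiff_singleton_add (Finset.mem_univ i₀) lam] at hsum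
      omega
    have hconjb₀ : conj L lam ((b₀:ℕ)) = (i₀:ℕ) + 1 := by
      have hfil : (Finset.univ.filter fun i : Fin L => (b₀:ℕ) < lam i)
          = Finset.univ.filter fun i : Fin L => (i:ℕ) < (i₀:ℕ) + 1 := by
        ext i
        simp only [Finset.mem_filter, Finset.mem_univ, true_and]
        constructor
        · intro hi
          by_contra hgt
          have h0 := hafter i (by omega)
          omega
        · intro hi
          have hle := hanti i i₀ (Fin.le_def.mpr (by omega))
          omega
      unfold conj
      rw [hfil, card_lt_fin _ i₀.isLt]
    have hconj' : ∀ b : Fin K, (b:ℕ) ≠ (b₀:ℕ) → conj L lam' (b:ℕ) = conj L lam (b:ℕ) := by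
      intro b hb
      unfold conj
      congr 1
      ext i
      simp only [Finset.mem_filter, Finset.mem_univ, true_and, hlam'app]
      split_ifs with h1
      · rw [h1]
        omega
      · exact Iff.rfl
    have hconj'b₀ : conj L lam' ((b₀:ℕ)) = (i₀:ℕ) := by
      have hfil : (Finset.univ.filter fun i : Fin L => (b₀:ℕ) < lam' i)
          = Finset.univ.filter fun i : Fin L => (i:ℕ) < (i₀:ℕ) := by
        ext i
        simp only [Finset.mem_filter, Finset.mem_univ, true_and, hlam'app]
        split_ifs with h1
        · constructor
          · intro hh
            exfalso
            omega
          · intro hh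
            exfalso
            have := congrArg Fin.val h1
            omega
        · constructor
          · intro hh
            rcases Nat.lt_trichotomy ((i:ℕ)) ((i₀:ℕ)) with hc | hc | hc
            · exact hc
            · exact absurd (Fin.ext hc) h1
            · exfalso
              have := hafter i hc
              omega
          · intro hh
            have := hanti i i₀ (Fin.le_def.mpr (by omega))
            omega
      unfold conj
      rw [hfil, card_lt_fin _ (le_of_lt i₀.isLt)]
    set σ := mySigma lam hanti hK with hσdef
    set σ' := mySigma lam' hanti' hK' with hσ'def
    set u : Fin (L+K) := σ' (Sum.inl i₀) with hudef
    set v : Fin (L+K) := σ' (Sum.inr b₀) with hvdef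
    have huval : (u:ℕ) = (lam i₀ - 1) + (L - 1 - (i₀:ℕ)) := by
      rw [hudef]
      show lam' i₀ + (L - 1 - (i₀:ℕ)) = _
      rw [hlam'app, if_pos rfl]
    have hvval : (v:ℕ) = L + (lam i₀ - 1) - (i₀:ℕ) := by
      rw [hvdef]
      show L + (b₀:ℕ) - conj L lam' ((b₀:ℕ)) = _
      rw [hconj'b₀]
    have hne : u ≠ v := by
      intro hcontr
      have := congrArg Fin.val hcontr
      omega
    have hstep : σ = σ'.trans (Equiv.swap u v) := by
      apply Equiv.ext
      intro x
      rw [Equiv.trans_apply]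
      rcases x with a | b
      · by_cases ha : a = i₀
        · subst ha
          rw [← hudef, Equiv.swap_apply_left]
          apply Fin.ext
          show lam i₀ + (L - 1 - (i₀:ℕ)) = (v:ℕ)
          omega
        · have h1 : σ' (Sum.inl a) ≠ u := by
            rw [hudef]
            exact fun hc => ha (Sum.inl.inj (σ'.injective hc))
          have h2 : σ' (Sum.inl a) ≠ v := by
            rw [hvdef]
            intro hc
            exact Sum.inl_ne_inr (σ'.injective hc)
          rw [Equiv.swap_apply_of_ne_of_ne h1 h2]
          apply Fin.ext
          show lam a + (L - 1 - (a:ℕ)) = lam' a + (L - 1 - (a:ℕ))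
          rw [hlam'app, if_neg ha]
      · by_cases hb : b = b₀
        · subst hb
          rw [← hvdef, Equiv.swap_apply_right]
          apply Fin.ext
          show L + (b₀:ℕ) - conj L lam ((b₀:ℕ)) = (u:ℕ)
          rw [hconjb₀]
          omega
        · have h1 : σ' (Sum.inr b) ≠ u := by
            rw [hudef]
            intro hc
            exact Sum.inr_ne_inl (σ'.injective hc)
          have h2 : σ' (Sum.inr b) ≠ v := by
            rw [hvdef]
            exact fun hc => hb (Sum.inr.inj (σ'.injective hc))
          rw [Equiv.swap_apply_of_ne_of_ne h1 h2]
          apply Fin.ext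
          show L + (b:ℕ) - conj L lam ((b:ℕ)) = L + (b:ℕ) - conj L lam' ((b:ℕ))
          rw [hconj' b (fun hc => hb (Fin.ext hc))]
    have hcswap : (σ'.trans (Equiv.swap u v)).trans σ'.symm
        = Equiv.swap (σ'.symm u) (σ'.symm v) := by
      have hsy := Equiv.symm_trans_swap_trans u v σ'.symm
      simpa using hsy
    have hns : ∀ y : Fin (L+K), σ'.symm (Equiv.swap u v y)
        = Equiv.swap (σ'.symm u) (σ'.symm v) (σ'.symm y) := by
      intro y
      by_cases hy1 : y = u
      · rw [hy1, Equiv.swap_apply_left, Equiv.swap_apply_left]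
      · by_cases hy2 : y = v
        · rw [hy2, Equiv.swap_apply_right, Equiv.swap_apply_right]
        · rw [Equiv.swap_apply_of_ne_of_ne hy1 hy2,
            Equiv.swap_apply_of_ne_of_ne (fun hc => hy1 (σ'.symm.injective hc))
              (fun hc => hy2 (σ'.symm.injective hc))]
    have hgeq : (rho L K).trans σ.symm
        = ((rho L K).trans σ'.symm).trans (Equiv.swap (σ'.symm u) (σ'.symm v)) := by
      apply Equiv.ext
      intro x
      rw [hstep]
      simp only [Equiv.trans_apply, Equiv.symm_trans_apply, Equiv.symm_swap]
      exact hns _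
    rw [hgeq, Equiv.Perm.sign_trans]
    have hnesymm : σ'.symm u ≠ σ'.symm v := fun hcc => hne (by
      have := congrArg σ' hcc
      simpa using this)
    rw [Equiv.Perm.sign_swap hnesymm, ih lam' hanti' hK' hsum', pow_succ]
    exact mul_comm _ _

end JT

/-- `Δ_λ(e) = Δ_{λ'}(h)` where `λ'` is the conjugate partition and `e` is the
dual sequence of `h`.  Here `λ` has at most `L` parts and largest part at most
`K`, and `λ'_j = #{i : λ_i ≥ j}`. -/
theorem jtDet_dual_conjugate {R : Type*} [CommRing R] (h : ℤ → R)
    (h0 : h 0 = 1) (hneg : ∀ i : ℤ, i < 0 → h i = 0)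
    (L K : ℕ) (lam : Fin L → ℕ)
    (hanti : ∀ i j : Fin L, i ≤ j → lam j ≤ lam i)
    (hK : ∀ i, lam i ≤ K) :
    jtDet (dualSeqZ h) lam =
      jtDet h (fun j : Fin K =>
        (Finset.univ.filter fun i : Fin L => (j : ℕ) < lam i).card) := by
  classical
  set μ : Fin K → ℕ := fun j => (Finset.univ.filter fun i : Fin L => (j : ℕ) < lam i).card
    with hμdef
  have hμconj : ∀ j : Fin K, μ j = JT.conj L lam (j:ℕ) := fun j => rfl
  have hμLe : ∀ j : Fin K, μ j ≤ L := fun j => JT.conj_le L lam (j:ℕ)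
  set M : ℕ := ∑ i, lam i with hMdef
  set σ := JT.mySigma lam hanti hK with hσdef
  set ρ := JT.rho L K with hρdef
  set A := JT.AM h (L+K) with hAdef
  set B := JT.BM h (L+K) with hBdef
  have hρinr : ∀ j : Fin K, ((ρ (Sum.inr j) : Fin (L+K)) : ℕ) = L + (j:ℕ) := by
    intro j
    show L + (j:ℕ) - JT.conj L (fun _ => 0) (j:ℕ) = L + (j:ℕ)
    rw [JT.conj_zero]
    omega
  have hρinl : ∀ i : Fin L, ((ρ (Sum.inl i) : Fin (L+K)) : ℕ) = 0 + (L - 1 - (i:ℕ)) :=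
    fun i => rfl
  have hσinr : ∀ i : Fin K, ((σ (Sum.inr i) : Fin (L+K)) : ℕ) = L + (i:ℕ) - μ i :=
    fun i => rfl
  have hσinl : ∀ i : Fin L, ((σ (Sum.inl i) : Fin (L+K)) : ℕ) = lam i + (L - 1 - (i:ℕ)) :=
    fun i => rfl
  have hAB : (A.submatrix σ ρ) * (B.submatrix ρ σ) = 1 := by
    rw [Matrix.submatrix_mul_equiv, JT.AB_one h h0 hneg, Matrix.submatrix_one_equiv]
  have hblock := JT.block_det (A.submatrix σ ρ) (B.submatrix ρ σ) hAB
  -- identify the top-left block of B'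
  have hB11 : ((B.submatrix ρ σ).toBlocks₁₁ : Matrix (Fin L) (Fin L) R)
      = (Matrix.of fun i j : Fin L => dualSeqZ h ((lam i : ℤ) + (j:ℤ) - (i:ℤ))).transpose := by
    ext i j
    show dualSeqZ h (((σ (Sum.inl j) : Fin (L+K)) : ℤ) - ((ρ (Sum.inl i) : Fin (L+K)) : ℤ))
      = dualSeqZ h ((lam j : ℤ) + (i:ℤ) - (j:ℤ))
    congr 1
    have h1 := hσinl j
    have h2 := hρinl i
    have h3 := i.isLt
    have h4 := j.isLt
    omega
  -- identify the bottom-right block of A'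
  set C : Matrix (Fin K) (Fin K) R :=
    Matrix.of (fun i j : Fin K => h ((μ i : ℤ) + (j:ℤ) - (i:ℤ))) with hCdef
  set D2 : Matrix (Fin K) (Fin K) R :=
    Matrix.of (fun i j : Fin K => (-1:R)^(L + (j:ℕ)) * C i j) with hD2def
  have hA22 : ((A.submatrix σ ρ).toBlocks₂₂ : Matrix (Fin K) (Fin K) R)
      = Matrix.of (fun i j : Fin K =>
          (-1:R)^(((σ (Sum.inr i) : Fin (L+K)) : ℕ)) * D2 i j) := by
    ext i j
    show (-1:R)^(((σ (Sum.inr i) : Fin (L+K)):ℕ) + ((ρ (Sum.inr j) : Fin (L+K)):ℕ))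
        * h (((ρ (Sum.inr j) : Fin (L+K)):ℤ) - ((σ (Sum.inr i) : Fin (L+K)):ℤ)) = _
    simp only [Matrix.of_apply, hD2def, hCdef]
    rw [hρinr j, pow_add]
    have harg : (((L + (j:ℕ) : ℕ)):ℤ) - (((σ (Sum.inr i) : Fin (L+K)) : ℕ):ℤ)
        = ((μ i : ℕ):ℤ) + ((j:ℕ):ℤ) - ((i:ℕ):ℤ) := by
      have hs := hσinr i
      have hl := hμLe i
      omega
    rw [harg, mul_assoc]
  -- determinants of the blocks
  have hdetB11 : ((B.submatrix ρ σ).toBlocks₁₁).det = jtDet (dualSeqZ h) lam := by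
    rw [hB11, Matrix.det_transpose]
    rfl
  have hdetA22 : ((A.submatrix σ ρ).toBlocks₂₂).det = (-1:R)^M * jtDet h μ := by
    rw [hA22, Matrix.det_mul_column, hD2def, Matrix.det_mul_row]
    have hjt : C.det = jtDet h μ := rfl
    rw [hjt]
    rw [Finset.prod_pow_eq_pow_sum, Finset.prod_pow_eq_pow_sum]
    rw [← mul_assoc, ← pow_add]
    congr 1
    apply JT.neg_one_pow_congr
    have h1 : (∑ i : Fin K, ((σ (Sum.inr i) : Fin (L+K)):ℕ)) + ∑ i : Fin K, μ i
        = ∑ i : Fin K, (L + (i:ℕ)) := by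
      rw [← Finset.sum_add_distrib]
      apply Finset.sum_congr rfl
      intro i _
      have := hμLe i
      have := hσinr i
      omega
    have hμsum : ∑ b : Fin K, μ b = M := by
      have hcards : ∀ b : Fin K, μ b = ∑ a : Fin L, if (b:ℕ) < lam a then 1 else 0 := by
        intro b
        rw [hμconj]
        unfold JT.conj
        rw [Finset.card_filter]
      rw [hMdef]
      calc ∑ b : Fin K, μ b
          = ∑ b : Fin K, ∑ a : Fin L, if (b:ℕ) < lam a then 1 else 0 :=
            Finset.sum_congr rfl (fun b _ => hcards b)
        _ = ∑ a : Fin L, ∑ b : Fin K, if (b:ℕ) < lam a then 1 else 0 := Finset.sum_comm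
        _ = ∑ a : Fin L, lam a := by
            apply Finset.sum_congr rfl
            intro a _
            rw [← Finset.card_filter]
            exact JT.card_lt_fin (lam a) (hK a)
    omega
  -- determinant of A'
  have hsign := JT.sign_mySigma L K M lam hanti hK rfl
  have hdetA' : (A.submatrix σ ρ).det = (-1:R)^M := by
    rw [JT.det_submatrix_two A σ ρ, JT.det_AM h h0 hneg (L+K), mul_one]
    rw [hsign]
    push_cast
    ring
  rw [hdetA', hdetB11, hdetA22] at hblock
  have hsq : (-1:R)^M * (-1:R)^M = 1 := by
    rw [← pow_add]
    exact Even.neg_one_pow ⟨M, rfl⟩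
  calc jtDet (dualSeqZ h) lam
      = ((-1:R)^M * (-1:R)^M) * jtDet (dualSeqZ h) lam := by rw [hsq, one_mul]
    _ = (-1:R)^M * ((-1:R)^M * jtDet (dualSeqZ h) lam) := by rw [mul_assoc]
    _ = (-1:R)^M * ((-1:R)^M * jtDet h μ) := by rw [hblock]
    _ = jtDet h μ := by rw [← mul_assoc, hsq, one_mul]
end

section
/- With S = ℚ[c₁,...,c_m] and σ_λ the Schur elements defined via Jacobi–Trudi determinants in the σ_p = Δ_{(1^p)}(c), the set {σ_λ : λ ⊆ m×k} is a ℚ-basis of the quotient ring S/⟨σ_{k+1}, σ_{k+2}, ..., σ_{k+m}⟩. -/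
/-- The sequence `c = (c_1, …, c_m, 0, 0, …)` of variables of `S = ℚ[c_1, …, c_m]`,
with `c_0 = 1` and `c_i = 0` for `i < 0` or `i > m`. -/
noncomputable def cVar (m : ℕ) : ℤ → MvPolynomial (Fin m) ℚ := fun i =>
  if h : 1 ≤ i ∧ i ≤ (m : ℤ) then MvPolynomial.X ⟨(i - 1).toNat, by omega⟩
  else if i = 0 then 1 else 0

/-- `σ_p = Δ_{(1^p)}(c) = det(c_{1+j-i})_{p×p}`, extended by `σ_p = 0` for `p < 0`. -/
noncomputable def sigmaP (m : ℕ) : ℤ → MvPolynomial (Fin m) ℚ := fun p =>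
  if p < 0 then 0
  else Matrix.det (Matrix.of fun i j : Fin p.toNat => cVar m (1 + (j : ℤ) - (i : ℤ)))

/-- `σ_λ = Δ_λ(σ) = det(σ_{λ_i+j-i})`. -/
noncomputable def sigmaL (m : ℕ) {l : ℕ} (lam : Fin l → ℕ) : MvPolynomial (Fin m) ℚ :=
  Matrix.det (Matrix.of fun i j : Fin l => sigmaP m ((lam i : ℤ) + (j : ℤ) - (i : ℤ)))

open MvPolynomial Finset

noncomputable section

namespace SchurAux

variable (m : ℕ)

lemma esymm_eq_zero_of_big {q : ℕ} (h : m < q) : esymm (Fin m) ℚ q = 0 := by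
  have : powersetCard q (univ : Finset (Fin m)) = ∅ := by
    rw [Finset.powersetCard_eq_empty]; simpa using h
  rw [esymm, this, Finset.sum_empty]

/-- elementary symmetric with conventions. -/
def ee (j : ℤ) : MvPolynomial (Fin m) ℚ :=
  if 0 ≤ j then esymm (Fin m) ℚ j.toNat else 0

lemma ee_neg {j : ℤ} (h : j < 0) : ee m j = 0 := by simp [ee, not_le.2 h]

lemma ee_zero : ee m 0 = 1 := by simp [ee, esymm_zero]

lemma ee_nat (q : ℕ) : ee m (q : ℤ) = esymm (Fin m) ℚ q := by simp [ee]

/-- the algebra map `S → A`, `c_i ↦ e_i`. -/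
def Phi : MvPolynomial (Fin m) ℚ →ₐ[ℚ] MvPolynomial (Fin m) ℚ :=
  aeval (fun i : Fin m => esymm (Fin m) ℚ (i + 1))

lemma Phi_injective : Function.Injective (Phi m) := by
  have key := esymmAlgHom_fin_injective (n := m) (m := m) ℚ le_rfl
  intro a b h
  apply key
  apply Subtype.ext
  rw [esymmAlgHom_apply, esymmAlgHom_apply]
  exact h

lemma Phi_cVar (j : ℤ) : Phi m (cVar m j) = ee m j := by
  unfold cVar ee
  by_cases h1 : 1 ≤ j ∧ j ≤ (m:ℤ)
  · rw [dif_pos h1, if_pos (by omega : (0:ℤ) ≤ j)]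
    simp only [Phi, aeval_X]
    congr 1
    omega
  · rw [dif_neg h1]
    by_cases h2 : j = 0
    · subst h2; simp [esymm_zero]
    · rw [if_neg h2]
      by_cases h3 : 0 ≤ j
      · rw [if_pos h3, map_zero, esymm_eq_zero_of_big]
        omega
      · rw [if_neg h3, map_zero]

end SchurAux
namespace SchurAux

variable (m : ℕ)

local notation "A" => MvPolynomial (Fin m) ℚ

open PowerSeries in
def Efac (j : Fin m) : PowerSeries (MvPolynomial (Fin m) ℚ) :=
  1 - PowerSeries.C (MvPolynomial.X j) * PowerSeries.X

def Eprod (s : Finset (Fin m)) : PowerSeries (MvPolynomial (Fin m) ℚ) := ∏ j ∈ s, Efac m j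

lemma coeff_mul_Efac_zero (f : PowerSeries (MvPolynomial (Fin m) ℚ)) (j : Fin m) :
    PowerSeries.coeff 0 (f * Efac m j) = PowerSeries.coeff 0 f := by
  simp [Efac, PowerSeries.coeff_zero_eq_constantCoeff, map_mul, map_sub]

lemma coeff_mul_Efac_succ (f : PowerSeries (MvPolynomial (Fin m) ℚ)) (j : Fin m) (b : ℕ) :
    PowerSeries.coeff (b+1) (f * Efac m j) =
      PowerSeries.coeff (b+1) f - X j * PowerSeries.coeff b f := by
  have : f * Efac m j = f - PowerSeries.C (X j) * (PowerSeries.X * f) := by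
    unfold Efac; ring
  rw [this, map_sub, PowerSeries.coeff_C_mul, PowerSeries.coeff_succ_X_mul]

lemma coeff_Eprod (s : Finset (Fin m)) (b : ℕ) :
    PowerSeries.coeff b (Eprod m s) =
      (-1)^b * ∑ T ∈ powersetCard b s, ∏ j ∈ T, (X j : MvPolynomial (Fin m) ℚ) := by
  induction s using Finset.induction_on generalizing b with
  | empty =>
      cases b with
      | zero => simp [Eprod]
      | succ b =>
          rw [Finset.powersetCard_eq_empty.2 (by simp)]
          simp [Eprod]
  | @insert a s ha ih =>
      have hE : Eprod m (insert a s) = Eprod m s * Efac m a := by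
        rw [Eprod, Finset.prod_insert ha, mul_comm]; rfl
      cases b with
      | zero => simp [hE, coeff_mul_Efac_zero, ih 0]
      | succ b =>
          rw [hE, coeff_mul_Efac_succ, ih, ih]
          rw [Finset.powersetCard_succ_insert ha]
          rw [Finset.sum_union]
          · rw [Finset.sum_image]
            · have : ∀ T ∈ powersetCard b s,
                  ∏ j ∈ insert a T, (X j : MvPolynomial (Fin m) ℚ) = X a * ∏ j ∈ T, X j := by
                intro T hT
                rw [Finset.mem_powersetCard] at hT
                exact Finset.prod_insert (fun h => ha (hT.1 h))
              rw [Finset.sum_congr rfl this, ← Finset.mul_sum]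
              ring
            · intro T1 h1 T2 h2 he
              rw [Finset.mem_coe, Finset.mem_powersetCard] at h1 h2
              have na1 : a ∉ T1 := fun h => ha (h1.1 h)
              have na2 : a ∉ T2 := fun h => ha (h2.1 h)
              rw [← Finset.erase_insert na1, ← Finset.erase_insert na2, he]
          · rw [Finset.disjoint_left]
            intro T hT hT'
            rw [Finset.mem_powersetCard] at hT
            obtain ⟨T', hT', rfl⟩ := Finset.mem_image.1 hT'
            exact ha (hT.1 (Finset.mem_insert_self a T'))

def ES : PowerSeries (MvPolynomial (Fin m) ℚ) := Eprod m Finset.univ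

lemma coeff_ES (b : ℕ) :
    PowerSeries.coeff b (ES m) = (-1)^b * esymm (Fin m) ℚ b := by
  rw [ES, coeff_Eprod]; rfl

lemma constantCoeff_ES : PowerSeries.constantCoeff (ES m) = 1 := by
  rw [← PowerSeries.coeff_zero_eq_constantCoeff, coeff_ES]
  simp [esymm_zero]

def Hs : PowerSeries (MvPolynomial (Fin m) ℚ) := PowerSeries.invOfUnit (ES m) 1

lemma ES_mul_Hs : ES m * Hs m = 1 :=
  PowerSeries.mul_invOfUnit _ _ (by rw [constantCoeff_ES]; rfl)

def hc (p : ℕ) : MvPolynomial (Fin m) ℚ := PowerSeries.coeff p (Hs m)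

def hh (j : ℤ) : MvPolynomial (Fin m) ℚ := if h : 0 ≤ j then hc m j.toNat else 0

lemma hh_neg {j : ℤ} (h : j < 0) : hh m j = 0 := by simp [hh, not_le.2 h]

lemma hh_nat (p : ℕ) : hh m (p : ℤ) = hc m p := by simp [hh]

lemma hc_zero : hc m 0 = 1 := by
  rw [hc, PowerSeries.coeff_zero_eq_constantCoeff, Hs, PowerSeries.constantCoeff_invOfUnit]
  rfl

lemma NT (p : ℕ) (hp : 1 ≤ p) :
    ∑ i ∈ Finset.range (p+1),
      (-1 : MvPolynomial (Fin m) ℚ)^i * esymm (Fin m) ℚ i * hc m (p - i) = 0 := by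
  have h0 : PowerSeries.coeff p (ES m * Hs m) = 0 := by
    rw [ES_mul_Hs, PowerSeries.coeff_one, if_neg (by omega)]
  rw [PowerSeries.coeff_mul, Finset.Nat.sum_antidiagonal_eq_sum_range_succ_mk] at h0
  rw [← h0]
  apply Finset.sum_congr rfl
  intro i _
  rw [coeff_ES]
  rfl

def Geo (l : Fin m) : PowerSeries (MvPolynomial (Fin m) ℚ) :=
  PowerSeries.mk fun n => (X l : MvPolynomial (Fin m) ℚ)^n

lemma Efac_mul_Geo (l : Fin m) : Efac m l * Geo m l = 1 := by
  ext n
  have : Efac m l * Geo m l = Geo m l - PowerSeries.C (X l) * (PowerSeries.X * Geo m l) := by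
    unfold Efac; ring
  rw [this, map_sub, PowerSeries.coeff_C_mul]
  cases n with
  | zero =>
      simp [Geo, PowerSeries.coeff_zero_eq_constantCoeff, map_mul]
  | succ n =>
      rw [PowerSeries.coeff_succ_X_mul, Geo, PowerSeries.coeff_mk, PowerSeries.coeff_mk,
        PowerSeries.coeff_one, if_neg (Nat.succ_ne_zero n)]
      ring

lemma Hs_mul_Eer (l : Fin m) : Hs m * Eprod m (Finset.univ.erase l) = Geo m l := by
  have h1 : Eprod m (Finset.univ.erase l) * Efac m l = ES m := by
    rw [ES, Eprod, Eprod]; exact Finset.prod_erase_mul _ _ (Finset.mem_univ l)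
  calc Hs m * Eprod m (Finset.univ.erase l)
      = Hs m * Eprod m (Finset.univ.erase l) * (Efac m l * Geo m l) := by
        rw [Efac_mul_Geo, mul_one]
    _ = (Eprod m (Finset.univ.erase l) * Efac m l) * Hs m * Geo m l := by ring
    _ = Geo m l := by rw [h1, ES_mul_Hs, one_mul]

lemma conv (l : Fin m) (N : ℕ) :
    ∑ b ∈ Finset.range m,
      hh m ((N:ℤ) - b) * PowerSeries.coeff b (Eprod m (Finset.univ.erase l)) =
      (X l : MvPolynomial (Fin m) ℚ)^N := by
  set Eer := Eprod m (Finset.univ.erase l) with hEer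
  have h0 : PowerSeries.coeff N (Hs m * Eer) = (X l : MvPolynomial (Fin m) ℚ)^N := by
    rw [hEer, Hs_mul_Eer, Geo, PowerSeries.coeff_mk]
  rw [PowerSeries.coeff_mul, Finset.Nat.sum_antidiagonal_eq_sum_range_succ_mk] at h0
  have h1 : ∑ b ∈ Finset.range (N+1),
      hh m ((N:ℤ) - b) * PowerSeries.coeff b Eer = (X l : MvPolynomial (Fin m) ℚ)^N := by
    rw [← h0, ← Finset.sum_range_reflect (fun k => PowerSeries.coeff k (Hs m) *
      PowerSeries.coeff (N - k) Eer) (N+1)]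
    apply Finset.sum_congr rfl
    intro b hb
    rw [Finset.mem_range] at hb
    have hbN : b ≤ N := by omega
    have e1 : N + 1 - 1 - b = N - b := by omega
    have e2 : N - (N - b) = b := by omega
    rw [e1, e2]
    congr 1
    rw [hh]
    rw [dif_pos (by omega : (0:ℤ) ≤ (N:ℤ) - b)]
    congr 1
    omega
  -- extend both sums to range (max (N+1) m)
  set M := max (N+1) m with hM
  have h2 : ∑ b ∈ Finset.range (N+1), hh m ((N:ℤ) - b) * PowerSeries.coeff b Eer
      = ∑ b ∈ Finset.range M, hh m ((N:ℤ) - b) * PowerSeries.coeff b Eer := by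
    apply Finset.sum_subset (Finset.range_subset_range.2 (by omega))
    intro b _ hb
    rw [Finset.mem_range, not_lt] at hb
    have hneg : (N:ℤ) - b < 0 := by omega
    rw [hh_neg m hneg, zero_mul]
  have h3 : ∑ b ∈ Finset.range m, hh m ((N:ℤ) - b) * PowerSeries.coeff b Eer
      = ∑ b ∈ Finset.range M, hh m ((N:ℤ) - b) * PowerSeries.coeff b Eer := by
    apply Finset.sum_subset (Finset.range_subset_range.2 (by omega))
    intro b _ hb
    rw [Finset.mem_range, not_lt] at hb
    have : PowerSeries.coeff b Eer = 0 := by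
      rw [hEer, coeff_Eprod]
      have : powersetCard b (Finset.univ.erase l) = ∅ := by
        rw [Finset.powersetCard_eq_empty, Finset.card_erase_of_mem (Finset.mem_univ l)]
        simp only [Finset.card_univ, Fintype.card_fin]
        have hm0 : 0 < m := l.pos
        omega
      rw [this, Finset.sum_empty, mul_zero]
    rw [this, mul_zero]
  rw [h3, ← h2, h1]

end SchurAux
namespace SchurAux

variable (m : ℕ)

def Emat : Matrix (Fin m) (Fin m) (MvPolynomial (Fin m) ℚ) :=
  Matrix.of fun j l => PowerSeries.coeff (m - 1 - (j:ℕ)) (Eprod m (Finset.univ.erase l))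

def Hmat (α : Fin m → ℕ) : Matrix (Fin m) (Fin m) (MvPolynomial (Fin m) ℚ) :=
  Matrix.of fun i j => hh m ((α i : ℤ) + (j:ℕ) - ((m:ℤ) - 1))

def Pmat (α : Fin m → ℕ) : Matrix (Fin m) (Fin m) (MvPolynomial (Fin m) ℚ) :=
  Matrix.of fun i l => (X l : MvPolynomial (Fin m) ℚ)^(α i)

def Aalt (α : Fin m → ℕ) : MvPolynomial (Fin m) ℚ := (Pmat m α).det

lemma Hmat_mul_Emat (α : Fin m → ℕ) : Hmat m α * Emat m = Pmat m α := by
  refine Matrix.ext fun i l => ?_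
  rw [Matrix.mul_apply]
  show ∑ j : Fin m, hh m ((α i : ℤ) + (j:ℕ) - ((m:ℤ) - 1)) *
      PowerSeries.coeff (m - 1 - (j:ℕ)) (Eprod m (Finset.univ.erase l)) = (X l)^(α i)
  rw [← conv m l (α i)]
  have step : ∀ j : Fin m,
      hh m ((α i : ℤ) + (j:ℕ) - ((m:ℤ) - 1)) *
        PowerSeries.coeff (m - 1 - (j:ℕ)) (Eprod m (Finset.univ.erase l))
      = (fun b : ℕ => hh m ((α i : ℤ) - b) *
          PowerSeries.coeff b (Eprod m (Finset.univ.erase l))) ((Fin.rev j) : ℕ) := by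
    intro j
    have hj : (j:ℕ) < m := j.isLt
    have hrev : ((Fin.rev j) : ℕ) = m - 1 - (j:ℕ) := by
      rw [Fin.val_rev]; omega
    rw [hrev]
    congr 2
    have : ((m - 1 - (j:ℕ) : ℕ) : ℤ) = (m:ℤ) - 1 - (j:ℕ) := by omega
    rw [this]; ring
  rw [Finset.sum_congr rfl (fun j _ => step j)]
  exact (Fintype.sum_equiv (Fin.revPerm : Equiv.Perm (Fin m)) _ _
    (fun j => by rw [Fin.revPerm_apply])).trans (Fin.sum_univ_eq_sum_range _ m)

def deltaF : Fin m → ℕ := fun i => m - 1 - (i:ℕ)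

lemma det_Hmat_delta : (Hmat m (deltaF m)).det = 1 := by
  have htri : (Hmat m (deltaF m)).BlockTriangular id := by
    intro i j hji
    show hh m _ = 0
    apply hh_neg
    have hi : (i:ℕ) < m := i.isLt
    have : ((m - 1 - (i:ℕ) : ℕ) : ℤ) = (m:ℤ) - 1 - (i:ℕ) := by omega
    rw [deltaF, this]
    have : (j:ℕ) < (i:ℕ) := hji
    omega
  rw [Matrix.det_of_upperTriangular htri]
  apply Finset.prod_eq_one
  intro i _
  show hh m _ = 1
  have hi : (i:ℕ) < m := i.isLt
  have harg : ((deltaF m i : ℤ) + (i:ℕ) - ((m:ℤ) - 1)) = 0 := by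
    show (((m - 1 - (i:ℕ) : ℕ)):ℤ) + (i:ℕ) - ((m:ℤ) - 1) = 0
    omega
  rw [harg]
  show hh m ((0:ℕ):ℤ) = 1
  rw [hh_nat, hc_zero]

lemma det_Emat : (Emat m).det = Aalt m (deltaF m) := by
  have h := congrArg Matrix.det (Hmat_mul_Emat m (deltaF m))
  rw [Matrix.det_mul, det_Hmat_delta, one_mul] at h
  exact h

lemma JT (α : Fin m → ℕ) : (Hmat m α).det * Aalt m (deltaF m) = Aalt m α := by
  rw [← det_Emat, ← Matrix.det_mul, Hmat_mul_Emat]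
  rfl

/-! ### Toeplitz determinants -/

def Tmat (p : ℕ) : Matrix (Fin p) (Fin p) (MvPolynomial (Fin m) ℚ) :=
  Matrix.of fun i j => ee m (1 + (j:ℤ) - (i:ℤ))

def Gmat (p : ℕ) (r : ℤ) : Matrix (Fin p) (Fin p) (MvPolynomial (Fin m) ℚ) :=
  Matrix.of fun i j => if (i:ℕ) = 0 then ee m (r + (j:ℕ)) else ee m (1 + (j:ℤ) - (i:ℤ))

lemma Tmat_eq_Gmat (p : ℕ) : Tmat m p = Gmat m p 1 := by
  refine Matrix.ext fun i j => ?_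
  show ee m _ = if (i:ℕ) = 0 then ee m (1 + (j:ℕ)) else ee m (1 + (j:ℤ) - (i:ℤ))
  by_cases h : (i:ℕ) = 0
  · rw [if_pos h]; congr 1; omega
  · rw [if_neg h]

lemma ee_one_int : ee m (1:ℤ) = esymm (Fin m) ℚ 1 := by
  simp [ee]

lemma hc_one_step : hc m 1 = ee m 1 := by
  have h := NT m 1 le_rfl
  rw [Finset.sum_range_succ, Finset.sum_range_one] at h
  simp only [pow_zero, pow_one, one_mul, esymm_zero, Nat.sub_self, hc_zero, neg_one_mul,
    mul_one] at h
  rw [ee_one_int]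
  linear_combination h

lemma detGT : ∀ p : ℕ,
    (∀ r : ℤ, (Gmat m (p+1) r).det =
      ∑ i ∈ Finset.range (p+1), (-1)^i * ee m (r+(i:ℕ)) * hc m (p - i)) ∧
    (Tmat m (p+1)).det = hc m (p+1) := by
  intro p
  induction p with
  | zero =>
      have hG : ∀ r : ℤ, (Gmat m 1 r).det = ee m r := by
        intro r
        rw [Matrix.det_fin_one]
        show (if ((0:Fin 1):ℕ) = 0 then ee m (r + (((0:Fin 1)):ℕ))
          else ee m (1 + (((0:Fin 1)):ℕ) - (((0:Fin 1)):ℕ))) = ee m r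
        simp
      constructor
      · intro r
        rw [hG r, Finset.sum_range_one]
        simp [hc_zero]
      · rw [Tmat_eq_Gmat, hG 1, hc_one_step]
  | succ p ih =>
      have key : ∀ r : ℤ, (Gmat m (p+2) r).det
          = ee m r * hc m (p+1) - (Gmat m (p+1) (r+1)).det := by
        intro r
        rw [Matrix.det_succ_column_zero]
        rw [Fin.sum_univ_succ, Fin.sum_univ_succ]
        have hzero : ∀ i : Fin p,
            ((-1:MvPolynomial (Fin m) ℚ))^(((i.succ.succ : Fin (p+2))):ℕ) *
              Gmat m (p+2) r i.succ.succ 0 *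
              ((Gmat m (p+2) r).submatrix (i.succ.succ).succAbove Fin.succ).det = 0 := by
          intro i
          have hent : Gmat m (p+2) r i.succ.succ 0 = 0 := by
            show (if ((i.succ.succ : Fin (p+2)):ℕ) = 0 then ee m (r + (((0: Fin (p+2))):ℕ))
              else ee m (1 + (((0:Fin (p+2))):ℕ) - ((i.succ.succ : Fin (p+2)):ℕ))) = 0
            rw [if_neg (by simp [Fin.val_succ])]
            apply ee_neg
            simp only [Fin.val_succ, Fin.val_zero]
            push_cast
            omega
          rw [hent, mul_zero, zero_mul]
        rw [Finset.sum_congr rfl (fun i _ => hzero i), Finset.sum_const_zero, add_zero]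
        have hs0 : (Gmat m (p+2) r).submatrix (Fin.succAbove 0) Fin.succ = Tmat m (p+1) := by
          refine Matrix.ext fun i j => ?_
          rw [Matrix.submatrix_apply, Fin.succAbove_zero]
          show (if ((i.succ : Fin (p+2)):ℕ) = 0 then ee m (r + ((j.succ : Fin (p+2)):ℕ))
            else ee m (1 + ((j.succ : Fin (p+2)):ℕ) - ((i.succ : Fin (p+2)):ℕ)))
            = ee m (1 + (j:ℕ) - (i:ℕ))
          rw [if_neg (by simp [Fin.val_succ])]
          congr 1
          simp only [Fin.val_succ]
          push_cast
          ring
        have hs1 : (Gmat m (p+2) r).submatrix (Fin.succAbove ((0:Fin (p+1)).succ)) Fin.succ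
            = Gmat m (p+1) (r+1) := by
          refine Matrix.ext fun i j => ?_
          rw [Matrix.submatrix_apply]
          by_cases hi : (i:ℕ) = 0
          · have hi0 : i = 0 := Fin.ext hi
            subst hi0
            have hsa : ((0:Fin (p+1)).succ).succAbove (0 : Fin (p+1)) = 0 := by
              rw [Fin.succAbove_of_castSucc_lt]
              · rfl
              · rw [Fin.lt_def]
                simp [Fin.val_succ]
            rw [hsa]
            show (if ((0:Fin (p+2)):ℕ) = 0 then ee m (r + ((j.succ : Fin (p+2)):ℕ))
              else ee m (1 + ((j.succ : Fin (p+2)):ℕ) - (((0:Fin (p+2))):ℕ)))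
              = (if ((0:Fin (p+1)):ℕ) = 0 then ee m ((r+1) + (j:ℕ))
                else ee m (1 + (j:ℕ) - (((0:Fin (p+1))):ℕ)))
            simp only [Fin.val_zero, eq_self_iff_true, if_true]
            congr 1
            simp only [Fin.val_succ]
            push_cast
            ring
          · have hsa : ((0:Fin (p+1)).succ).succAbove i = i.succ := by
              rw [Fin.succAbove_of_le_castSucc]
              rw [Fin.le_def]
              simp only [Fin.val_succ, Fin.coe_castSucc, Fin.val_zero]
              omega
            rw [hsa]
            show (if ((i.succ : Fin (p+2)):ℕ) = 0 then ee m (r + ((j.succ : Fin (p+2)):ℕ))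
              else ee m (1 + ((j.succ : Fin (p+2)):ℕ) - ((i.succ : Fin (p+2)):ℕ)))
              = (if ((i:Fin (p+1)):ℕ) = 0 then ee m ((r+1) + (j:ℕ))
                else ee m (1 + (j:ℕ) - (i:ℕ)))
            rw [if_neg (by simp [Fin.val_succ]), if_neg hi]
            congr 1
            simp only [Fin.val_succ]
            push_cast
            ring
        have hent0 : Gmat m (p+2) r 0 0 = ee m r := by
          show (if ((0:Fin (p+2)):ℕ) = 0 then ee m (r + (((0: Fin (p+2))):ℕ))
            else ee m (1 + (((0:Fin (p+2))):ℕ) - (((0:Fin (p+2))):ℕ))) = ee m r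
          simp
        have hent1 : Gmat m (p+2) r ((0:Fin (p+1)).succ) 0 = 1 := by
          show (if (((0:Fin (p+1)).succ : Fin (p+2)):ℕ) = 0 then ee m (r + (((0: Fin (p+2))):ℕ))
            else ee m (1 + (((0:Fin (p+2))):ℕ) - (((0:Fin (p+1)).succ : Fin (p+2)):ℕ))) = 1
          rw [if_neg (by simp [Fin.val_succ])]
          have : (1 + (((0:Fin (p+2))):ℕ) - (((0:Fin (p+1)).succ : Fin (p+2)):ℕ) : ℤ) = 0 := by
            simp [Fin.val_succ, Fin.val_zero]
          rw [this, ee_zero]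
        rw [hs0, hs1, hent0, hent1, ih.2]
        simp only [Fin.val_zero, Fin.val_succ, pow_zero, pow_one, one_mul, mul_one]
        ring
      have hG : ∀ r : ℤ, (Gmat m (p+2) r).det =
          ∑ i ∈ Finset.range (p+2), (-1)^i * ee m (r+(i:ℕ)) * hc m (p+1 - i) := by
        intro r
        rw [key r, ih.1 (r+1)]
        rw [Finset.sum_range_succ' (fun i => (-1:MvPolynomial (Fin m) ℚ)^i * ee m (r+(i:ℕ)) *
          hc m (p+1 - i)) (p+1)]
        have hterm : ∀ k ∈ Finset.range (p+1),
            (-1:MvPolynomial (Fin m) ℚ)^(k+1) * ee m (r+((k+1:ℕ):ℤ)) * hc m (p+1-(k+1))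
            = -((-1)^k * ee m ((r+1)+(k:ℕ)) * hc m (p - k)) := by
          intro k _
          have e1 : ((k+1:ℕ):ℤ) = (k:ℕ) + 1 := by push_cast; ring
          have e2 : p+1-(k+1) = p - k := by omega
          have e3 : r + ((k:ℕ) + 1) = (r+1) + (k:ℕ) := by ring
          rw [e1, e2, e3, pow_succ]
          ring
        rw [Finset.sum_congr rfl hterm]
        rw [Finset.sum_neg_distrib]
        norm_num
        ring
      refine ⟨hG, ?_⟩
      rw [Tmat_eq_Gmat, hG 1]
      have hNT := NT m (p+2) (by omega)
      rw [Finset.sum_range_succ' (fun i => (-1:MvPolynomial (Fin m) ℚ)^i * esymm (Fin m) ℚ i *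
        hc m (p+2 - i)) (p+2)] at hNT
      have hterm : ∀ k ∈ Finset.range (p+2),
          (-1:MvPolynomial (Fin m) ℚ)^(k+1) * esymm (Fin m) ℚ (k+1) * hc m (p+2-(k+1))
          = -((-1)^k * ee m ((1:ℤ)+(k:ℕ)) * hc m (p+1 - k)) := by
        intro k _
        have e1 : ((1:ℤ)+(k:ℕ)) = ((k+1:ℕ):ℤ) := by push_cast; ring
        have e2 : p+2-(k+1) = p+1 - k := by omega
        rw [e1, e2, ee_nat, pow_succ]
        ring
      rw [Finset.sum_congr rfl hterm, Finset.sum_neg_distrib] at hNT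
      simp only [pow_zero, esymm_zero, one_mul, mul_one, Nat.sub_zero] at hNT
      linear_combination -hNT

lemma detT (p : ℕ) : (Tmat m p).det = hc m p := by
  cases p with
  | zero => rw [hc_zero]; exact Matrix.det_isEmpty
  | succ p => exact (detGT m p).2

lemma Phi_sigmaP (p : ℤ) : Phi m (sigmaP m p) = hh m p := by
  unfold sigmaP
  by_cases hp : p < 0
  · rw [if_pos hp, map_zero, hh_neg m hp]
  · rw [if_neg hp]
    have : Phi m (Matrix.det (Matrix.of fun i j : Fin p.toNat => cVar m (1 + (j : ℤ) - (i : ℤ))))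
        = (Tmat m p.toNat).det := by
      rw [show (Phi m) (Matrix.det (Matrix.of fun i j : Fin p.toNat => cVar m (1 + (j:ℤ) - (i:ℤ))))
        = ((Phi m).toRingHom.mapMatrix (Matrix.of fun i j : Fin p.toNat =>
            cVar m (1 + (j:ℤ) - (i:ℤ)))).det from RingHom.map_det _ _]
      congr 1
      refine Matrix.ext fun i j => ?_
      show Phi m (cVar m (1 + (j:ℤ) - (i:ℤ))) = ee m (1 + (j:ℤ) - (i:ℤ))
      exact Phi_cVar m _
    rw [this, detT, hh]
    rw [dif_pos (by omega : (0:ℤ) ≤ p)]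



end SchurAux
namespace SchurAux

variable (m : ℕ)

def tF (α : Fin m → ℕ) : Fin m →₀ ℕ := Finsupp.equivFunOnFinite.symm α

lemma tF_apply (α : Fin m → ℕ) (i : Fin m) : tF m α i = α i := rfl

lemma tF_inj : Function.Injective (tF m) := Finsupp.equivFunOnFinite.symm.injective

lemma prod_X_pow_eq (e : Fin m → ℕ) :
    (∏ i, (X i : MvPolynomial (Fin m) ℚ) ^ e i) = monomial (tF m e) 1 := by
  rw [monomial_eq, C_1, one_mul, Finsupp.prod_fintype]
  · exact (Finset.prod_congr rfl fun i _ => rfl).symm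
  · intro i; rw [pow_zero]

lemma coeff_Aalt (α : Fin m → ℕ) (u : Fin m →₀ ℕ) :
    coeff u (Aalt m α) =
      ∑ w : Equiv.Perm (Fin m),
        Equiv.Perm.sign w • (if tF m (fun i => α (w i)) = u then (1:ℚ) else 0) := by
  rw [Aalt, Matrix.det_apply]
  rw [MvPolynomial.coeff_sum]
  apply Finset.sum_congr rfl
  intro w _
  rw [MvPolynomial.coeff_smul]
  congr 1
  have : (∏ i, Pmat m α (w i) i) = monomial (tF m (fun i => α (w i))) (1:ℚ) := by
    rw [← prod_X_pow_eq]
    rfl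
  rw [this, MvPolynomial.coeff_monomial]

lemma coeff_Aalt_eq_zero_of_big (α : Fin m → ℕ) (i0 : Fin m) (n' : ℕ) (hbig : n' ≤ α i0)
    (u : Fin m →₀ ℕ) (hu : ∀ l, u l < n') : coeff u (Aalt m α) = 0 := by
  rw [coeff_Aalt]
  apply Finset.sum_eq_zero
  intro w _
  rw [if_neg, smul_zero]
  intro h
  have := congrFun (congrArg (fun f : Fin m →₀ ℕ => (f : Fin m → ℕ)) h) (w.symm i0)
  simp only [tF_apply] at this
  rw [Equiv.apply_symm_apply] at this
  have := hu (w.symm i0)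
  omega

lemma perm_eq_one_of_strictAnti_comp {α β : Fin m → ℕ} (hα : StrictAnti α) (hβ : StrictAnti β)
    (w : Equiv.Perm (Fin m)) (h : ∀ i, α (w i) = β i) : w = 1 := by
  have hmono : StrictMono (fun i => w i) := by
    intro i j hij
    have h1 : β i > β j := hβ hij
    rw [← h i, ← h j] at h1
    by_contra hc
    push_neg at hc
    have : α (w i) ≤ α (w j) := hα.antitone hc
    omega
  have := (hmono.range_inj strictMono_id).1
    (by rw [Set.range_id]; exact w.surjective.range_eq)
  exact Equiv.ext fun i => congrFun this i

lemma coeff_Aalt_strictAnti {α β : Fin m → ℕ} (hα : StrictAnti α) (hβ : StrictAnti β) :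
    coeff (tF m β) (Aalt m α) = if α = β then 1 else 0 := by
  rw [coeff_Aalt]
  rw [Finset.sum_eq_single 1]
  · simp only [Equiv.Perm.sign_one, one_smul]
    have hcond : (tF m (fun i => α ((1 : Equiv.Perm (Fin m)) i)) = tF m β) ↔ α = β := by
      constructor
      · intro h
        have := tF_inj m h
        exact this
      · intro h; rw [h]; rfl
    by_cases h : α = β
    · rw [if_pos (hcond.2 h), if_pos h]
    · rw [if_neg (fun hc => h (hcond.1 hc)), if_neg h]
  · intro w _ hw
    rw [if_neg, smul_zero]
    intro h
    apply hw
    apply perm_eq_one_of_strictAnti_comp m hα hβ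
    intro i
    exact congrFun (congrArg (fun f : Fin m →₀ ℕ => (f : Fin m → ℕ)) h) i
  · intro h
    exact absurd (Finset.mem_univ _) h

lemma strictAnti_deltaF : StrictAnti (deltaF m) := by
  intro i j hij
  have hj : (j:ℕ) < m := j.isLt
  have : (i:ℕ) < (j:ℕ) := hij
  show m - 1 - (j:ℕ) < m - 1 - (i:ℕ)
  omega

lemma Aalt_delta_ne_zero : Aalt m (deltaF m) ≠ 0 := by
  intro h
  have := coeff_Aalt_strictAnti m (strictAnti_deltaF m) (strictAnti_deltaF m)
  rw [if_pos rfl, h, MvPolynomial.coeff_zero] at this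
  exact one_ne_zero this.symm

/-! ### the "bad" subspace -/

def Bad (n' : ℕ) (g : MvPolynomial (Fin m) ℚ) : Prop :=
  ∀ u : Fin m →₀ ℕ, (∀ l, u l < n') → coeff u g = 0

lemma Bad.zero (n' : ℕ) : Bad m n' 0 := fun _ _ => MvPolynomial.coeff_zero _

lemma Bad.add {n' : ℕ} {g₁ g₂ : MvPolynomial (Fin m) ℚ} (h1 : Bad m n' g₁) (h2 : Bad m n' g₂) :
    Bad m n' (g₁ + g₂) := fun u hu => by
  rw [MvPolynomial.coeff_add, h1 u hu, h2 u hu, add_zero]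

lemma Bad.mul_left {n' : ℕ} (f : MvPolynomial (Fin m) ℚ) {g : MvPolynomial (Fin m) ℚ}
    (hg : Bad m n' g) : Bad m n' (f * g) := fun u hu => by
  rw [MvPolynomial.coeff_mul]
  apply Finset.sum_eq_zero
  intro x hx
  rw [Finset.HasAntidiagonal.mem_antidiagonal] at hx
  have : ∀ l, x.2 l < n' := by
    intro l
    have : x.1 l + x.2 l = u l := by
      rw [← hx]; rfl
    have := hu l
    omega
  rw [hg x.2 this, mul_zero]

lemma Bad_Aalt (n' : ℕ) (α : Fin m → ℕ) (i0 : Fin m) (h : n' ≤ α i0) :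
    Bad m n' (Aalt m α) := fun u hu => coeff_Aalt_eq_zero_of_big m α i0 n' h u hu

/-! ### Pieri rule in the alternant model -/

def bump (T : Finset (Fin m)) (α : Fin m → ℕ) : Fin m → ℕ :=
  fun i => α i + (if i ∈ T then 1 else 0)

lemma Aalt_eq_sum (e : Fin m → ℕ) : Aalt m e = ∑ w : Equiv.Perm (Fin m),
    Equiv.Perm.sign w • ∏ i, (X i : MvPolynomial (Fin m) ℚ) ^ e (w i) :=
  Matrix.det_apply _

lemma esymm_mul_Aalt (r : ℕ) (α : Fin m → ℕ) :
    esymm (Fin m) ℚ r * Aalt m α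
      = ∑ T ∈ Finset.powersetCard r Finset.univ, Aalt m (bump m T α) := by
  rw [esymm, Finset.sum_mul]
  have key : ∀ T ∈ Finset.powersetCard r (Finset.univ : Finset (Fin m)),
      (∏ i ∈ T, (X i : MvPolynomial (Fin m) ℚ)) * Aalt m α
        = ∑ w : Equiv.Perm (Fin m), Equiv.Perm.sign w •
            ∏ i, (X i : MvPolynomial (Fin m) ℚ) ^ (α (w i) + (if i ∈ T then 1 else 0)) := by
    intro T _
    rw [Aalt_eq_sum, Finset.mul_sum]
    apply Finset.sum_congr rfl
    intro w _
    rw [mul_smul_comm]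
    congr 1
    have hprod : (∏ i ∈ T, (X i : MvPolynomial (Fin m) ℚ))
        = ∏ i, (X i : MvPolynomial (Fin m) ℚ)^(if i ∈ T then 1 else 0) := by
      rw [← Finset.prod_subset (Finset.subset_univ T)
        (fun x _ hx => by rw [if_neg hx, pow_zero])]
      exact Finset.prod_congr rfl fun i hi => by rw [if_pos hi, pow_one]
    rw [hprod, ← Finset.prod_mul_distrib]
    apply Finset.prod_congr rfl
    intro i _
    rw [← pow_add, add_comm]
  rw [Finset.sum_congr rfl key]
  have key2 : ∀ T ∈ Finset.powersetCard r (Finset.univ : Finset (Fin m)),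
      Aalt m (bump m T α) = ∑ w : Equiv.Perm (Fin m), Equiv.Perm.sign w •
        ∏ i, (X i : MvPolynomial (Fin m) ℚ) ^ (α (w i) + (if (w i) ∈ T then 1 else 0)) := by
    intro T _
    rw [Aalt_eq_sum]
    rfl
  rw [Finset.sum_congr rfl key2]
  rw [Finset.sum_comm]
  conv_rhs => rw [Finset.sum_comm]
  apply Finset.sum_congr rfl
  intro w _
  apply Finset.sum_nbij' (i := fun T => T.map w.toEmbedding)
    (j := fun T => T.map w.symm.toEmbedding)
  · intro T hT
    rw [Finset.mem_powersetCard] at hT ⊢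
    exact ⟨Finset.subset_univ _, by rw [Finset.card_map]; exact hT.2⟩
  · intro T hT
    rw [Finset.mem_powersetCard] at hT ⊢
    exact ⟨Finset.subset_univ _, by rw [Finset.card_map]; exact hT.2⟩
  · intro T _
    ext x
    simp [Finset.mem_map_equiv]
  · intro T _
    ext x
    simp [Finset.mem_map_equiv]
  · intro T _
    have hmem : ∀ i : Fin m, (w i ∈ T.map w.toEmbedding) = (i ∈ T) :=
      fun i => propext (by rw [Finset.mem_map_equiv, Equiv.symm_apply_apply])
    simp only [hmem]

end SchurAux
namespace SchurAux

variable (m : ℕ)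

def ldel (lam : Fin m → ℕ) : Fin m → ℕ := fun i => lam i + (m - 1 - (i:ℕ))

lemma Phi_sigmaL (lam : Fin m → ℕ) :
    Phi m (sigmaL m lam) = (Hmat m (ldel m lam)).det := by
  unfold sigmaL
  rw [show (Phi m) (Matrix.det (Matrix.of fun i j : Fin m =>
      sigmaP m ((lam i : ℤ) + (j:ℤ) - (i:ℤ))))
    = ((Phi m).toRingHom.mapMatrix (Matrix.of fun i j : Fin m =>
      sigmaP m ((lam i : ℤ) + (j:ℤ) - (i:ℤ)))).det from RingHom.map_det _ _]
  congr 1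
  refine Matrix.ext fun i j => ?_
  show Phi m (sigmaP m ((lam i : ℤ) + (j:ℤ) - (i:ℤ)))
      = hh m ((ldel m lam i : ℤ) + (j:ℕ) - ((m:ℤ) - 1))
  rw [Phi_sigmaP]
  congr 1
  show (lam i : ℤ) + (j:ℤ) - (i:ℤ) = ((lam i + (m - 1 - (i:ℕ)) : ℕ) : ℤ) + (j:ℕ) - ((m:ℤ) - 1)
  have hi : (i:ℕ) < m := i.isLt
  omega

lemma sigmaL_JT (lam : Fin m → ℕ) :
    Phi m (sigmaL m lam) * Aalt m (deltaF m) = Aalt m (ldel m lam) := by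
  rw [Phi_sigmaL]; exact JT m _

def rowMat (f : ℕ → MvPolynomial (Fin m) ℚ) (s : ℕ) :
    Matrix (Fin s) (Fin s) (MvPolynomial (Fin m) ℚ) :=
  Matrix.of fun i j => if (i:ℕ) = 0 then f (j:ℕ) else hh m ((j:ℤ) - (i:ℤ))

lemma rowMat_apply (f : ℕ → MvPolynomial (Fin m) ℚ) (s : ℕ) (i j : Fin s) :
    rowMat m f s i j = if (i:ℕ) = 0 then f (j:ℕ) else hh m ((j:ℤ) - (i:ℤ)) := rfl

/-- row matrix determinant -/
lemma det_aux : ∀ (s : ℕ) (f : ℕ → MvPolynomial (Fin m) ℚ),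
    (rowMat m f (s+1)).det = f 0 := by
  intro s
  induction s with
  | zero =>
      intro f
      rw [Matrix.det_fin_one, rowMat_apply]
      simp
  | succ s ih =>
      intro f
      rw [Matrix.det_succ_row _ (Fin.last (s+1))]
      rw [Fin.sum_univ_castSucc]
      have hzero : ∀ j : Fin (s+1),
          (-1:MvPolynomial (Fin m) ℚ)^((Fin.last (s+1) : ℕ) + ((j.castSucc : Fin (s+2)):ℕ)) *
            rowMat m f (s+2) (Fin.last (s+1)) j.castSucc *
            ((rowMat m f (s+2)).submatrix
                (Fin.last (s+1)).succAbove j.castSucc.succAbove).det = 0 := by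
        intro j
        have hent : rowMat m f (s+2) (Fin.last (s+1)) j.castSucc = 0 := by
          rw [rowMat_apply, if_neg (by simp [Fin.val_last])]
          apply hh_neg
          have hj : (j:ℕ) < s+1 := j.isLt
          simp only [Fin.coe_castSucc, Fin.val_last]
          omega
        rw [hent, mul_zero, zero_mul]
      rw [Finset.sum_congr rfl (fun j _ => hzero j), Finset.sum_const_zero, zero_add]
      have hent : rowMat m f (s+2) (Fin.last (s+1)) (Fin.last (s+1)) = 1 := by
        rw [rowMat_apply, if_neg (by simp [Fin.val_last])]
        rw [sub_self]
        show hh m ((0:ℕ):ℤ) = 1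
        rw [hh_nat, hc_zero]
      rw [hent, mul_one]
      have hsign : (-1:MvPolynomial (Fin m) ℚ)^((Fin.last (s+1) : ℕ) + (Fin.last (s+1) : ℕ)) = 1 := by
        rw [← two_mul, pow_mul]
        norm_num
      rw [hsign, one_mul]
      have hsub : (rowMat m f (s+2)).submatrix
            (Fin.last (s+1)).succAbove (Fin.last (s+1)).succAbove
          = rowMat m f (s+1) := by
        refine Matrix.ext fun i j => ?_
        rw [Matrix.submatrix_apply, Fin.succAbove_last, rowMat_apply, rowMat_apply]
        simp only [Fin.coe_castSucc]
      rw [hsub, ih f]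

def prowN (q : ℕ) : Fin m → ℕ := fun i => if (i:ℕ) = 0 then q + (m-1) else m-1-(i:ℕ)

lemma det_Hmat_prow (hm : 0 < m) (q : ℕ) : (Hmat m (prowN m q)).det = hc m q := by
  obtain ⟨s, rfl⟩ : ∃ s, m = s + 1 := ⟨m - 1, by omega⟩
  have hmat : Hmat (s+1) (prowN (s+1) q) = rowMat (s+1) (fun j => hh (s+1) ((q:ℤ) + j)) (s+1) := by
    refine Matrix.ext fun i j => ?_
    rw [rowMat_apply]
    show hh (s+1) ((prowN (s+1) q i : ℤ) + (j:ℕ) - ((((s+1):ℕ):ℤ) - 1))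
        = if (i:ℕ) = 0 then hh (s+1) ((q:ℤ) + (j:ℕ)) else hh (s+1) ((j:ℤ) - (i:ℤ))
    have hi : (i:ℕ) < s+1 := i.isLt
    by_cases h0 : (i:ℕ) = 0
    · rw [if_pos h0]
      congr 1
      show ((if (i:ℕ) = 0 then q + (s+1-1) else s+1-1-(i:ℕ) : ℕ):ℤ) + (j:ℕ) - ((((s+1):ℕ):ℤ) - 1)
          = (q:ℤ) + (j:ℕ)
      rw [if_pos h0]
      push_cast
      omega
    · rw [if_neg h0]
      congr 1
      show ((if (i:ℕ) = 0 then q + (s+1-1) else s+1-1-(i:ℕ) : ℕ):ℤ) + (j:ℕ) - ((((s+1):ℕ):ℤ) - 1)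
          = (j:ℤ) - (i:ℤ)
      rw [if_neg h0]
      omega
  rw [hmat, det_aux]
  show hh (s+1) ((q:ℤ) + ((0:ℕ):ℤ)) = hc (s+1) q
  have : (q:ℤ) + ((0:ℕ):ℤ) = ((q:ℕ):ℤ) := by push_cast; ring
  rw [this, hh_nat]

end SchurAux
namespace SchurAux

variable (m k : ℕ)

/-- the ideal of the statement -/
def Igen : Ideal (MvPolynomial (Fin m) ℚ) :=
  Ideal.span ((fun p : ℤ => sigmaP m p) '' Set.Icc ((k : ℤ) + 1) ((k : ℤ) + m))

lemma Phi_sigmaP_mul (hm : 0 < m) (q : ℕ) :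
    Phi m (sigmaP m (q:ℤ)) * Aalt m (deltaF m) = Aalt m (prowN m q) := by
  rw [Phi_sigmaP, hh_nat, ← det_Hmat_prow m hm q]
  exact JT m _

lemma bad_of_mem (hm : 0 < m) {x : MvPolynomial (Fin m) ℚ} (hx : x ∈ Igen m k) :
    Bad m (m+k) (Phi m x * Aalt m (deltaF m)) := by
  refine Submodule.span_induction ?_ ?_ ?_ ?_ hx
  · rintro g ⟨p, hp, rfl⟩
    rw [Set.mem_Icc] at hp
    have hq : p = ((p.toNat : ℕ) : ℤ) := by omega
    rw [hq, Phi_sigmaP_mul m hm]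
    apply Bad_Aalt m (m+k) _ ⟨0, hm⟩
    show m + k ≤ prowN m p.toNat ⟨0, hm⟩
    show m + k ≤ if ((⟨0, hm⟩ : Fin m):ℕ) = 0 then p.toNat + (m-1) else m-1-((⟨0, hm⟩ : Fin m):ℕ)
    rw [if_pos rfl]
    omega
  · rw [map_zero, zero_mul]
    exact Bad.zero m _
  · intro x y _ _ h1 h2
    rw [map_add, add_mul]
    exact Bad.add m h1 h2
  · intro r x _ h1
    rw [smul_eq_mul, map_mul, mul_assoc]
    exact Bad.mul_left m _ h1

lemma zsmul_mem_ideal {I : Ideal (MvPolynomial (Fin m) ℚ)} (z : ℤˣ)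
    {x : MvPolynomial (Fin m) ℚ} (hx : x ∈ I) : z • x ∈ I := by
  rcases Int.units_eq_one_or z with h | h
  · rw [h, one_smul]; exact hx
  · rw [h]
    have : (-1 : ℤˣ) • x = -x := by
      rw [Units.smul_def]
      norm_num
    rw [this]
    exact neg_mem hx

lemma sigmaL_mem_ideal (hm : 0 < m) (lam : Fin m → ℕ) (h0 : lam ⟨0, hm⟩ = k+1) :
    sigmaL m lam ∈ Igen m k := by
  unfold sigmaL
  rw [Matrix.det_apply]
  apply Submodule.sum_mem
  intro w _
  apply zsmul_mem_ideal
  have hmem : (Matrix.of fun i j : Fin m => sigmaP m ((lam i : ℤ) + (j:ℤ) - (i:ℤ)))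
      (w (w.symm ⟨0, hm⟩)) (w.symm ⟨0, hm⟩) ∈ Igen m k := by
    rw [Equiv.apply_symm_apply]
    show sigmaP m ((lam ⟨0, hm⟩ : ℤ) + ((w.symm ⟨0, hm⟩ : Fin m):ℕ) - ((⟨0, hm⟩ : Fin m):ℕ)) ∈ _
    apply Ideal.subset_span
    refine ⟨(lam ⟨0, hm⟩ : ℤ) + ((w.symm ⟨0, hm⟩ : Fin m):ℕ) - ((⟨0, hm⟩ : Fin m):ℕ), ?_, rfl⟩
    rw [Set.mem_Icc]
    have : ((w.symm ⟨0, hm⟩ : Fin m):ℕ) < m := (w.symm ⟨0, hm⟩).isLt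
    show ((k:ℤ)+1 ≤ (lam ⟨0, hm⟩ : ℤ) + _ - ((0:ℕ):ℤ)) ∧ _
    rw [h0]
    constructor <;> push_cast <;> omega
  rw [← Finset.mul_prod_erase Finset.univ _ (Finset.mem_univ (w.symm ⟨0, hm⟩))]
  exact Ideal.mul_mem_right _ _ hmem

lemma sigmaP_zero : sigmaP m 0 = 1 := by
  unfold sigmaP
  rw [if_neg (by omega)]
  haveI : IsEmpty (Fin (Int.toNat 0)) := by
    constructor
    intro x
    have := x.isLt
    omega
  exact Matrix.det_isEmpty

lemma sigmaL_zero_eq_one : sigmaL m (fun _ : Fin m => 0) = 1 := by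
  unfold sigmaL
  have htri : (Matrix.of fun i j : Fin m =>
      sigmaP m ((((fun _ : Fin m => 0) i : ℕ) : ℤ) + (j:ℤ) - (i:ℤ))).BlockTriangular id := by
    intro i j hji
    show sigmaP m (((0:ℕ):ℤ) + (j:ℤ) - (i:ℤ)) = 0
    unfold sigmaP
    rw [if_pos]
    have : (j:ℕ) < (i:ℕ) := hji
    omega
  rw [Matrix.det_of_upperTriangular htri]
  apply Finset.prod_eq_one
  intro i _
  show sigmaP m (((0:ℕ):ℤ) + (i:ℤ) - (i:ℤ)) = 1
  have : ((0:ℕ):ℤ) + (i:ℤ) - (i:ℤ) = 0 := by ring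
  rw [this, sigmaP_zero]

lemma antitone_of_adj {f : Fin m → ℕ}
    (h : ∀ i : ℕ, ∀ hi : i+1 < m, f ⟨i+1, hi⟩ ≤ f ⟨i, by omega⟩) :
    ∀ i j : Fin m, i ≤ j → f j ≤ f i := by
  suffices H : ∀ d : ℕ, ∀ i j : Fin m, (j:ℕ) = (i:ℕ) + d → f j ≤ f i by
    intro i j hij
    exact H ((j:ℕ) - (i:ℕ)) i j (by have := (Fin.le_def).1 hij; omega)
  intro d
  induction d with
  | zero =>
      intro i j hij
      have : j = i := Fin.ext (by omega)
      rw [this]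
  | succ d ihd =>
      intro i j hij
      have hjlt : (j:ℕ) < m := j.isLt
      have hmid : (i:ℕ) + d < m := by omega
      have h1 : f j ≤ f ⟨(i:ℕ) + d, hmid⟩ := by
        have hj' : j = ⟨(i:ℕ)+d+1, by omega⟩ := Fin.ext (show (j:ℕ) = (i:ℕ)+d+1 by omega)
        rw [hj']
        exact h ((i:ℕ)+d) (by omega)
      exact le_trans h1 (ihd i ⟨(i:ℕ)+d, hmid⟩ rfl)

lemma strictAnti_ldel {lam : Fin m → ℕ} (h : ∀ i j : Fin m, i ≤ j → lam j ≤ lam i) :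
    StrictAnti (ldel m lam) := by
  intro i j hij
  have hj : (j:ℕ) < m := j.isLt
  have hvij : (i:ℕ) < (j:ℕ) := hij
  have h1 : lam j ≤ lam i := h i j (le_of_lt hij)
  show lam j + (m - 1 - (j:ℕ)) < lam i + (m - 1 - (i:ℕ))
  omega

lemma ldel_inj {lam mu : Fin m → ℕ} (h : ldel m lam = ldel m mu) : lam = mu := by
  funext i
  have := congrFun h i
  show lam i = mu i
  have h1 : lam i + (m - 1 - (i:ℕ)) = mu i + (m - 1 - (i:ℕ)) := this
  omega

/-- Pieri rule in `S`. -/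
lemma pieri_S (hm : 0 < m) (lam : Fin m → ℕ)
    (hlam : ∀ i j : Fin m, i ≤ j → lam j ≤ lam i) (v : Fin m) :
    X v * sigmaL m lam =
      ∑ T ∈ (Finset.powersetCard ((v:ℕ)+1) Finset.univ).filter
        (fun T => ∀ i j : Fin m, i ≤ j → bump m T lam j ≤ bump m T lam i),
        sigmaL m (bump m T lam) := by
  classical
  apply Phi_injective m
  apply mul_right_cancel₀ (Aalt_delta_ne_zero m)
  rw [map_mul, map_sum, Finset.sum_mul]
  have hXv : Phi m (X v) = esymm (Fin m) ℚ ((v:ℕ)+1) := by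
    rw [Phi]; rw [aeval_X]
  rw [mul_assoc, sigmaL_JT, hXv, esymm_mul_Aalt]
  have hterm : ∀ T : Finset (Fin m), bump m T (ldel m lam) = ldel m (bump m T lam) := by
    intro T
    funext i
    show ldel m lam i + (if i ∈ T then 1 else 0) = bump m T lam i + (m - 1 - (i:ℕ))
    show lam i + (m - 1 - (i:ℕ)) + _ = lam i + (if i ∈ T then 1 else 0) + (m - 1 - (i:ℕ))
    ring
  rw [Finset.sum_congr rfl (fun T _ => congrArg (Aalt m) (hterm T))]
  rw [← Finset.sum_filter_add_sum_filter_not (Finset.powersetCard ((v:ℕ)+1) Finset.univ)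
    (fun T => ∀ i j : Fin m, i ≤ j → bump m T lam j ≤ bump m T lam i)]
  have hbad : ∀ T ∈ (Finset.powersetCard ((v:ℕ)+1) Finset.univ).filter
      (fun T => ¬ ∀ i j : Fin m, i ≤ j → bump m T lam j ≤ bump m T lam i),
      Aalt m (ldel m (bump m T lam)) = 0 := by
    intro T hT
    rw [Finset.mem_filter] at hT
    have hT2 := hT.2
    have hadj : ¬ ∀ i : ℕ, ∀ hi : i+1 < m,
        bump m T lam ⟨i+1, hi⟩ ≤ bump m T lam ⟨i, by omega⟩ := by
      intro hadj
      exact hT2 (antitone_of_adj m hadj)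
    push_neg at hadj
    obtain ⟨i, hi, hviol⟩ := hadj
    set iF : Fin m := ⟨i, by omega⟩ with hiF
    set i' : Fin m := ⟨i+1, hi⟩ with hi'
    have hb1 : bump m T lam i' ≤ lam i' + 1 := by
      show lam i' + (if i' ∈ T then 1 else 0) ≤ lam i' + 1
      split_ifs <;> omega
    have hb2 : lam iF ≤ bump m T lam iF := by
      show lam iF ≤ lam iF + (if iF ∈ T then 1 else 0)
      omega
    have hadj2 : lam i' ≤ lam iF := hlam iF i' (by rw [Fin.le_def]; show i ≤ i+1; omega)
    have heq : bump m T lam i' = bump m T lam iF + 1 := by omega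
    rw [Aalt]
    apply Matrix.det_zero_of_row_eq (i := iF) (j := i')
    · intro hc
      have := congrArg Fin.val hc
      rw [hiF, hi'] at this
      simp only [Fin.val_mk] at this
      omega
    · funext l
      show (X l : MvPolynomial (Fin m) ℚ) ^ (ldel m (bump m T lam) iF)
          = (X l : MvPolynomial (Fin m) ℚ) ^ (ldel m (bump m T lam) i')
      congr 1
      show bump m T lam iF + (m - 1 - ((iF:Fin m):ℕ)) = bump m T lam i' + (m - 1 - ((i':Fin m):ℕ))
      have e1 : ((iF : Fin m):ℕ) = i := rfl
      have e2 : ((i' : Fin m):ℕ) = i+1 := rfl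
      rw [e1, e2, heq]
      omega
  rw [Finset.sum_congr rfl hbad, Finset.sum_const_zero, add_zero]
  apply Finset.sum_congr rfl
  intro T _
  rw [sigmaL_JT]

end SchurAux
open SchurAux in
/-- The images of the `σ_λ` with `λ ⊆ m × k` form a `ℚ`-basis of the quotient
ring `S/⟨σ_{k+1}, …, σ_{k+m}⟩`. -/
theorem sigmaL_basis_of_quotient (m k : ℕ) (hm : 0 < m) (hk : 0 < k) :
    LinearIndependent ℚ
      (fun lam : {lam : Fin m → ℕ //
          (∀ i j : Fin m, i ≤ j → lam j ≤ lam i) ∧ ∀ i, lam i ≤ k} =>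
        Ideal.Quotient.mk
          (Ideal.span ((fun p : ℤ => sigmaP m p) '' Set.Icc ((k : ℤ) + 1) ((k : ℤ) + m)))
          (sigmaL m lam.1)) ∧
    Submodule.span ℚ
      (Set.range fun lam : {lam : Fin m → ℕ //
          (∀ i j : Fin m, i ≤ j → lam j ≤ lam i) ∧ ∀ i, lam i ≤ k} =>
        Ideal.Quotient.mk
          (Ideal.span ((fun p : ℤ => sigmaP m p) '' Set.Icc ((k : ℤ) + 1) ((k : ℤ) + m)))
          (sigmaL m lam.1)) = ⊤ := by
  classical
  have hIgen : Ideal.span ((fun p : ℤ => sigmaP m p) '' Set.Icc ((k : ℤ) + 1) ((k : ℤ) + m))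
      = Igen m k := rfl
  set I : Ideal (MvPolynomial (Fin m) ℚ) := Igen m k with hI
  rw [hIgen]
  constructor
  · rw [linearIndependent_iff']
    intro s g hsum lam0 hlam0
    have hmem : (∑ lam ∈ s, g lam • sigmaL m lam.1) ∈ I := by
      have hmk : (Ideal.Quotient.mkₐ ℚ I) (∑ lam ∈ s, g lam • sigmaL m lam.1)
          = ∑ lam ∈ s, g lam • Ideal.Quotient.mk I (sigmaL m lam.1) := by
        rw [map_sum]
        apply Finset.sum_congr rfl
        intro lam _
        rw [map_smul, Ideal.Quotient.mkₐ_eq_mk]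
      rw [← Ideal.Quotient.eq_zero_iff_mem, ← Ideal.Quotient.mkₐ_eq_mk ℚ, hmk]
      exact hsum
    have hbad := bad_of_mem m k hm hmem
    have hexp : Phi m (∑ lam ∈ s, g lam • sigmaL m lam.1) * Aalt m (deltaF m)
        = ∑ lam ∈ s, g lam • Aalt m (ldel m lam.1) := by
      rw [map_sum, Finset.sum_mul]
      apply Finset.sum_congr rfl
      intro lam _
      rw [map_smul, smul_mul_assoc, sigmaL_JT]
    have hcoeff := hbad (tF m (ldel m lam0.1)) ?_
    swap
    · intro l
      have h1 := lam0.2.2 l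
      have h2 : (l:ℕ) < m := l.isLt
      show lam0.1 l + (m - 1 - (l:ℕ)) < m + k
      omega
    rw [hexp, MvPolynomial.coeff_sum] at hcoeff
    have hterm : ∀ lam ∈ s,
        MvPolynomial.coeff (tF m (ldel m lam0.1)) (g lam • Aalt m (ldel m lam.1))
        = if lam = lam0 then g lam else 0 := by
      intro lam _
      rw [MvPolynomial.coeff_smul]
      rw [coeff_Aalt_strictAnti m (strictAnti_ldel m lam.2.1) (strictAnti_ldel m lam0.2.1)]
      by_cases h : lam = lam0
      · rw [if_pos (by rw [h]), if_pos h, smul_eq_mul, mul_one]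
      · rw [if_neg, if_neg h, smul_eq_mul, mul_zero]
        intro hc
        exact h (Subtype.ext (ldel_inj m hc))
    rw [Finset.sum_congr rfl hterm, Finset.sum_ite_eq' s lam0 g] at hcoeff
    rw [if_pos hlam0] at hcoeff
    exact hcoeff
  · rw [eq_top_iff]
    rintro x -
    obtain ⟨f, rfl⟩ := Ideal.Quotient.mk_surjective x
    induction f using MvPolynomial.induction_on with
    | C a =>
        have h1 : (MvPolynomial.C a : MvPolynomial (Fin m) ℚ) = a • 1 := by
          rw [Algebra.smul_def, mul_one]
          rfl
        rw [h1, ← Ideal.Quotient.mkₐ_eq_mk ℚ, map_smul]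
        apply Submodule.smul_mem
        rw [Ideal.Quotient.mkₐ_eq_mk]
        rw [show (1 : MvPolynomial (Fin m) ℚ) = sigmaL m (fun _ : Fin m => 0) from
          (sigmaL_zero_eq_one m).symm]
        apply Submodule.subset_span
        exact ⟨⟨fun _ => 0, fun i j _ => le_refl 0, fun i => Nat.zero_le k⟩, rfl⟩
    | add p q hp hq =>
        rw [map_add]
        exact Submodule.add_mem _ hp hq
    | mul_X p v hp =>
        rw [map_mul, mul_comm]
        have key : ∀ y ∈ Submodule.span ℚ
            (Set.range fun lam : {lam : Fin m → ℕ //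
              (∀ i j : Fin m, i ≤ j → lam j ≤ lam i) ∧ ∀ i, lam i ≤ k} =>
                Ideal.Quotient.mk I (sigmaL m lam.1)),
            Ideal.Quotient.mk I (MvPolynomial.X v) * y ∈ Submodule.span ℚ
            (Set.range fun lam : {lam : Fin m → ℕ //
              (∀ i j : Fin m, i ≤ j → lam j ≤ lam i) ∧ ∀ i, lam i ≤ k} =>
                Ideal.Quotient.mk I (sigmaL m lam.1)) := by
          intro y hy
          refine Submodule.span_induction ?_ ?_ ?_ ?_ hy
          · rintro z ⟨lam, rfl⟩
            rw [← map_mul, pieri_S m hm lam.1 lam.2.1 v, map_sum]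
            apply Submodule.sum_mem
            intro T hT
            rw [Finset.mem_filter] at hT
            by_cases hbound : ∀ i, bump m T lam.1 i ≤ k
            · apply Submodule.subset_span
              exact ⟨⟨bump m T lam.1, hT.2, hbound⟩, rfl⟩
            · push_neg at hbound
              obtain ⟨i1, hi1⟩ := hbound
              have hb : bump m T lam.1 ⟨0, hm⟩ = k+1 := by
                have hup : ∀ j, bump m T lam.1 j ≤ k+1 := by
                  intro j
                  have := lam.2.2 j
                  show lam.1 j + (if j ∈ T then 1 else 0) ≤ k+1
                  split_ifs <;> omega
                have hle : bump m T lam.1 i1 ≤ bump m T lam.1 ⟨0, hm⟩ :=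
                  hT.2 ⟨0, hm⟩ i1 (by rw [Fin.le_def]; exact Nat.zero_le _)
                have h3 := hup ⟨0, hm⟩
                have h4 := hup i1
                omega
              rw [Ideal.Quotient.eq_zero_iff_mem.2 (sigmaL_mem_ideal m k hm _ hb)]
              exact Submodule.zero_mem _
          · rw [mul_zero]
            exact Submodule.zero_mem _
          · intro a b _ _ ha hb
            rw [mul_add]
            exact Submodule.add_mem _ ha hb
          · intro a b _ hb
            obtain ⟨b', rfl⟩ := Ideal.Quotient.mk_surjective b
            have h1 : (Ideal.Quotient.mk I (MvPolynomial.X v)) * (a • Ideal.Quotient.mk I b')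
                = a • ((Ideal.Quotient.mk I (MvPolynomial.X v)) * Ideal.Quotient.mk I b') := by
              rw [← Ideal.Quotient.mkₐ_eq_mk ℚ, ← map_smul, ← map_mul, ← map_mul, ← map_smul,
                mul_smul_comm]
            rw [h1]
            exact Submodule.smul_mem _ a hb
        exact key _ hp
end
end

section
/- In the ring S = ℚ[c₁,...,c_m], the element σ_n (with n = m+k) is a non-zero divisor in the quotient ring S/⟨σ_{k+1}, ..., σ_{n-1}⟩. -/
noncomputable section
namespace QGAux

open MvPolynomial Matrix Finset


variable {R : Type*} [CommRing R]

/-- Toeplitz matrix with shifted first row. -/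
def Tmat (a : ℤ → R) (s : ℤ) (p : ℕ) : Matrix (Fin p) (Fin p) R :=
  Matrix.of fun i j => if (i : ℕ) = 0 then a (s + (j : ℕ)) else a (1 + (j : ℕ) - (i : ℕ))

def Edet (a : ℤ → R) (s : ℤ) (p : ℕ) : R := (Tmat a s p).det

variable {a : ℤ → R} (ha0 : a 0 = 1) (haneg : ∀ t : ℤ, t < 0 → a t = 0)

lemma Edet_zero (s : ℤ) : Edet a s 0 = 1 := Matrix.det_fin_zero

lemma Edet_one (s : ℤ) : Edet a s 1 = a s := by
  simp [Edet, Matrix.det_fin_one, Tmat]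

include ha0 haneg in
lemma Edet_succ (s : ℤ) (p : ℕ) (hp : 1 ≤ p) :
    Edet a s (p + 1) = a s * Edet a 1 p - Edet a (s + 1) p := by
  obtain ⟨q, rfl⟩ : ∃ q, p = q + 1 := ⟨p - 1, by omega⟩
  rw [Edet, show q + 1 + 1 = (q + 1).succ from rfl, Matrix.det_succ_column_zero]
  rw [Fin.sum_univ_succ, Fin.sum_univ_succ]
  have h2 : ∀ i : Fin q, ((-1 : R)) ^ (((i.succ.succ : Fin (q+1).succ) : ℕ)) *
      Tmat a s ((q+1).succ) i.succ.succ 0 * ((Tmat a s ((q+1).succ)).submatrix i.succ.succ.succAbove Fin.succ).det = 0 := by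
    intro i
    have : Tmat a s ((q+1).succ) i.succ.succ 0 = 0 := by
      have hi : ((i.succ.succ : Fin (q+1).succ) : ℕ) = (i : ℕ) + 2 := rfl
      simp only [Tmat, Matrix.of_apply, hi, Fin.val_zero]
      rw [if_neg (by omega)]
      apply haneg; push_cast; omega
    rw [this]; ring
  rw [Finset.sum_eq_zero (fun i _ => h2 i)]
  have e0 : ((Tmat a s ((q+1).succ)).submatrix (Fin.succAbove 0) Fin.succ) = Tmat a 1 (q+1) := by
    ext i j
    simp only [Matrix.submatrix_apply, Fin.succAbove_zero, Tmat, Matrix.of_apply, Fin.val_succ]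
    rcases Nat.eq_zero_or_pos (i : ℕ) with h | h
    · rw [if_neg (by omega), if_pos h, h]; push_cast; ring_nf
    · rw [if_neg (by omega), if_neg (by omega)]; push_cast; ring_nf
  have e1 : ((Tmat a s ((q+1).succ)).submatrix (Fin.succ (0 : Fin (q+1))).succAbove Fin.succ) = Tmat a (s+1) (q+1) := by
    ext i j
    simp only [Matrix.submatrix_apply, Tmat, Matrix.of_apply, Fin.val_succ]
    rcases Nat.eq_zero_or_pos (i : ℕ) with h | h
    · have hi : i = 0 := by ext; exact h
      subst hi
      have h1 : ((Fin.succ (0 : Fin (q+1))).succAbove (0 : Fin (q+1)) : ℕ) = 0 := by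
        rw [Fin.succAbove_of_castSucc_lt]
        · rfl
        · simp [Fin.lt_iff_val_lt_val, Fin.val_succ]
      rw [h1]
      norm_num
      push_cast; ring_nf
    · have h1 : ((Fin.succ (0 : Fin (q+1))).succAbove i : ℕ) = (i : ℕ) + 1 := by
        rw [Fin.succAbove_of_le_castSucc]
        · rfl
        · simp only [Fin.le_iff_val_le_val, Fin.val_succ, Fin.coe_castSucc, Fin.val_zero]
          omega
      rw [h1]
      rw [if_neg (by omega), if_neg (by omega)]
      push_cast; ring_nf
  have t0 : Tmat a s ((q+1).succ) 0 0 = a s := by simp [Tmat]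
  have t1 : Tmat a s ((q+1).succ) (Fin.succ 0) 0 = 1 := by
    have h1 : ((Fin.succ (0 : Fin (q+1))) : ℕ) = 1 := by simp [Fin.val_succ]
    simp only [Tmat, Matrix.of_apply, h1, Fin.val_zero]
    rw [if_neg (by omega)]
    norm_num [ha0]
  rw [e0, e1, t0, t1]
  have h1 : ((Fin.succ (0 : Fin (q+1))) : ℕ) = 1 := by simp [Fin.val_succ]
  rw [h1]
  simp only [Fin.val_zero, pow_zero, pow_one, one_mul, mul_one]
  rw [show Edet a 1 (q+1) = (Tmat a 1 (q+1)).det from rfl,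
      show Edet a (s+1) (q+1) = (Tmat a (s+1) (q+1)).det from rfl]
  ring

include ha0 haneg in
lemma Edet_expand : ∀ (p : ℕ) (s : ℤ),
    Edet a s (p + 1) = ∑ j ∈ range (p + 1), (-1) ^ j * a (s + j) * Edet a 1 (p - j) := by
  intro p
  induction p with
  | zero => intro s; simp [Edet_one, Edet_zero]
  | succ p ih =>
    intro s
    rw [Edet_succ ha0 haneg s (p+1) (by omega), ih (s+1)]
    rw [Finset.sum_range_succ' (fun j => (-1 : R) ^ j * a (s + j) * Edet a 1 (p + 1 - j)) (p+1)]
    have key : ∀ j ∈ range (p+1), (-1:R)^(j+1) * a (s + (↑(j+1) : ℤ)) * Edet a 1 (p+1-(j+1))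
        = -((-1)^j * a (s+1+j) * Edet a 1 (p-j)) := by
      intro j hj
      have h1 : p + 1 - (j+1) = p - j := by omega
      have h2 : s + (↑(j+1) : ℤ) = s + 1 + j := by push_cast; ring
      rw [h1, h2]; ring
    rw [Finset.sum_congr rfl key]
    simp only [Nat.cast_zero, add_zero, pow_zero, one_mul, Nat.sub_zero, Finset.sum_neg_distrib]
    ring


abbrev S (m : ℕ) := MvPolynomial (Fin m) ℚ

lemma cVar_zero (m : ℕ) : cVar m 0 = 1 := by simp [cVar]

lemma cVar_neg (m : ℕ) {t : ℤ} (h : t < 0) : cVar m t = 0 := by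
  rw [cVar, dif_neg (by omega), if_neg (by omega)]

lemma cVar_gt (m : ℕ) {t : ℤ} (h : (m : ℤ) < t) : cVar m t = 0 := by
  have : ¬ (1 ≤ t ∧ t ≤ (m:ℤ)) := by omega
  rw [cVar, dif_neg this, if_neg (by omega)]

lemma sigmaP_neg (m : ℕ) {t : ℤ} (h : t < 0) : sigmaP m t = 0 := by
  rw [sigmaP, if_pos h]

lemma sigmaP_zero (m : ℕ) : sigmaP m 0 = 1 := by
  rw [sigmaP, if_neg (by omega)]
  exact Matrix.det_fin_zero

lemma dumb {p q : ℕ} (h : p = q) (f : ℕ → ℕ → S m) :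
    Matrix.det (Matrix.of fun i j : Fin p => f (i : ℕ) (j : ℕ))
      = Matrix.det (Matrix.of fun i j : Fin q => f (i : ℕ) (j : ℕ)) := by
  subst h; rfl

/-- `sigmaP` at natural `p` as an `Edet`. -/
lemma sigmaP_eq_Edet (m p : ℕ) : sigmaP m (p : ℤ) = Edet (cVar m) 1 p := by
  rw [sigmaP, if_neg (by omega)]
  rw [Edet]
  have h1 : ((p : ℤ)).toNat = p := Int.toNat_natCast p
  have h2 : Matrix.det (Matrix.of fun i j : Fin ((p:ℤ)).toNat => cVar m (1 + (j : ℤ) - (i : ℤ)))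
      = Matrix.det (Matrix.of fun i j : Fin p => cVar m (1 + (j : ℤ) - (i : ℤ))) :=
    dumb h1 (fun i j => cVar m (1 + (j:ℤ) - (i:ℤ)))
  rw [h2]
  congr 1
  ext i j
  simp only [Matrix.of_apply, Tmat]
  rcases Nat.eq_zero_or_pos (i : ℕ) with h | h
  · rw [if_pos h, h]; norm_num
  · rw [if_neg (by omega)]

lemma sigmaP_rec (m p : ℕ) :
    sigmaP m ((p : ℤ) + 1) = ∑ j ∈ range (p + 1),
      (-1) ^ j * cVar m (1 + j) * sigmaP m ((p : ℤ) - j) := by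
  have hc : ((p:ℤ)+1) = ((p+1 : ℕ) : ℤ) := by push_cast; ring
  rw [hc, sigmaP_eq_Edet m (p+1),
    Edet_expand (cVar_zero m) (fun t ht => cVar_neg m ht) p 1]
  apply Finset.sum_congr rfl
  intro j hj
  have hj' : j ≤ p := by simpa using Nat.lt_succ_iff.mp (Finset.mem_range.mp hj)
  have h1 : ((p:ℤ) - j) = ((p - j : ℕ) : ℤ) := by push_cast [hj']; ring
  rw [h1, sigmaP_eq_Edet m (p - j)]

/-- the fundamental identity   ∑_{i=0}^{p} (-1)^i c_i σ_{p-i} = 0  for `p ≥ 1`. -/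
lemma fund_id (m p : ℕ) :
    ∑ i ∈ range (p + 2), (-1) ^ i * cVar m i * sigmaP m ((p : ℤ) + 1 - i) = 0 := by
  rw [Finset.sum_range_succ' (fun i => (-1 : S m) ^ i * cVar m i * sigmaP m ((p:ℤ)+1-i)) (p+1)]
  simp only [pow_zero, Nat.cast_zero, cVar_zero, one_mul, mul_one, sub_zero]
  rw [sigmaP_rec m p]
  have key : ∀ j ∈ range (p+1), (-1:QGAux.S m)^(j+1) * cVar m (j+1 : ℕ) * sigmaP m ((p:ℤ)+1-(↑(j+1)))
      = -((-1)^j * cVar m (1 + (j:ℤ)) * sigmaP m ((p:ℤ) - j)) := by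
    intro j hj
    have h1 : ((p:ℤ) + 1 - (↑(j+1) : ℤ)) = (p : ℤ) - j := by push_cast; ring
    have h2 : ((j+1 : ℕ) : ℤ) = 1 + (j : ℤ) := by push_cast; ring
    rw [h1, h2]
    ring
  rw [Finset.sum_congr rfl key, Finset.sum_neg_distrib]
  ring

/-- flipped:  ∑_{i=0}^{p} (-1)^i σ_i c_{p-i} = 0  for `p ≥ 1`. -/
lemma fund_id' (m p : ℕ) :
    ∑ i ∈ range (p + 2), (-1) ^ i * sigmaP m i * cVar m ((p : ℤ) + 1 - i) = 0 := by
  have := fund_id m p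
  rw [← Finset.sum_range_reflect] at this
  have key : ∀ i ∈ range (p+2),
      (-1:QGAux.S m) ^ (p+2-1-i) * cVar m ((p+2-1-i : ℕ) : ℤ) * sigmaP m ((p:ℤ)+1-((p+2-1-i : ℕ) : ℤ))
      = (-1)^(p+1) * ((-1)^i * sigmaP m i * cVar m ((p:ℤ)+1-i)) := by
    intro i hi
    have hi' : i ≤ p + 1 := by simpa using Nat.lt_succ_iff.mp (Finset.mem_range.mp hi)
    have hn : p+2-1-i = p+1-i := by omega
    have e1 : ((p:ℤ)+1-((p+1-i : ℕ) : ℤ)) = (i : ℤ) := by push_cast [hi']; ring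
    have e2 : ((p+1-i : ℕ) : ℤ) = (p:ℤ)+1-i := by push_cast [hi']; ring
    have e3 : (-1 : QGAux.S m)^(p+1) = (-1)^(p+1-i) * (-1)^i := by
      rw [← pow_add]; congr 1; omega
    have e4 : (-1 : QGAux.S m)^i * (-1)^i = 1 := by
      rw [← pow_add, show i+i = 2*i by ring, pow_mul]; norm_num
    rw [hn, e1, e2, e3]
    linear_combination (-((-1:QGAux.S m)^(p+1-i) * sigmaP m i * cVar m ((p:ℤ)+1-i))) * e4
  rw [Finset.sum_congr rfl key, ← Finset.mul_sum] at this
  have h4 : ((-1 : QGAux.S m)^(p+1))*((-1)^(p+1)) = 1 := by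
    rw [← pow_add, show (p+1)+(p+1) = 2*(p+1) by ring, pow_mul]
    norm_num
  calc ∑ i ∈ range (p + 2), (-1:QGAux.S m) ^ i * sigmaP m i * cVar m ((p : ℤ) + 1 - i)
      = ((-1:QGAux.S m)^(p+1)*(-1)^(p+1)) * ∑ i ∈ range (p + 2), (-1:QGAux.S m) ^ i * sigmaP m i * cVar m ((p : ℤ) + 1 - i) := by
        rw [h4, one_mul]
    _ = (-1:QGAux.S m)^(p+1) * ((-1)^(p+1) * ∑ i ∈ range (p + 2), (-1:QGAux.S m) ^ i * sigmaP m i * cVar m ((p : ℤ) + 1 - i)) := by ring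
    _ = 0 := by rw [this, mul_zero]

/-- Dual Jacobi-Trudi: `det (σ_{1+j-i})_{p×p} = c_p`. -/
lemma dual_JT (m : ℕ) : ∀ p : ℕ, Edet (fun t => sigmaP m t) 1 p = cVar m p := by
  intro p
  induction p using Nat.strong_induction_on with
  | _ p ih =>
    match p with
    | 0 => rw [Edet_zero]; simp [cVar_zero]
    | (p+1) =>
      rw [Edet_expand (sigmaP_zero m) (fun t ht => sigmaP_neg m ht) p 1]
      have key : ∀ j ∈ range (p+1),
          (-1:S m)^j * sigmaP m (1 + j) * Edet (fun t => sigmaP m t) 1 (p - j)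
          = (-1)^j * sigmaP m (1+j) * cVar m ((p : ℤ) - j) := by
        intro j hj
        have hj' : j ≤ p := by simpa using Nat.lt_succ_iff.mp (Finset.mem_range.mp hj)
        rw [ih (p - j) (by omega)]
        congr 1
        congr 1
        push_cast [hj']; ring
      rw [Finset.sum_congr rfl key]
      -- use fund_id' with p
      have h := fund_id' m p
      rw [Finset.sum_range_succ' (fun i => (-1 : S m) ^ i * sigmaP m i * cVar m ((p:ℤ)+1-i)) (p+1)] at h
      simp only [pow_zero, Nat.cast_zero, sigmaP_zero, one_mul, mul_one, sub_zero] at h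
      have h2 : ∀ j ∈ range (p+1),
          (-1:S m)^(j+1) * sigmaP m (j+1 : ℕ) * cVar m ((p:ℤ)+1-(↑(j+1)))
          = -((-1)^j * sigmaP m (1+j) * cVar m ((p:ℤ) - j)) := by
        intro j hj
        have e1 : ((p:ℤ)+1-(↑(j+1) : ℤ)) = (p:ℤ) - j := by push_cast; ring
        have e2 : ((j+1 : ℕ) : ℤ) = 1 + (j : ℤ) := by push_cast; ring
        rw [e1, e2]
        ring
      rw [Finset.sum_congr rfl h2, Finset.sum_neg_distrib] at h
      have hc : ((p:ℤ)+1) = ((p+1 : ℕ) : ℤ) := by push_cast; ring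
      rw [hc] at h
      linear_combination -h


def ww (m : ℕ) : Fin m → ℕ := fun i => (i : ℕ) + 1

variable {m : ℕ}

lemma decomp (x : S m) : ∃ T : Finset ℕ, (x = ∑ d ∈ T, weightedHomogeneousComponent (ww m) d x)
    ∧ ∀ e ∉ T, weightedHomogeneousComponent (ww m) e x = 0 := by
  refine ⟨(weightedHomogeneousComponent_finsupp (w := ww m) x).toFinset, ?_, ?_⟩
  · conv_lhs => rw [← MvPolynomial.sum_weightedHomogeneousComponent (ww m) x]
    rw [finsum_eq_sum _ (weightedHomogeneousComponent_finsupp x)]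
  · intro e he
    by_contra hne
    exact he ((weightedHomogeneousComponent_finsupp (w := ww m) x).mem_toFinset.mpr
      (Function.mem_support.mpr hne))

lemma comp_mul_hom {g : S m} {dg : ℕ} (hg : IsWeightedHomogeneous (ww m) g dg) (r : S m) (e : ℕ) :
    weightedHomogeneousComponent (ww m) (e + dg) (r * g)
      = weightedHomogeneousComponent (ww m) e r * g := by
  obtain ⟨T, hT, hT2⟩ := decomp r
  conv_lhs => rw [hT]
  rw [Finset.sum_mul, map_sum]
  have key : ∀ d ∈ T, weightedHomogeneousComponent (ww m) (e + dg)
      ((weightedHomogeneousComponent (ww m) d r) * g)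
      = if d = e then (weightedHomogeneousComponent (ww m) d r) * g else 0 := by
    intro d _
    have hh : IsWeightedHomogeneous (ww m) ((weightedHomogeneousComponent (ww m) d r) * g) (d + dg) :=
      (weightedHomogeneousComponent_isWeightedHomogeneous (w := ww m) d r).mul hg
    by_cases h : d = e
    · subst h; rw [if_pos rfl]
      exact weightedHomogeneousComponent_eq_self hh
    · rw [if_neg h]
      exact hh.weightedHomogeneousComponent_ne _ (by omega)
  rw [Finset.sum_congr rfl key, Finset.sum_ite_eq' T e (fun d => (weightedHomogeneousComponent (ww m) d r) * g)]
  by_cases he : e ∈ T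
  · rw [if_pos he]
  · rw [if_neg he, hT2 e he, zero_mul]

lemma comp_mul_hom_lt {g : S m} {dg : ℕ} (hg : IsWeightedHomogeneous (ww m) g dg) (r : S m)
    {d : ℕ} (hd : d < dg) :
    weightedHomogeneousComponent (ww m) d (r * g) = 0 := by
  obtain ⟨T, hT, hT2⟩ := decomp r
  conv_lhs => rw [hT]
  rw [Finset.sum_mul, map_sum]
  apply Finset.sum_eq_zero
  intro e _
  have hh : IsWeightedHomogeneous (ww m) ((weightedHomogeneousComponent (ww m) e r) * g) (e + dg) :=
    (weightedHomogeneousComponent_isWeightedHomogeneous (w := ww m) e r).mul hg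
  exact hh.weightedHomogeneousComponent_ne _ (by omega)

/-- components of members of an ideal spanned by homogeneous elements stay in the ideal -/
lemma comp_mem_span {G : Set (S m)} (hG : ∀ g ∈ G, ∃ d, IsWeightedHomogeneous (ww m) g d)
    {x : S m} (hx : x ∈ Ideal.span G) (d : ℕ) :
    weightedHomogeneousComponent (ww m) d x ∈ Ideal.span G := by
  have main : ∀ x ∈ Ideal.span G, ∀ (r : S m) (d : ℕ),
      weightedHomogeneousComponent (ww m) d (r * x) ∈ Ideal.span G := by
    intro x hx
    refine Submodule.span_induction ?_ ?_ ?_ ?_ hx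
    · intro g hg r d
      obtain ⟨dg, hdg⟩ := hG g hg
      rcases lt_or_ge d dg with h | h
      · rw [comp_mul_hom_lt hdg r h]; exact Ideal.zero_mem _
      · obtain ⟨e, rfl⟩ : ∃ e, d = e + dg := ⟨d - dg, by omega⟩
        rw [comp_mul_hom hdg r e]
        exact Ideal.mul_mem_left _ _ (Ideal.subset_span hg)
    · intro r d; rw [mul_zero, map_zero]; exact Ideal.zero_mem _
    · intro a b _ _ ha hb r d
      rw [mul_add, map_add]; exact Ideal.add_mem _ (ha r d) (hb r d)
    · intro s a _ ha r d
      rw [smul_eq_mul, show r * (s * a) = (r * s) * a by ring]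
      exact ha (r * s) d
  simpa using main x hx 1 d

/-! ### non-zero-divisor mod an ideal, weak regularity -/

def NZDmod (J : Ideal (S m)) (a : S m) : Prop := ∀ x, x * a ∈ J → x ∈ J

def WR : Set (S m) → List (S m) → Prop
  | _, [] => True
  | G, a :: l => NZDmod (Ideal.span G) a ∧ WR (insert a G) l

lemma WR_congr {G G' : Set (S m)} (h : G = G') : ∀ l, WR G l → WR G' l := by
  intro l; subst h; exact id

/-- The key swap lemma, using the grading. -/
lemma swap_lemma {G : Set (S m)} (hG : ∀ g ∈ G, ∃ d, IsWeightedHomogeneous (ww m) g d)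
    {a b : S m} {da db : ℕ} (hda : 0 < da) (ha : IsWeightedHomogeneous (ww m) a da)
    (hb : IsWeightedHomogeneous (ww m) b db)
    (H1 : NZDmod (Ideal.span G) a) (H2 : NZDmod (Ideal.span (insert a G)) b) :
    NZDmod (Ideal.span G) b ∧ NZDmod (Ideal.span (insert b G)) a := by
  constructor
  · -- homogeneous case by strong induction on degree
    have hom : ∀ d : ℕ, ∀ x : S m, IsWeightedHomogeneous (ww m) x d →
        x * b ∈ Ideal.span G → x ∈ Ideal.span G := by
      intro d
      induction d using Nat.strong_induction_on with
      | _ d ih =>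
        intro x hx hxb
        have h1 : x ∈ Ideal.span (insert a G) := by
          apply H2
          exact Ideal.span_mono (Set.subset_insert a G) hxb
        rw [Ideal.mem_span_insert] at h1
        obtain ⟨y, z, hz, hxyz⟩ := h1
        -- take degree-d components
        have hcx : weightedHomogeneousComponent (ww m) d x = x :=
          weightedHomogeneousComponent_eq_self hx
        have hcz : weightedHomogeneousComponent (ww m) d z ∈ Ideal.span G :=
          comp_mem_span hG hz d
        rcases lt_or_ge d da with h | h
        · -- then the a-part contributes 0 in degree d
          have : x = weightedHomogeneousComponent (ww m) d z := by
            conv_lhs => rw [← hcx, hxyz]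
            rw [map_add, comp_mul_hom_lt ha y h, zero_add]
          rw [this]; exact hcz
        · obtain ⟨e, rfl⟩ : ∃ e, d = e + da := ⟨d - da, by omega⟩
          set y' := weightedHomogeneousComponent (ww m) e y with hy'
          have hxd : x = y' * a + weightedHomogeneousComponent (ww m) (e + da) z := by
            conv_lhs => rw [← hcx, hxyz]
            rw [map_add, comp_mul_hom ha y e]
          have hyb : y' * b ∈ Ideal.span G := by
            apply H1
            have : y' * b * a = x * b - (weightedHomogeneousComponent (ww m) (e+da) z) * b := by
              rw [hxd]; ring
            rw [this]
            exact Ideal.sub_mem _ hxb (Ideal.mul_mem_right _ _ hcz)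
          have hy'' : y' ∈ Ideal.span G :=
            ih e (by omega) y' (weightedHomogeneousComponent_isWeightedHomogeneous (w := ww m) e y) hyb
          rw [hxd]
          exact Ideal.add_mem _ (Ideal.mul_mem_right _ _ hy'') hcz
    -- general case by decomposition
    intro x hxb
    obtain ⟨T, hT, hT2⟩ := decomp x
    rw [hT]
    apply Ideal.sum_mem
    intro d _
    exact hom d _ (weightedHomogeneousComponent_isWeightedHomogeneous (w := ww m) d x)
      (by rw [← comp_mul_hom hb x d]; exact comp_mem_span hG hxb (d + db))
  · intro x hxa
    rw [Ideal.mem_span_insert] at hxa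
    obtain ⟨y, z, hz, hxyz⟩ := hxa
    have hyb : y ∈ Ideal.span (insert a G) := by
      apply H2
      rw [Ideal.mem_span_insert]
      exact ⟨x, -z, neg_mem hz, by linear_combination -hxyz⟩
    rw [Ideal.mem_span_insert] at hyb
    obtain ⟨u, v, hv, hyuv⟩ := hyb
    have : (x - b * u) * a ∈ Ideal.span G := by
      have : (x - b * u) * a = x * a - b * u * a := by ring
      rw [this]
      have hxa' : x * a = y * b + z := hxyz
      rw [hxa', hyuv]
      have : (u * a + v) * b + z - b * u * a = v * b + z := by ring
      rw [this]
      exact Ideal.add_mem _ (Ideal.mul_mem_right _ _ hv) hz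
    have := H1 _ this
    rw [Ideal.mem_span_insert]
    exact ⟨u, x - b*u, this, by ring⟩

lemma move {a : S m} {da : ℕ} (hda : 0 < da) (ha : IsWeightedHomogeneous (ww m) a da) :
    ∀ (l : List (S m)) (G : Set (S m)), (∀ g ∈ G, ∃ d, IsWeightedHomogeneous (ww m) g d) →
    (∀ x ∈ l, ∃ d, IsWeightedHomogeneous (ww m) x d) →
    WR G (a :: l) → WR G (l ++ [a]) := by
  intro l
  induction l with
  | nil => intro G _ _ h; exact h
  | cons b t ih =>
    intro G hG hl h
    obtain ⟨h1, h2, h3⟩ : NZDmod (Ideal.span G) a ∧ NZDmod (Ideal.span (insert a G)) b ∧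
        WR (insert b (insert a G)) t := ⟨h.1, h.2.1, h.2.2⟩
    obtain ⟨db, hb⟩ := hl b (by simp)
    obtain ⟨s1, s2⟩ := swap_lemma hG hda ha hb h1 h2
    refine ⟨s1, ?_⟩
    apply ih (insert b G)
    · intro g hg
      rcases hg with rfl | hg
      · exact ⟨db, hb⟩
      · exact hG g hg
    · intro x hx; exact hl x (by simp [hx])
    · exact ⟨s2, WR_congr (Set.insert_comm b a G) t h3⟩

lemma WR_append : ∀ (l l' : List (S m)) (G : Set (S m)),
    WR G (l ++ l') ↔ WR G l ∧ WR (G ∪ {x | x ∈ l}) l' := by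
  intro l
  induction l with
  | nil =>
    intro l' G
    have : G ∪ {x | x ∈ ([] : List (S m))} = G := by simp
    rw [this]
    simp [WR]
  | cons a t ih =>
    intro l' G
    show (NZDmod (Ideal.span G) a ∧ WR (insert a G) (t ++ l')) ↔ _
    rw [ih l' (insert a G)]
    have hset : insert a G ∪ {x | x ∈ t} = G ∪ {x | x ∈ a :: t} := by
      ext y; simp [Set.mem_insert_iff, List.mem_cons, or_assoc]; tauto
    rw [hset]
    show _ ↔ (NZDmod (Ideal.span G) a ∧ WR (insert a G) t) ∧ _
    rw [and_assoc]

lemma NZDmod_of_sub {J : Ideal (S m)} {a a' : S m} (h : a - a' ∈ J) (ha : NZDmod J a) :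
    NZDmod J a' := by
  intro x hx
  apply ha
  have : x * a = x * a' + x * (a - a') := by ring
  rw [this]
  exact Ideal.add_mem _ hx (Ideal.mul_mem_left _ _ h)

lemma NZDmod_mul {J : Ideal (S m)} {u v : S m} (hu : NZDmod J u) (hv : NZDmod J v) :
    NZDmod J (u * v) := by
  intro x hx
  rw [show x * (u * v) = (x * u) * v by ring] at hx
  exact hu x (hv _ hx)

lemma NZDmod_one {J : Ideal (S m)} : NZDmod J 1 := fun x hx => by simpa using hx

lemma NZDmod_neg_one_pow {J : Ideal (S m)} {a : S m} (e : ℕ) (h : NZDmod J a) :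
    NZDmod J ((-1) ^ e * a) := by
  intro x hx
  have h1 : ((-1 : S m) ^ e * x) * a ∈ J := by
    rw [show ((-1 : S m)^e * x) * a = x * ((-1)^e * a) by ring]
    exact hx
  have h2 := h _ h1
  have : x = (-1 : S m)^e * ((-1)^e * x) := by
    rw [show (-1 : S m)^e * ((-1)^e * x) = ((-1)^e*(-1)^e) * x by ring,
      ← pow_add, show e + e = 2*e by ring, pow_mul]
    norm_num
  rw [this]
  exact Ideal.mul_mem_left _ _ h2

lemma NZDmod_bot {a : S m} (h : a ≠ 0) : NZDmod (⊥ : Ideal (S m)) a := by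
  intro x hx
  simp only [Ideal.mem_bot] at hx ⊢
  rcases mul_eq_zero.mp hx with h' | h'
  · exact h'
  · exact absurd h' h

lemma nzd_quot {J : Ideal (S m)} {a : S m} (h : NZDmod J a) :
    Ideal.Quotient.mk J a ∈ nonZeroDivisors (S m ⧸ J) := by
  rw [mem_nonZeroDivisors_iff_right]
  intro y hy
  obtain ⟨x, rfl⟩ := Ideal.Quotient.mk_surjective y
  rw [← _root_.map_mul, Ideal.Quotient.eq_zero_iff_mem] at hy
  rw [Ideal.Quotient.eq_zero_iff_mem]
  exact h x hy

lemma transfer {m m' : ℕ} (π : S m →+* S m') (hsurj : Function.Surjective π) (c : S m)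
    (hker : RingHom.ker π = Ideal.span {c}) :
    ∀ (l : List (S m)) (G : Set (S m)), WR (π '' G) (l.map π) → WR (insert c G) l := by
  have key : ∀ G : Set (S m), Ideal.span (insert c G) = Ideal.comap π (Ideal.span (π '' G)) := by
    intro G
    rw [← Ideal.map_span, Ideal.comap_map_of_surjective π hsurj, Ideal.span_insert]
    rw [← RingHom.ker_eq_comap_bot, hker, sup_comm]
  intro l
  induction l with
  | nil => intro G _; trivial
  | cons a t ih =>
    intro G h
    obtain ⟨h1, h2⟩ : NZDmod (Ideal.span (π '' G)) (π a) ∧ WR (insert (π a) (π '' G)) (t.map π) := h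
    constructor
    · intro x hx
      rw [key] at hx ⊢
      rw [Ideal.mem_comap, _root_.map_mul] at hx
      exact Ideal.mem_comap.mpr (h1 _ hx)
    · have h2' : WR (π '' (insert a G)) (t.map π) := WR_congr (Set.image_insert_eq).symm _ h2
      exact WR_congr (Set.insert_comm c a G) t (ih (insert a G) h2')



lemma cVar_hom (m : ℕ) (t : ℤ) : IsWeightedHomogeneous (ww m) (cVar m t) t.toNat := by
  rw [cVar]
  split_ifs with h h0
  · have hX := isWeightedHomogeneous_X ℚ (ww m) (⟨(t-1).toNat, by omega⟩ : Fin m)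
    have : ww m (⟨(t-1).toNat, by omega⟩ : Fin m) = t.toNat := by
      simp only [ww]; omega
    rwa [this] at hX
  · rw [h0]
    exact isWeightedHomogeneous_one ℚ (ww m)
  · exact isWeightedHomogeneous_zero ℚ (ww m) t.toNat

lemma sigmaP_det (m p : ℕ) : sigmaP m (p : ℤ)
    = (Matrix.of fun i j : Fin p => cVar m (1 + (j:ℤ) - (i:ℤ))).det := by
  rw [sigmaP_eq_Edet, Edet]
  congr 1
  ext i j
  simp only [Tmat, Matrix.of_apply]
  rcases Nat.eq_zero_or_pos (i : ℕ) with h | h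
  · rw [if_pos h]
    have : ((i : ℕ) : ℤ) = 0 := by omega
    rw [show (1 : ℤ) + (j:ℕ) - (i:ℕ) = 1 + (j:ℕ) - ((i:ℕ):ℤ) from rfl, this]
    norm_num
  · rw [if_neg (by omega)]

lemma sigmaP_hom (m p : ℕ) : IsWeightedHomogeneous (ww m) (sigmaP m (p : ℤ)) p := by
  classical
  rw [sigmaP_det, Matrix.det_apply]
  apply IsWeightedHomogeneous.sum
  intro τ _
  have prod_part : IsWeightedHomogeneous (ww m)
      (∏ i : Fin p, (Matrix.of fun i j : Fin p => cVar m (1 + (j:ℤ) - (i:ℤ))) (τ i) i) p := by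
    by_cases hneg : ∃ i : Fin p, (1 + (i:ℤ) - ((τ i : ℕ) : ℤ)) < 0
    · obtain ⟨i, hi⟩ := hneg
      have hz : (Matrix.of fun i j : Fin p => cVar m (1 + (j:ℤ) - (i:ℤ))) (τ i) i = 0 := by
        simp only [Matrix.of_apply]
        exact cVar_neg m hi
      have hP : (∏ i : Fin p, (Matrix.of fun i j : Fin p => cVar m (1 + (j:ℤ) - (i:ℤ))) (τ i) i) = 0 :=
        Finset.prod_eq_zero (Finset.mem_univ i) hz
      rw [hP]
      exact isWeightedHomogeneous_zero ℚ (ww m) p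
    · push_neg at hneg
      have hprod := IsWeightedHomogeneous.prod Finset.univ
        (fun i : Fin p => cVar m (1 + (i:ℤ) - ((τ i : ℕ) : ℤ)))
        (fun i : Fin p => ((1:ℤ) + (i:ℤ) - ((τ i : ℕ) : ℤ)).toNat)
        (fun i _ => cVar_hom m _)
      have hsum : ∑ i : Fin p, ((1:ℤ) + (i:ℤ) - ((τ i : ℕ) : ℤ)).toNat = p := by
      -- cast to ℤ
        have hcast : ((∑ i : Fin p, ((1:ℤ) + (i:ℤ) - ((τ i : ℕ) : ℤ)).toNat : ℕ) : ℤ)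
            = ∑ i : Fin p, ((1:ℤ) + (i:ℤ) - ((τ i : ℕ) : ℤ)) := by
          push_cast
          apply Finset.sum_congr rfl
          intro i _
          exact Int.toNat_of_nonneg (hneg i)
        have hsum2 : ∑ i : Fin p, ((1:ℤ) + (i:ℤ) - ((τ i : ℕ) : ℤ))
            = (p : ℤ) := by
          rw [Finset.sum_sub_distrib, Finset.sum_add_distrib]
          have : ∑ i : Fin p, ((τ i : ℕ) : ℤ) = ∑ i : Fin p, ((i : ℕ) : ℤ) :=
            Equiv.sum_comp τ (fun i : Fin p => ((i : ℕ) : ℤ))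
          rw [this]
          simp [Finset.card_univ]
        exact Nat.cast_injective (hcast.trans hsum2)
      simp only [Matrix.of_apply]
      rw [hsum] at hprod
      exact hprod
  rcases Int.units_eq_one_or (Equiv.Perm.sign τ) with h | h <;> rw [h]
  · rw [one_smul]; exact prod_part
  · have : ((-1 : ℤˣ) • (∏ i : Fin p, (Matrix.of fun i j : Fin p => cVar m (1 + (j:ℤ) - (i:ℤ))) (τ i) i))
        = -(∏ i : Fin p, (Matrix.of fun i j : Fin p => cVar m (1 + (j:ℤ) - (i:ℤ))) (τ i) i) := by
      simp
    rw [this]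
    intro d hd
    rw [coeff_neg] at hd
    exact prod_part (by simpa using hd)

/-! ### the projection `c_{m+1} ↦ 0` -/

def pdown (m : ℕ) : S (m+1) →ₐ[ℚ] S m :=
  aeval (fun i : Fin (m+1) => if h : (i:ℕ) < m then X ⟨i, h⟩ else 0)

lemma pdown_cVar (m : ℕ) (t : ℤ) : pdown m (cVar (m+1) t) = cVar m t := by
  rw [cVar, cVar]
  by_cases h1 : 1 ≤ t ∧ t ≤ ((m+1 : ℕ) : ℤ)
  · rw [dif_pos h1]
    rw [pdown, aeval_X]
    by_cases h2 : t ≤ (m : ℤ)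
    · conv_rhs => rw [dif_pos ⟨h1.1, h2⟩]
      split_ifs with hc
      · rfl
      · exfalso
        apply hc
        show (t-1).toNat < m
        omega
    · conv_rhs => rw [dif_neg (show ¬(1 ≤ t ∧ t ≤ (m:ℤ)) by omega), if_neg (by omega)]
      split_ifs with hc
      · exfalso
        have hc' : (t-1).toNat < m := hc
        push_cast at h1
        omega
      · rfl
  · rw [dif_neg h1, dif_neg (by push_cast at h1 ⊢; omega)]
    by_cases h0 : t = 0
    · rw [if_pos h0, if_pos h0, _root_.map_one]
    · rw [if_neg h0, if_neg h0, _root_.map_zero]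

lemma pdown_sigmaP (m : ℕ) (p : ℕ) :
    pdown m (sigmaP (m+1) (p : ℤ)) = sigmaP m (p : ℤ) := by
  rw [sigmaP_det, sigmaP_det]
  rw [show (pdown m) ((Matrix.of fun i j : Fin p => cVar (m+1) (1 + (j:ℤ) - (i:ℤ))).det)
      = ((pdown m).toRingHom) ((Matrix.of fun i j : Fin p => cVar (m+1) (1 + (j:ℤ) - (i:ℤ))).det) from rfl,
    RingHom.map_det]
  congr 1
  apply Matrix.ext
  intro i j
  simp only [RingHom.mapMatrix_apply, Matrix.map_apply, Matrix.of_apply, AlgHom.coe_toRingHom]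
  exact pdown_cVar m _

lemma pdown_surjective (m : ℕ) : Function.Surjective (pdown m) := by
  intro q
  refine ⟨rename (Fin.castSucc) q, ?_⟩
  rw [pdown, aeval_rename]
  have : ((fun i : Fin (m+1) => if h : (i:ℕ) < m then (X ⟨i, h⟩ : S m) else 0) ∘ Fin.castSucc)
      = fun i : Fin m => X i := by
    funext i
    simp only [Function.comp_apply, Fin.coe_castSucc]
    rw [dif_pos i.isLt]
  rw [this]
  exact aeval_X_left_apply q

lemma pdown_ker (m : ℕ) :
    RingHom.ker (pdown m).toRingHom = Ideal.span {(X ⟨m, by omega⟩ : S (m+1))} := by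
  apply le_antisymm
  · intro x hx
    rw [RingHom.mem_ker] at hx
    have key : (Ideal.Quotient.mkₐ ℚ (Ideal.span {(X ⟨m, by omega⟩ : S (m+1))}))
        = ((Ideal.Quotient.mkₐ ℚ (Ideal.span {(X ⟨m, by omega⟩ : S (m+1))})).comp
            ((rename (Fin.castSucc)).comp (pdown m))) := by
      apply MvPolynomial.algHom_ext
      intro i
      simp only [AlgHom.comp_apply, Ideal.Quotient.mkₐ_eq_mk]
      rw [pdown, aeval_X]
      by_cases h : (i : ℕ) < m
      · rw [dif_pos h, rename_X]
        rfl
      · rw [dif_neg h, _root_.map_zero, _root_.map_zero, Ideal.Quotient.eq_zero_iff_mem]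
        apply Ideal.subset_span
        have hi : i = ⟨m, by omega⟩ := by
          ext
          change (i:ℕ) = m
          have := i.isLt
          omega
        rw [hi]
        exact Set.mem_singleton _
    have := congrArg (fun f => f x) key
    simp only [AlgHom.comp_apply, Ideal.Quotient.mkₐ_eq_mk] at this
    rw [show (pdown m) x = (pdown m).toRingHom x from rfl, hx, _root_.map_zero, _root_.map_zero] at this
    rwa [← Ideal.Quotient.eq_zero_iff_mem]
  · rw [Ideal.span_le]
    intro y hy
    rw [Set.mem_singleton_iff] at hy
    subst hy
    rw [SetLike.mem_coe, RingHom.mem_ker]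
    show (pdown m) (X ⟨m, by omega⟩) = 0
    rw [pdown, aeval_X, dif_neg (by simp)]

/-! ### lists of consecutive sigmas -/

def sigL (m k r : ℕ) : List (S m) := (List.range r).map (fun j => sigmaP m ((k+1+j : ℕ) : ℤ))

lemma sigL_map_pdown (m k r : ℕ) :
    (sigL (m+1) k r).map (pdown m) = sigL m k r := by
  rw [sigL, sigL, List.map_map]
  apply List.map_congr_left
  intro j _
  exact pdown_sigmaP m _

lemma sigL_homog (m k r : ℕ) : ∀ x ∈ sigL m k r, ∃ d, IsWeightedHomogeneous (ww m) x d := by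
  intro x hx
  rw [sigL, List.mem_map] at hx
  obtain ⟨j, _, rfl⟩ := hx
  exact ⟨k+1+j, sigmaP_hom m _⟩

lemma sigL_succ (m k r : ℕ) :
    sigL m k (r+1) = sigL m k r ++ [sigmaP m ((k+1+r : ℕ) : ℤ)] := by
  rw [sigL, List.range_succ, List.map_append, List.map_singleton, sigL]

lemma mem_sigL_set (m k r : ℕ) {p : ℕ} (h1 : k+1 ≤ p) (h2 : p ≤ k + r) :
    sigmaP m (p : ℤ) ∈ {x | x ∈ sigL m k r} := by
  rw [Set.mem_setOf_eq, sigL, List.mem_map]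
  exact ⟨p - (k+1), by rw [List.mem_range]; omega, by congr 1; push_cast; omega⟩

/-! ### duality -/

def Ikm (m k : ℕ) : Ideal (S k) := Ideal.span {x | x ∈ sigL k m (k-1)}

def phi (m k : ℕ) : S m →ₐ[ℚ] (S k ⧸ Ikm m k) :=
  aeval (fun i : Fin m => Ideal.Quotient.mk _ (sigmaP k (((i:ℕ)+1 : ℕ) : ℤ)))

lemma cVar_X (m : ℕ) (i : Fin m) : cVar m (((i:ℕ)+1 : ℕ) : ℤ) = X i := by
  rw [cVar, dif_pos (by constructor <;> [omega; (push_cast; omega)])]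
  congr 1
  ext
  simp only []
  push_cast
  omega

lemma phi_cVar (m k : ℕ) (hk : 1 ≤ k) (t : ℤ) (ht : t ≤ (m:ℤ)+k-1) :
    phi m k (cVar m t) = Ideal.Quotient.mk _ (sigmaP k t) := by
  rw [cVar]
  by_cases h1 : 1 ≤ t ∧ t ≤ (m : ℤ)
  · rw [dif_pos h1, phi, aeval_X]
    congr 2
    push_cast
    omega
  · rw [dif_neg h1]
    by_cases h0 : t = 0
    · rw [if_pos h0, h0, sigmaP_zero, _root_.map_one, _root_.map_one]
    · rw [if_neg h0, _root_.map_zero]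
      rcases lt_or_ge t 0 with hneg | hpos
      · rw [sigmaP_neg k hneg, _root_.map_zero]
      · -- m < t ≤ m+k-1 : σ'_t is a generator of Ikm
        have htm : (m : ℤ) < t := by omega
        obtain ⟨p, rfl⟩ : ∃ p : ℕ, (p : ℤ) = t := ⟨t.toNat, by omega⟩
        rw [eq_comm, Ideal.Quotient.eq_zero_iff_mem]
        apply Ideal.subset_span
        exact mem_sigL_set k m (k-1) (by omega) (by omega)

lemma Toeplitz_det (a : ℤ → S k) (p : ℕ) :
    Edet a 1 p = (Matrix.of fun i j : Fin p => a (1 + (j:ℤ) - (i:ℤ))).det := by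
  rw [Edet]
  congr 1
  ext i j
  simp only [Tmat, Matrix.of_apply]
  rcases Nat.eq_zero_or_pos (i : ℕ) with h | h
  · rw [if_pos h]
    have : ((i : ℕ) : ℤ) = 0 := by omega
    rw [show (1 : ℤ) + (j:ℕ) - (i:ℕ) = 1 + (j:ℕ) - ((i:ℕ):ℤ) from rfl, this]
    norm_num
  · rw [if_neg (by omega)]

lemma phi_sigmaP (m k : ℕ) (hm : 1 ≤ m) (hk : 1 ≤ k) (p : ℕ) (hp : p ≤ m+k-1) :
    phi m k (sigmaP m (p : ℤ)) = Ideal.Quotient.mk _ (cVar k p) := by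
  rw [sigmaP_det]
  rw [show (phi m k) ((Matrix.of fun i j : Fin p => cVar m (1 + (j:ℤ) - (i:ℤ))).det)
      = ((phi m k).toRingHom) ((Matrix.of fun i j : Fin p => cVar m (1 + (j:ℤ) - (i:ℤ))).det) from rfl,
    RingHom.map_det]
  have hmat : ((phi m k).toRingHom).mapMatrix (Matrix.of fun i j : Fin p => cVar m (1 + (j:ℤ) - (i:ℤ)))
      = (Ideal.Quotient.mk (Ikm m k)).mapMatrix (Matrix.of fun i j : Fin p => sigmaP k (1 + (j:ℤ) - (i:ℤ))) := by
    apply Matrix.ext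
    intro i j
    simp only [RingHom.mapMatrix_apply, Matrix.map_apply, Matrix.of_apply, AlgHom.coe_toRingHom]
    apply phi_cVar m k hk
    have : (j : ℤ) ≤ (p : ℤ) - 1 := by
      have := j.isLt; omega
    omega
  rw [hmat, ← RingHom.map_det]
  congr 1
  rw [← Toeplitz_det (fun t => sigmaP k t) p]
  exact dual_JT k p

lemma phi_kills (m k : ℕ) (hm : 1 ≤ m) (hk : 1 ≤ k) :
    ∀ a ∈ Ikm k m, phi m k a = 0 := by
  intro a ha
  have hle : Ideal.span {x | x ∈ sigL m k (m-1)} ≤ RingHom.ker (phi m k).toRingHom := by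
    rw [Ideal.span_le]
    intro y hy
    rw [Set.mem_setOf_eq, sigL, List.mem_map] at hy
    obtain ⟨j, hj, rfl⟩ := hy
    rw [List.mem_range] at hj
    rw [SetLike.mem_coe, RingHom.mem_ker]
    show phi m k (sigmaP m ((k+1+j : ℕ) : ℤ)) = 0
    rw [phi_sigmaP m k hm hk _ (by omega), Ideal.Quotient.eq_zero_iff_mem]
    rw [cVar_gt k (by push_cast; omega)]
    exact Ideal.zero_mem _
  exact hle ha

def phibar (m k : ℕ) (hm : 1 ≤ m) (hk : 1 ≤ k) : (S m ⧸ Ikm k m) →ₐ[ℚ] (S k ⧸ Ikm m k) :=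
  Ideal.Quotient.liftₐ (Ikm k m) (phi m k) (phi_kills m k hm hk)

lemma phibar_mk (m k : ℕ) (hm : 1 ≤ m) (hk : 1 ≤ k) (x : S m) :
    phibar m k hm hk (Ideal.Quotient.mk _ x) = phi m k x := by
  rw [phibar, Ideal.Quotient.liftₐ_apply]
  rfl

lemma psi_phi (m k : ℕ) (hm : 1 ≤ m) (hk : 1 ≤ k) (y : S m ⧸ Ikm k m) :
    phibar k m hk hm (phibar m k hm hk y) = y := by
  obtain ⟨x, rfl⟩ := Ideal.Quotient.mk_surjective y
  have key : ((phibar k m hk hm).comp (phibar m k hm hk)).comp (Ideal.Quotient.mkₐ ℚ (Ikm k m))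
      = (AlgHom.id ℚ _).comp (Ideal.Quotient.mkₐ ℚ (Ikm k m)) := by
    apply MvPolynomial.algHom_ext
    intro i
    simp only [AlgHom.comp_apply, Ideal.Quotient.mkₐ_eq_mk, AlgHom.id_apply]
    rw [phibar_mk m k hm hk, phi, aeval_X, phibar_mk k m hk hm]
    rw [phi_sigmaP k m hk hm ((i:ℕ)+1) (by have := i.isLt; omega)]
    rw [cVar_X]
  have := congrArg (fun f => f x) key
  simpa using this

lemma NZD_transport {m k : ℕ} {I : Ideal (S m)} {J : Ideal (S k)}
    (f : (S m ⧸ I) →ₐ[ℚ] (S k ⧸ J)) (g : (S k ⧸ J) →ₐ[ℚ] (S m ⧸ I))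
    (hgf : ∀ y, g (f y) = y) {u : S m} {v : S k}
    (hfu : f (Ideal.Quotient.mk I u) = Ideal.Quotient.mk J v)
    (hv : NZDmod J v) : NZDmod I u := by
  intro x hx
  have h1 : (Ideal.Quotient.mk I x) * (Ideal.Quotient.mk I u) = 0 := by
    rw [← _root_.map_mul, Ideal.Quotient.eq_zero_iff_mem]; exact hx
  have h2 : f (Ideal.Quotient.mk I x) * Ideal.Quotient.mk J v = 0 := by
    rw [← hfu, ← _root_.map_mul, h1, map_zero]
  obtain ⟨x', hx'⟩ := Ideal.Quotient.mk_surjective (f (Ideal.Quotient.mk I x))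
  rw [← hx', ← _root_.map_mul, Ideal.Quotient.eq_zero_iff_mem] at h2
  have h3 : x' ∈ J := hv x' h2
  have h4 : f (Ideal.Quotient.mk I x) = 0 := by
    rw [← hx', Ideal.Quotient.eq_zero_iff_mem]; exact h3
  have h5 : Ideal.Quotient.mk I x = 0 := by
    rw [← hgf (Ideal.Quotient.mk I x), h4, map_zero]
  rwa [Ideal.Quotient.eq_zero_iff_mem] at h5

/-! ### the induction pipeline -/

lemma pipeline (m' k : ℕ) (IH : WR (∅ : Set (S m')) (sigL m' k m')) :
    WR (∅ : Set (S (m'+1))) (sigL (m'+1) k m' ++ [(X ⟨m', by omega⟩ : S (m'+1))]) := by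
  have t1 : WR (insert (X ⟨m', by omega⟩ : S (m'+1)) (∅ : Set (S (m'+1)))) (sigL (m'+1) k m') := by
    apply transfer ((pdown m').toRingHom) (pdown_surjective m') _ (pdown_ker m')
    have himg : (⇑(pdown m').toRingHom) '' (∅ : Set (S (m'+1))) = (∅ : Set (S m')) :=
      Set.image_empty _
    have hmap : (sigL (m'+1) k m').map (⇑(pdown m').toRingHom) = sigL m' k m' := by
      rw [show ⇑(pdown m').toRingHom = ⇑(pdown m') from rfl, sigL_map_pdown]
    rw [himg, hmap]
    exact IH
  have t2 : WR (∅ : Set (S (m'+1)))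
      ((X ⟨m', by omega⟩ : S (m'+1)) :: sigL (m'+1) k m') := by
    refine ⟨?_, t1⟩
    rw [Ideal.span_empty]
    exact NZDmod_bot (X_ne_zero _)
  have hX : IsWeightedHomogeneous (ww (m'+1)) (X ⟨m', by omega⟩ : S (m'+1)) (m'+1) :=
    isWeightedHomogeneous_X ℚ (ww (m'+1)) ⟨m', by omega⟩
  exact move (by omega : 0 < m'+1) hX _ _ (by simp) (sigL_homog _ _ _) t2

lemma pipeline_nzd (m' k : ℕ) (IH : WR (∅ : Set (S m')) (sigL m' k m')) :
    WR (∅ : Set (S (m'+1))) (sigL (m'+1) k m') ∧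
    NZDmod (Ideal.span {x | x ∈ sigL (m'+1) k m'}) (X ⟨m', by omega⟩ : S (m'+1)) := by
  obtain ⟨h1, h2⟩ := (WR_append _ _ _).mp (pipeline m' k IH)
  refine ⟨h1, ?_⟩
  have := h2.1
  rwa [Set.empty_union] at this

/-- Main induction: `σ_{k+1}, …, σ_{k+m}` is a weakly regular sequence in `ℚ[c_1,…,c_m]`. -/
theorem Cmain : ∀ (N m k : ℕ), m + k ≤ N → WR (∅ : Set (S m)) (sigL m k m) := by
  intro N
  induction N with
  | zero =>
    intro m k h
    have hm : m = 0 := by omega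
    subst hm
    rw [sigL]
    simp only [List.range_zero, List.map_nil]
    trivial
  | succ N ih =>
    intro m k h
    rcases Nat.eq_zero_or_pos m with rfl | hm
    · rw [sigL]
      simp only [List.range_zero, List.map_nil]
      trivial
    obtain ⟨m', rfl⟩ : ∃ m', m = m'+1 := ⟨m-1, by omega⟩
    have IH1 := ih m' k (by omega)
    obtain ⟨WRl, hcmX⟩ := pipeline_nzd m' k IH1
    have hsk : NZDmod (Ideal.span {x | x ∈ sigL (m'+1) k m'}) (sigmaP (m'+1) (k : ℤ)) := by
      rcases Nat.eq_zero_or_pos k with rfl | hk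
      · rw [show ((0:ℕ):ℤ) = 0 from rfl, sigmaP_zero]
        exact NZDmod_one
      obtain ⟨k', rfl⟩ : ∃ k', k = k'+1 := ⟨k-1, by omega⟩
      have IH2 := ih k' (m'+1) (by omega)
      obtain ⟨_, hckX⟩ := pipeline_nzd k' (m'+1) IH2
      have hI1 : Ikm (k'+1) (m'+1) = Ideal.span {x | x ∈ sigL (m'+1) (k'+1) m'} := by
        rw [Ikm, Nat.add_sub_cancel]
      have hI2 : Ikm (m'+1) (k'+1) = Ideal.span {x | x ∈ sigL (k'+1) (m'+1) k'} := by
        rw [Ikm, Nat.add_sub_cancel]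
      have hm1 : (1:ℕ) ≤ m'+1 := by omega
      have hk1 : (1:ℕ) ≤ k'+1 := by omega
      rw [← hI1]
      apply NZD_transport (phibar (m'+1) (k'+1) hm1 hk1) (phibar (k'+1) (m'+1) hk1 hm1)
        (psi_phi (m'+1) (k'+1) hm1 hk1)
        (v := cVar (k'+1) ((k'+1 : ℕ) : ℤ))
      · rw [phibar_mk]
        exact phi_sigmaP (m'+1) (k'+1) hm1 hk1 (k'+1) (by omega)
      · have hXc : cVar (k'+1) ((k'+1 : ℕ) : ℤ) = (X ⟨k', by omega⟩ : S (k'+1)) :=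
          cVar_X (k'+1) ⟨k', by omega⟩
        rw [hXc, hI2]
        exact hckX
    have hcong : sigmaP (m'+1) ((m'+1+k : ℕ) : ℤ)
        - (-1)^(m') * (cVar (m'+1) ((m'+1 : ℕ) : ℤ) * sigmaP (m'+1) (k : ℤ))
        ∈ Ideal.span {x | x ∈ sigL (m'+1) k m'} := by
      have hrec := sigmaP_rec (m'+1) (m'+k)
      have hcast : ((m'+1+k : ℕ) : ℤ) = ((m'+k : ℕ) : ℤ) + 1 := by push_cast; ring
      rw [hcast, hrec]
      have hsub : Finset.range (m'+1) ⊆ Finset.range (m'+k+1) :=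
        Finset.range_subset_range.mpr (by omega)
      have hzero : ∀ j ∈ Finset.range (m'+k+1), j ∉ Finset.range (m'+1) →
          (-1:S (m'+1))^j * cVar (m'+1) (1+(j:ℤ)) * sigmaP (m'+1) (((m'+k : ℕ):ℤ) - j) = 0 := by
        intro j hj hnj
        rw [Finset.mem_range] at hj
        rw [Finset.mem_range, not_lt] at hnj
        rw [cVar_gt (m'+1) (by push_cast; omega)]
        ring
      rw [← Finset.sum_subset hsub hzero, Finset.sum_range_succ]
      have hterm : (-1:S (m'+1))^m' * cVar (m'+1) (1+(m':ℤ)) * sigmaP (m'+1) (((m'+k : ℕ):ℤ) - m')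
          = (-1)^(m') * (cVar (m'+1) ((m'+1 : ℕ) : ℤ) * sigmaP (m'+1) (k : ℤ)) := by
        rw [show (1+(m':ℤ)) = ((m'+1 : ℕ) : ℤ) by push_cast; ring,
          show (((m'+k : ℕ):ℤ) - m') = (k : ℤ) by push_cast; ring]
        ring
      rw [hterm, add_sub_cancel_right]
      apply Ideal.sum_mem
      intro j hj
      rw [Finset.mem_range] at hj
      have hjle : j ≤ m' + k := by omega
      have hargs : (((m'+k : ℕ):ℤ) - j) = ((m'+k-j : ℕ) : ℤ) := by push_cast [hjle]; ring
      rw [hargs]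
      exact Ideal.mul_mem_left _ _ (Ideal.subset_span
        (mem_sigL_set (m'+1) k m' (by omega) (by omega)))
    have hnzd : NZDmod (Ideal.span {x | x ∈ sigL (m'+1) k m'})
        (sigmaP (m'+1) ((m'+1+k : ℕ) : ℤ)) := by
      apply NZDmod_of_sub
        (a := (-1)^(m') * (cVar (m'+1) ((m'+1 : ℕ) : ℤ) * sigmaP (m'+1) (k : ℤ)))
      · have hneg := neg_mem hcong
        rwa [neg_sub] at hneg
      · apply NZDmod_neg_one_pow
        apply NZDmod_mul ?_ hsk
        have hXc : cVar (m'+1) ((m'+1 : ℕ) : ℤ) = (X ⟨m', by omega⟩ : S (m'+1)) :=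
          cVar_X (m'+1) ⟨m', by omega⟩
        rw [hXc]
        exact hcmX
    rw [sigL_succ]
    refine (WR_append _ _ _).mpr ⟨WRl, ?_, trivial⟩
    rw [Set.empty_union]
    have hidx : ((k+1+m' : ℕ) : ℤ) = ((m'+1+k : ℕ) : ℤ) := by push_cast; ring
    rw [hidx]
    exact hnzd

end QGAux

/-- `σ_n` (with `n = m + k`) is a non-zero divisor in `S/⟨σ_{k+1}, …, σ_{n-1}⟩`. -/
theorem sigma_n_nonZeroDivisor (m k : ℕ) (hm : 0 < m) (hk : 0 < k) :
    Ideal.Quotient.mk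
        (Ideal.span ((fun p : ℤ => sigmaP m p) '' Set.Icc ((k : ℤ) + 1) ((m : ℤ) + k - 1)))
        (sigmaP m ((m : ℤ) + k)) ∈
      nonZeroDivisors (MvPolynomial (Fin m) ℚ ⧸
        Ideal.span ((fun p : ℤ => sigmaP m p) '' Set.Icc ((k : ℤ) + 1) ((m : ℤ) + k - 1))) := by
  obtain ⟨m', rfl⟩ : ∃ m', m = m'+1 := ⟨m-1, by omega⟩
  have C := QGAux.Cmain (m'+1+k) (m'+1) k le_rfl
  rw [QGAux.sigL_succ] at C
  obtain ⟨_, hlast⟩ := (QGAux.WR_append _ _ _).mp C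
  have hn : QGAux.NZDmod (Ideal.span {x | x ∈ QGAux.sigL (m'+1) k m'})
      (sigmaP (m'+1) ((k+1+m' : ℕ) : ℤ)) := by
    have := hlast.1
    rwa [Set.empty_union] at this
  have hset : {x | x ∈ QGAux.sigL (m'+1) k m'}
      = (fun p : ℤ => sigmaP (m'+1) p) '' Set.Icc (((k:ℕ) : ℤ) + 1) (((m'+1 : ℕ) : ℤ) + (k:ℕ) - 1) := by
    ext y
    simp only [Set.mem_setOf_eq, QGAux.sigL, List.mem_map, List.mem_range, Set.mem_image,
      Set.mem_Icc]
    constructor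
    · rintro ⟨j, hj, rfl⟩
      exact ⟨((k+1+j : ℕ) : ℤ), ⟨by push_cast; omega, by push_cast; omega⟩, rfl⟩
    · rintro ⟨p, ⟨hp1, hp2⟩, rfl⟩
      refine ⟨(p - (k+1)).toNat, by omega, ?_⟩
      congr 1
      push_cast
      omega
  rw [hset] at hn
  rw [show ((k+1+m' : ℕ) : ℤ) = (((m'+1 : ℕ)) : ℤ) + (k:ℕ) from by push_cast; ring] at hn
  exact QGAux.nzd_quot hn
end
end

section
/- In QH_α, the special case of the quantum Pieri formula for multiplication by c_m holds: for every partition λ ⊆ m×k, c_m · σ_λ = (α q)^{(m + |λ| − |λ↑1|)/n} · σ_{λ↑1}, where λ↑1 is the Seidel shift of λ. In particular the exponent (m + |λ| − |λ↑1|)/n is a nonnegative integer (equal to 0 if λ₁ < k and 1 if λ₁ = k). -/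
lemma cVar_zero (m : ℕ) : cVar m 0 = 1 := by simp [cVar]

lemma cVar_neg (m : ℕ) {i : ℤ} (h : i < 0) : cVar m i = 0 := by
  simp only [cVar]; rw [dif_neg (by omega), if_neg (by omega)]

lemma cVar_gt (m : ℕ) {i : ℤ} (h : (m : ℤ) < i) : cVar m i = 0 := by
  simp only [cVar]; rw [dif_neg (by omega), if_neg (by omega)]

lemma sigmaP_neg (m : ℕ) {p : ℤ} (h : p < 0) : sigmaP m p = 0 := by
  simp [sigmaP, h]

lemma sigmaP_natCast (m p : ℕ) :
    sigmaP m (p : ℤ) = Matrix.det (Matrix.of fun i j : Fin p => cVar m (1 + (j : ℤ) - (i : ℤ))) := by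
  simp only [sigmaP, Int.toNat_natCast]
  rw [if_neg (by omega)]

lemma det_minor (m p : ℕ) (j₀ : Fin (p+1)) :
    Matrix.det ((Matrix.of fun i j : Fin (p+1) => cVar m (1 + (j : ℤ) - (i : ℤ))).submatrix
      Fin.succ j₀.succAbove) = sigmaP m ((p : ℤ) - (j₀ : ℕ)) := by
  induction p with
  | zero =>
      have h0 : (j₀ : ℕ) = 0 := by omega
      rw [h0]
      rw [show ((0:ℕ):ℤ) - ((0:ℕ):ℤ) = ((0:ℕ):ℤ) by norm_num, sigmaP_natCast]
      simp [Matrix.det_fin_zero]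
  | succ p ih =>
      induction j₀ using Fin.cases with
      | zero =>
          rw [show ((p+1:ℕ):ℤ) - ((0 : Fin (p+2)) : ℕ) = ((p+1:ℕ):ℤ) by simp, sigmaP_natCast]
          congr 1
          ext i j
          simp only [Matrix.submatrix_apply, Fin.succAbove_zero, Matrix.of_apply, Fin.val_succ]
          congr 1
          push_cast
          ring
      | succ j' =>
          rw [Matrix.det_succ_column_zero]
          rw [Finset.sum_eq_single 0]
          · have h00 : ((Matrix.of fun i j : Fin (p+2) => cVar m (1 + (j : ℤ) - (i : ℤ))).submatrix
                Fin.succ (j'.succ).succAbove) 0 0 = 1 := by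
              simp only [Matrix.submatrix_apply, Matrix.of_apply, Fin.succ_succAbove_zero]
              simpa using cVar_zero m
            rw [h00]
            have hsub : ((Matrix.of fun i j : Fin (p+2) => cVar m (1 + (j : ℤ) - (i : ℤ))).submatrix
                Fin.succ (j'.succ).succAbove).submatrix (Fin.succAbove 0) Fin.succ
                = (Matrix.of fun i j : Fin (p+1) => cVar m (1 + (j : ℤ) - (i : ℤ))).submatrix
                  Fin.succ j'.succAbove := by
              ext i j
              simp only [Matrix.submatrix_apply, Matrix.of_apply, Fin.succAbove_zero,
                Fin.succ_succAbove_succ, Fin.val_succ]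
              congr 1
              push_cast
              ring
            rw [hsub, ih j']
            have : ((p+1:ℕ):ℤ) - ((j'.succ : Fin (p+2)) : ℕ) = (p:ℤ) - (j' : ℕ) := by
              push_cast [Fin.val_succ]; ring
            rw [this]
            simp
          · intro i _ hi
            have : ((Matrix.of fun i j : Fin (p+2) => cVar m (1 + (j : ℤ) - (i : ℤ))).submatrix
                Fin.succ (j'.succ).succAbove) i 0 = 0 := by
              simp only [Matrix.submatrix_apply, Matrix.of_apply, Fin.succ_succAbove_zero]
              apply cVar_neg
              have : 0 < (i : ℕ) := by
                rcases Nat.eq_zero_or_pos (i : ℕ) with h | h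
                · exact absurd (Fin.ext h) hi
                · exact h
              simp only [Fin.val_succ, Fin.val_zero]
              omega
            rw [this]
            ring
          · intro h
            exact absurd (Finset.mem_univ _) h

lemma sigmaP_rec (m p : ℕ) :
    sigmaP m ((p:ℤ) + 1) = ∑ j : Fin (p+1),
      (-1 : MvPolynomial (Fin m) ℚ) ^ (j:ℕ) * cVar m (1 + (j:ℕ)) * sigmaP m ((p:ℤ) - (j:ℕ)) := by
  rw [show ((p:ℤ) + 1) = ((p+1:ℕ):ℤ) by push_cast; ring, sigmaP_natCast,
    Matrix.det_succ_row_zero]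
  refine Finset.sum_congr rfl fun j _ => ?_
  rw [det_minor]
  simp only [Matrix.of_apply, Fin.val_zero]
  norm_num

lemma sigmaP_rec' (m : ℕ) (p : ℤ) (hp : 1 ≤ p) :
    sigmaP m p = ∑ t ∈ Finset.range m,
      (-1 : MvPolynomial (Fin m) ℚ) ^ t * cVar m (1 + (t:ℕ)) * sigmaP m (p - 1 - t) := by
  obtain ⟨q, rfl⟩ : ∃ q : ℕ, p = (q:ℤ) + 1 := ⟨(p-1).toNat, by omega⟩
  rw [sigmaP_rec]
  rw [Fin.sum_univ_eq_sum_range (fun j =>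
    (-1 : MvPolynomial (Fin m) ℚ) ^ j * cVar m (1 + (j:ℕ)) * sigmaP m ((q:ℤ) - j))]
  have key : ∀ t, (-1 : MvPolynomial (Fin m) ℚ) ^ t * cVar m (1 + (t:ℕ)) * sigmaP m ((q:ℤ) - t)
      = if t < q + 1 ∧ t < m then (-1) ^ t * cVar m (1 + (t:ℕ)) * sigmaP m ((q:ℤ) - t) else 0 := by
    intro t
    split_ifs with h
    · rfl
    · rcases not_and_or.mp h with h | h
      · rw [sigmaP_neg m (by omega : (q:ℤ) - t < 0), mul_zero]
      · rw [cVar_gt m (by omega : (m:ℤ) < 1 + (t:ℕ)), mul_zero, zero_mul]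
  calc ∑ t ∈ Finset.range (q+1), (-1 : MvPolynomial (Fin m) ℚ) ^ t * cVar m (1 + (t:ℕ)) * sigmaP m ((q:ℤ) - t)
      = ∑ t ∈ Finset.range (max (q+1) m), (-1 : MvPolynomial (Fin m) ℚ) ^ t * cVar m (1 + (t:ℕ)) * sigmaP m ((q:ℤ) - t) := by
        apply Finset.sum_subset (Finset.range_subset_range.mpr (le_max_left _ _))
        intro t _ ht
        rw [key t, if_neg (by simp at ht ⊢; omega)]
    _ = ∑ t ∈ Finset.range m, (-1 : MvPolynomial (Fin m) ℚ) ^ t * cVar m (1 + (t:ℕ)) * sigmaP m ((q:ℤ) - t) := by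
        symm
        apply Finset.sum_subset (Finset.range_subset_range.mpr (le_max_right _ _))
        intro t _ ht
        rw [key t, if_neg (by simp at ht ⊢; omega)]
    _ = ∑ t ∈ Finset.range m, (-1 : MvPolynomial (Fin m) ℚ) ^ t * cVar m (1 + (t:ℕ)) * sigmaP m ((q:ℤ) + 1 - 1 - t) := by
        refine Finset.sum_congr rfl fun t _ => ?_
        norm_num

lemma cm_mul_sigmaL {m : ℕ} (hm : 0 < m) (lam : Fin m → ℕ) :
    cVar m (m : ℤ) * sigmaL m lam = sigmaL m (fun i => lam i + 1) := by
  obtain ⟨m', rfl⟩ : ∃ m', m = m' + 1 := ⟨m - 1, by omega⟩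
  set S := MvPolynomial (Fin (m'+1)) ℚ
  set A : Matrix (Fin (m'+1)) (Fin (m'+1)) S :=
    Matrix.of fun i j : Fin (m'+1) => sigmaP (m'+1) ((lam i : ℤ) + (j : ℤ) - (i : ℤ)) with hA
  set P : Matrix (Fin (m'+1)) (Fin (m'+1)) S := A.submatrix id (finRotate (m'+1)) with hP
  set d : Fin (m'+1) → S := fun j =>
    (-1) ^ (m' - ((finRotate (m'+1) j : Fin (m'+1)) : ℕ)) *
      cVar (m'+1) (((m'+1 : ℕ) : ℤ) - ((finRotate (m'+1) j : Fin (m'+1)) : ℕ)) with hd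
  -- the shifted matrix is P with its last column updated
  have hB : (Matrix.of fun i j : Fin (m'+1) =>
        sigmaP (m'+1) (((lam i + 1 : ℕ) : ℤ) + (j : ℤ) - (i : ℤ)))
      = P.updateCol (Fin.last m') (fun k => ∑ j, d j • P k j) := by
    refine Matrix.ext fun i j => ?_
    rcases eq_or_ne j (Fin.last m') with rfl | hj
    · rw [Matrix.updateCol_apply, if_pos rfl]
      have hrec := sigmaP_rec' (m'+1)
        (((lam i + 1 : ℕ) : ℤ) + (Fin.last m' : ℕ) - (i : ℕ))
        (by simp only [Fin.val_last]; push_cast; omega)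
      rw [Matrix.of_apply, hrec]
      have hre : ∑ j, d j • P i j
          = ∑ c : Fin (m'+1), (-1:S) ^ (m' - (c:ℕ)) * cVar (m'+1) (((m'+1:ℕ):ℤ) - (c:ℕ))
            * sigmaP (m'+1) ((lam i : ℤ) + (c:ℕ) - i) := by
        refine Fintype.sum_equiv (finRotate (m'+1)) _ _ ?_
        intro x
        simp only [hd, hP, Matrix.submatrix_apply, id_eq, hA, Matrix.of_apply, smul_eq_mul]
      rw [hre]
      rw [Fin.sum_univ_eq_sum_range (fun c =>
        (-1:S) ^ (m' - c) * cVar (m'+1) (((m'+1:ℕ):ℤ) - c)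
          * sigmaP (m'+1) ((lam i : ℤ) + c - i))]
      rw [← Finset.sum_range_reflect (fun c =>
        (-1:S) ^ (m' - c) * cVar (m'+1) (((m'+1:ℕ):ℤ) - c)
          * sigmaP (m'+1) ((lam i : ℤ) + c - i)) (m'+1)]
      refine Finset.sum_congr rfl fun t ht => ?_
      rw [Finset.mem_range] at ht
      have h2 : ((m' + 1 - 1 - t : ℕ) : ℤ) = ((m'+1 : ℕ) : ℤ) - 1 - t := by push_cast; omega
      have h3 : m' - (m' + 1 - 1 - t) = t := by omega
      rw [h3, h2]
      have h4 : ((m'+1:ℕ):ℤ) - (((m'+1 : ℕ) : ℤ) - 1 - t) = 1 + (t:ℕ) := by push_cast; ring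
      have h5 : (lam i : ℤ) + (((m'+1 : ℕ) : ℤ) - 1 - t) - i
          = ((lam i + 1 : ℕ) : ℤ) + (Fin.last m' : ℕ) - (i:ℕ) - 1 - t := by
        simp only [Fin.val_last]; push_cast; ring
      rw [h4, h5]
    · rw [Matrix.updateCol_apply, if_neg hj]
      simp only [hP, Matrix.submatrix_apply, id_eq, hA, Matrix.of_apply, finRotate_succ_apply]
      congr 2
      have : ((j + 1 : Fin (m'+1)) : ℕ) = (j : ℕ) + 1 := by
        rw [Fin.val_add_one]
        simp [hj]
      rw [this]
      push_cast
      ring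
  -- now take determinants
  have hBdet : sigmaL (m'+1) (fun i => lam i + 1)
      = d (Fin.last m') * Matrix.det P := by
    rw [sigmaL, hB, Matrix.det_updateCol_sum P (Fin.last m') d, smul_eq_mul]
  rw [hBdet, hP, Matrix.det_permute' (finRotate (m'+1)) A]
  have hsign : ((Equiv.Perm.sign (finRotate (m'+1)) : ℤ) : S) = (-1) ^ m' := by
    rw [sign_finRotate]
    push_cast
    ring
  have hdlast : d (Fin.last m') = (-1) ^ m' * cVar (m'+1) ((m'+1 : ℕ) : ℤ) := by
    simp only [hd, finRotate_last, Fin.val_zero, Nat.sub_zero, Nat.cast_zero, sub_zero]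
  rw [hdlast, hsign]
  have hsq : ((-1:S)^m') * ((-1:S)^m') = 1 := by
    rw [← pow_add, ← two_mul, pow_mul]; norm_num
  rw [show ((-1:S)^m' * cVar (m'+1) ((m'+1:ℕ):ℤ)) * ((-1:S)^m' * A.det)
      = (((-1:S)^m') * ((-1:S)^m')) * (cVar (m'+1) ((m'+1:ℕ):ℤ) * A.det) from by ring,
    hsq, one_mul, hA, sigmaL]

/-- The deformed quantum ring `QH_α = S[q]/⟨σ_{k+1}, …, σ_{n-1}, σ_n + (-1)^m α q⟩`
is the quotient of `Polynomial (MvPolynomial (Fin m) ℚ)` by this ideal. -/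
noncomputable def qhIdeal (m k : ℕ) (α : ℚ) :
    Ideal (Polynomial (MvPolynomial (Fin m) ℚ)) :=
  Ideal.span
    ((fun p : ℤ => Polynomial.C (sigmaP m p)) '' Set.Icc ((k : ℤ) + 1) ((m : ℤ) + k - 1) ∪
      {Polynomial.C (sigmaP m ((m : ℤ) + k)) +
        (-1) ^ m * Polynomial.C (MvPolynomial.C α) * Polynomial.X})

lemma sigmaP_zero (m : ℕ) : sigmaP m 0 = 1 := by
  rw [show (0:ℤ) = ((0:ℕ):ℤ) by norm_num, sigmaP_natCast]
  exact Matrix.det_fin_zero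

lemma mk_sigmaP_mid (m k : ℕ) (α : ℚ) (p : ℤ) (h1 : (k:ℤ) + 1 ≤ p) (h2 : p ≤ (m:ℤ) + k - 1) :
    Ideal.Quotient.mk (qhIdeal m k α) (Polynomial.C (sigmaP m p)) = 0 := by
  rw [Ideal.Quotient.eq_zero_iff_mem]
  exact Ideal.subset_span (Or.inl ⟨p, ⟨h1, h2⟩, rfl⟩)

set_option maxHeartbeats 1000000 in
lemma mk_sigmaP_top (m k : ℕ) (α : ℚ) :
    Ideal.Quotient.mk (qhIdeal m k α) (Polynomial.C (sigmaP m ((m:ℤ) + k)))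
      = - ((-1) ^ m * Ideal.Quotient.mk (qhIdeal m k α)
          (Polynomial.C (MvPolynomial.C α) * Polynomial.X)) := by
  have hmem : (Polynomial.C (sigmaP m ((m : ℤ) + k)) +
      (-1) ^ m * Polynomial.C (MvPolynomial.C α) * Polynomial.X) ∈ qhIdeal m k α :=
    Ideal.subset_span (Or.inr rfl)
  have h0 := Ideal.Quotient.eq_zero_iff_mem.mpr hmem
  rw [map_add] at h0
  have h1 := eq_neg_of_add_eq_zero_left h0
  rw [h1]
  simp only [map_mul, map_pow, map_neg, map_one, mul_assoc]

lemma neg_one_pow_mul_self {R : Type*} [CommRing R] (n : ℕ) : ((-1:R))^n * (-1)^n = 1 := by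
  rw [← pow_add]; exact Even.neg_one_pow ⟨n, rfl⟩

lemma key2 (m' k : ℕ) (α : ℚ) (lam : Fin (m'+1) → ℕ) (hk0 : lam 0 = k) :
    Ideal.Quotient.mk (qhIdeal (m'+1) k α) (Polynomial.C (sigmaL (m'+1) (fun i => lam i + 1)))
      = Ideal.Quotient.mk (qhIdeal (m'+1) k α)
          (Polynomial.C (MvPolynomial.C α) * Polynomial.X) *
        Ideal.Quotient.mk (qhIdeal (m'+1) k α)
          (Polynomial.C (sigmaL (m'+1)
            (fun i : Fin (m'+1) => if h : (i:ℕ) + 1 < m'+1 then lam ⟨(i:ℕ)+1, h⟩ else 0))) := by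
  set S := MvPolynomial (Fin (m'+1)) ℚ
  set μ : Fin (m'+1) → ℕ :=
    fun i => if h : (i:ℕ) + 1 < m'+1 then lam ⟨(i:ℕ)+1, h⟩ else 0 with hμ
  set M1 : Matrix (Fin (m'+1)) (Fin (m'+1)) S :=
    Matrix.of fun i j : Fin (m'+1) =>
      sigmaP (m'+1) (((lam i + 1 : ℕ) : ℤ) + (j:ℤ) - (i:ℤ)) with hM1
  -- Step A : σ_μ equals the minor of M1 at (0, last)
  have hmin : sigmaL (m'+1) μ
      = Matrix.det (M1.submatrix Fin.succ (Fin.last m').succAbove) := by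
    rw [sigmaL, Matrix.det_succ_row _ (Fin.last m')]
    rw [Finset.sum_eq_single (Fin.last m')]
    · have he : Matrix.of (fun i j : Fin (m'+1) =>
          sigmaP (m'+1) ((μ i : ℤ) + (j:ℤ) - (i:ℤ))) (Fin.last m') (Fin.last m') = 1 := by
        simp only [Matrix.of_apply, hμ, Fin.val_last, lt_irrefl, dite_false]
        rw [show (((0:ℕ):ℤ) + (m' : ℤ) - (m' : ℤ)) = 0 by ring]
        exact sigmaP_zero _
      rw [he, mul_one]
      have hsub : (Matrix.of (fun i j : Fin (m'+1) =>
            sigmaP (m'+1) ((μ i : ℤ) + (j:ℤ) - (i:ℤ)))).submatrix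
              (Fin.last m').succAbove (Fin.last m').succAbove
          = M1.submatrix Fin.succ (Fin.last m').succAbove := by
        refine Matrix.ext fun i j => ?_
        simp only [Matrix.submatrix_apply, Matrix.of_apply, Fin.succAbove_last, hM1, hμ,
          Fin.coe_castSucc]
        rw [dif_pos (by have := i.isLt; omega : (i:ℕ)+1 < m'+1)]
        rw [show ∀ (h : (i:ℕ)+1 < m'+1), lam ⟨(i:ℕ)+1, h⟩ = lam i.succ from fun _ => rfl]
        congr 1
        simp only [Fin.val_succ]
        push_cast
        ring
      rw [hsub]
      simp only [Fin.val_last]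
      rw [show ((-1:S))^(m'+m') = 1 from Even.neg_one_pow ⟨m', rfl⟩, one_mul]
    · intro j _ hj
      have h0 : Matrix.of (fun i j : Fin (m'+1) =>
          sigmaP (m'+1) ((μ i : ℤ) + (j:ℤ) - (i:ℤ))) (Fin.last m') j = 0 := by
        simp only [Matrix.of_apply, hμ, Fin.val_last, lt_irrefl, dite_false]
        apply sigmaP_neg
        have : (j:ℕ) < m' := by
          have := j.isLt
          rcases Nat.lt_or_ge (j:ℕ) m' with h | h
          · exact h
          · exact absurd (Fin.ext (by omega : (j:ℕ) = m')) hj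
        simp only [Nat.cast_zero]
        omega
      rw [h0]
      ring
    · intro h
      exact absurd (Finset.mem_univ _) h
  -- Step B : expand det M1 along the first row in the quotient
  have hsigL : sigmaL (m'+1) (fun i => lam i + 1) = Matrix.det M1 := rfl
  have hdet := Matrix.det_succ_row_zero M1
  rw [hsigL, hdet, map_sum, map_sum]
  simp only [map_mul, map_pow, map_neg, map_one, hM1, Matrix.of_apply]
  rw [Finset.sum_eq_single (Fin.last m')]
  · have harg : ((lam 0 + 1 : ℕ) : ℤ) + ((Fin.last m' : Fin (m'+1)) : ℕ)
        - ((0 : Fin (m'+1)) : ℕ) = ((m'+1 : ℕ) : ℤ) + (k : ℕ) := by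
      push_cast [Fin.val_last, Fin.val_zero, hk0]
      ring
    rw [harg, mk_sigmaP_top (m'+1) k α, ← hmin, Fin.val_last]
    simp only [map_mul]
    have hsq := neg_one_pow_mul_self
      (R := Polynomial (MvPolynomial (Fin (m'+1)) ℚ) ⧸ qhIdeal (m'+1) k α) m'
    linear_combination ((Ideal.Quotient.mk (qhIdeal (m'+1) k α)) (Polynomial.C (MvPolynomial.C α)) *
      (Ideal.Quotient.mk (qhIdeal (m'+1) k α)) Polynomial.X *
      (Ideal.Quotient.mk (qhIdeal (m'+1) k α)) (Polynomial.C (sigmaL (m'+1) μ))) * hsq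
  · intro j _ hj
    have hjlt : (j : ℕ) < m' := by
      have h2 := j.isLt
      rcases Nat.lt_or_ge (j:ℕ) m' with h | h
      · exact h
      · exact absurd (Fin.ext (by omega : (j:ℕ) = m')) hj
    rw [mk_sigmaP_mid (m'+1) k α
      (((lam 0 + 1 : ℕ) : ℤ) + ((j : ℕ) : ℤ) - (((0 : Fin (m'+1)) : ℕ) : ℤ))
      (by push_cast [hk0, Fin.val_zero]; omega)
      (by push_cast [hk0, Fin.val_zero]; omega)]
    ring
  · intro h
    exact absurd (Finset.mem_univ _) h

/-- The Seidel shift `λ↑1` of a partition `λ ⊆ m × k`. -/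
def upShift (m k : ℕ) (hm : 0 < m) (lam : Fin m → ℕ) : Fin m → ℕ :=
  if lam ⟨0, hm⟩ < k then fun i => lam i + 1
  else fun i => if h : (i : ℕ) + 1 < m then lam ⟨(i : ℕ) + 1, h⟩ else 0

/-- In `QH_α` one has `c_m σ_λ = (α q)^{(m + |λ| - |λ↑1|)/n} σ_{λ↑1}`, and the
exponent is `0` if `λ_1 < k` and `1` if `λ_1 = k`. -/
theorem quantum_pieri_cm_seidel (m k : ℕ) (hm : 0 < m) (hk : 0 < k) (α : ℚ)
    (lam : Fin m → ℕ)
    (hanti : ∀ i j : Fin m, i ≤ j → lam j ≤ lam i) (hbound : ∀ i, lam i ≤ k) :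
    Ideal.Quotient.mk (qhIdeal m k α)
        (Polynomial.C (cVar m (m : ℤ) * sigmaL m lam)) =
      (Ideal.Quotient.mk (qhIdeal m k α)
          (Polynomial.C (MvPolynomial.C α) * Polynomial.X)) ^
          ((m + (∑ i, lam i) - ∑ i, upShift m k hm lam i) / (m + k)) *
        Ideal.Quotient.mk (qhIdeal m k α)
          (Polynomial.C (sigmaL m (upShift m k hm lam))) ∧
    (m + (∑ i, lam i) - ∑ i, upShift m k hm lam i) / (m + k) =
      if lam ⟨0, hm⟩ < k then 0 else 1 := by
  obtain ⟨m', rfl⟩ : ∃ m', m = m' + 1 := ⟨m - 1, by omega⟩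
  by_cases hc : lam ⟨0, hm⟩ < k
  · -- first-row part is < k : classical Pieri, no quantum correction
    have hup : upShift (m'+1) k hm lam = fun i => lam i + 1 := by
      rw [upShift, if_pos hc]
    simp only [hup]
    have hexp : ((m'+1) + (∑ i, lam i) - ∑ i : Fin (m'+1), (lam i + 1)) = 0 := by
      rw [Finset.sum_add_distrib]
      simp only [Finset.sum_const, Finset.card_univ, Fintype.card_fin, smul_eq_mul, mul_one]
      omega
    constructor
    · rw [hexp, Nat.zero_div, pow_zero, one_mul, ← cm_mul_sigmaL hm lam]
    · rw [hexp, Nat.zero_div, if_pos hc]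
  · -- first-row part equals k : quantum correction appears
    have hk0' : lam 0 = k := by
      have : (0 : Fin (m'+1)) = ⟨0, hm⟩ := rfl
      rw [this]
      exact le_antisymm (hbound _) (not_lt.mp hc)
    have hup : upShift (m'+1) k hm lam
        = fun i : Fin (m'+1) => if h : (i:ℕ) + 1 < m'+1 then lam ⟨(i:ℕ)+1, h⟩ else 0 := by
      rw [upShift, if_neg hc]
    simp only [hup]
    have hsum2 : (∑ i : Fin (m'+1), if h : (i:ℕ)+1 < m'+1 then lam ⟨(i:ℕ)+1, h⟩ else 0)
        = ∑ i : Fin m', lam i.succ := by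
      rw [Fin.sum_univ_castSucc, dif_neg (by simp), add_zero]
      refine Finset.sum_congr rfl fun i _ => ?_
      simp only [Fin.coe_castSucc]
      rw [dif_pos (by have := i.isLt; omega : (i:ℕ)+1 < m'+1)]
      rfl
    have hsplit : ∑ i : Fin (m'+1), lam i = k + ∑ i : Fin m', lam i.succ := by
      rw [Fin.sum_univ_succ, hk0']
    have hnum : ((m'+1) + (∑ i, lam i) -
        ∑ i : Fin (m'+1), if h : (i:ℕ)+1 < m'+1 then lam ⟨(i:ℕ)+1, h⟩ else 0)
        = (m'+1) + k := by
      rw [hsum2, hsplit]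
      omega
    constructor
    · rw [hnum, Nat.div_self (by omega), pow_one]
      rw [show cVar (m'+1) ((m'+1 : ℕ) : ℤ) * sigmaL (m'+1) lam
          = sigmaL (m'+1) (fun i => lam i + 1) from cm_mul_sigmaL hm lam]
      exact key2 m' k α lam hk0'
    · rw [hnum, Nat.div_self (by omega), if_neg hc]
end
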